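/- arXiv:2007.15438 — 7 statements merged into one kernel-verified Lean document; each statement's English description precedes it below -/
import Mathlib

section
/- Let n ≥ 1, let V be an n×n matrix with nonnegative real entries, and let s, t > 0. Then the Regularized Master Equations admit a unique solution (r, r̃) with all entries strictly positive, and this solution satisfies Σ_{i=1}^n r_i = Σ_{i=1}^n r̃_i. -/
open Matrix Finset

namespace RegMEAux

variable {K : Type*} [Fintype K]

/-- linear action -/
def Aop (W : K → K → ℝ) (x : K → ℝ) (k : K) : ℝ := ∑ j, W k j * x j

/-- the fixed point map -/
noncomputable def Top (W : K → K → ℝ) (σ : K → K) (s t : ℝ) (x : K → ℝ) (k : K) : ℝ :=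
  1 / (t + Aop W x k + s ^ 2 / (t + Aop W x (σ k)))

/-- total mass -/
def Cw (W : K → K → ℝ) : ℝ := ∑ k, ∑ j, W k j

/-- lower bound -/
noncomputable def ell (W : K → K → ℝ) (s t : ℝ) : ℝ := 1 / (t + Cw W / t + s ^ 2 / t)

variable {W : K → K → ℝ} {σ : K → K} {s t : ℝ}

lemma Aop_nonneg (hW : ∀ k j, 0 ≤ W k j) {x : K → ℝ} (hx : ∀ j, 0 ≤ x j) (k : K) :
    0 ≤ Aop W x k :=
  Finset.sum_nonneg fun j _ => mul_nonneg (hW k j) (hx j)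

lemma Aop_le (hW : ∀ k j, 0 ≤ W k j) {x : K → ℝ} {θ : ℝ} {y : K → ℝ}
    (hxy : ∀ j, x j ≤ θ * y j) (k : K) : Aop W x k ≤ θ * Aop W y k := by
  rw [Aop, Aop, Finset.mul_sum]
  refine Finset.sum_le_sum fun j _ => ?_
  calc W k j * x j ≤ W k j * (θ * y j) := mul_le_mul_of_nonneg_left (hxy j) (hW k j)
  _ = θ * (W k j * y j) := by ring

lemma Aop_le_C (hW : ∀ k j, 0 ≤ W k j) (ht : 0 < t) {x : K → ℝ}
    (hx : ∀ j, 0 ≤ x j ∧ x j ≤ 1 / t) (k : K) : Aop W x k ≤ Cw W / t := by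
  calc Aop W x k ≤ ∑ j, W k j * (1 / t) :=
        Finset.sum_le_sum fun j _ => mul_le_mul_of_nonneg_left (hx j).2 (hW k j)
    _ = (∑ j, W k j) * (1 / t) := by rw [Finset.sum_mul]
    _ ≤ (∑ k', ∑ j, W k' j) * (1 / t) := by
        refine mul_le_mul_of_nonneg_right ?_ (by positivity)
        exact Finset.single_le_sum (f := fun k' => ∑ j, W k' j)
          (fun k' _ => Finset.sum_nonneg fun j _ => hW k' j) (Finset.mem_univ k)
    _ = Cw W / t := by rw [Cw]; ring

lemma Cw_nonneg (hW : ∀ k j, 0 ≤ W k j) : 0 ≤ Cw W :=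
  Finset.sum_nonneg fun k _ => Finset.sum_nonneg fun j _ => hW k j

lemma ell_pos (hW : ∀ k j, 0 ≤ W k j) (hs : 0 < s) (ht : 0 < t) : 0 < ell W s t := by
  have := Cw_nonneg hW
  rw [ell]; positivity

lemma ell_le (hW : ∀ k j, 0 ≤ W k j) (hs : 0 < s) (ht : 0 < t) : ell W s t ≤ 1 / t := by
  rw [ell]
  have := Cw_nonneg hW
  apply one_div_le_one_div_of_le ht
  have h1 : 0 ≤ Cw W / t := by positivity
  have h2 : 0 ≤ s ^ 2 / t := by positivity
  linarith

lemma tell_le_one (hW : ∀ k j, 0 ≤ W k j) (hs : 0 < s) (ht : 0 < t) : t * ell W s t ≤ 1 := by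
  have h := ell_le hW hs ht
  have := ell_pos hW hs ht
  calc t * ell W s t ≤ t * (1 / t) := by nlinarith
    _ = 1 := by field_simp

/-- upper bound of T -/
lemma Top_le (hW : ∀ k j, 0 ≤ W k j) (hs : 0 < s) (ht : 0 < t) {x : K → ℝ}
    (hx : ∀ j, 0 ≤ x j) (k : K) : Top W σ s t x k ≤ 1 / t := by
  have h1 : 0 ≤ Aop W x k := Aop_nonneg hW hx k
  have h2 : 0 ≤ Aop W x (σ k) := Aop_nonneg hW hx (σ k)
  have h3 : 0 ≤ s ^ 2 / (t + Aop W x (σ k)) := by positivity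
  rw [Top]
  apply one_div_le_one_div_of_le ht
  linarith

/-- denominator bound -/
lemma denom_le (hW : ∀ k j, 0 ≤ W k j) (hs : 0 < s) (ht : 0 < t) {x : K → ℝ}
    (hx : ∀ j, 0 ≤ x j ∧ x j ≤ 1 / t) (k : K) :
    t + Aop W x k + s ^ 2 / (t + Aop W x (σ k)) ≤ 1 / ell W s t := by
  have h1 : Aop W x k ≤ Cw W / t := Aop_le_C hW ht hx k
  have h2 : 0 ≤ Aop W x (σ k) := Aop_nonneg hW (fun j => (hx j).1) (σ k)
  have h3 : s ^ 2 / (t + Aop W x (σ k)) ≤ s ^ 2 / t := by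
    apply div_le_div_of_nonneg_left (by positivity) ht (by linarith)
  have : (1 : ℝ) / ell W s t = t + Cw W / t + s ^ 2 / t := by
    rw [ell, one_div_one_div]
  rw [this]
  linarith

lemma denom_pos (hW : ∀ k j, 0 ≤ W k j) (hs : 0 < s) (ht : 0 < t) {x : K → ℝ}
    (hx : ∀ j, 0 ≤ x j) (k : K) :
    0 < t + Aop W x k + s ^ 2 / (t + Aop W x (σ k)) := by
  have h1 : 0 ≤ Aop W x k := Aop_nonneg hW hx k
  have h2 : 0 ≤ Aop W x (σ k) := Aop_nonneg hW hx (σ k)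
  have h3 : 0 ≤ s ^ 2 / (t + Aop W x (σ k)) := by positivity
  linarith

lemma Top_ge (hW : ∀ k j, 0 ≤ W k j) (hs : 0 < s) (ht : 0 < t) {x : K → ℝ}
    (hx : ∀ j, 0 ≤ x j ∧ x j ≤ 1 / t) (k : K) : ell W s t ≤ Top W σ s t x k := by
  have h1 := denom_le hW hs ht hx k (σ := σ)
  have h2 := denom_pos hW hs ht (fun j => (hx j).1) k (σ := σ)
  have h3 := ell_pos hW hs ht
  rw [Top]
  rw [le_div_iff₀ h2]
  calc ell W s t * (t + Aop W x k + s ^ 2 / (t + Aop W x (σ k)))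
      ≤ ell W s t * (1 / ell W s t) := mul_le_mul_of_nonneg_left h1 (le_of_lt h3)
    _ = 1 := by field_simp

lemma Top_pos (hW : ∀ k j, 0 ≤ W k j) (hs : 0 < s) (ht : 0 < t) {x : K → ℝ}
    (hx : ∀ j, 0 ≤ x j) (k : K) : 0 < Top W σ s t x k := by
  have := denom_pos hW hs ht hx k (σ := σ)
  rw [Top]; positivity

/-- The key contraction estimate. -/
lemma contract (hW : ∀ k j, 0 ≤ W k j) (hs : 0 < s) (ht : 0 < t)
    {x y : K → ℝ} (hx : ∀ j, 0 ≤ x j ∧ x j ≤ 1 / t) (hy : ∀ j, 0 ≤ y j ∧ y j ≤ 1 / t)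
    {θ : ℝ} (hθ : 1 ≤ θ) (hxy : ∀ j, x j ≤ θ * y j) (hyx : ∀ j, y j ≤ θ * x j) (k : K) :
    Top W σ s t x k ≤ (1 + (1 - t * ell W s t) * (θ - 1)) * Top W σ s t y k := by
  set L := ell W s t with hL
  have hθ0 : 0 < θ := lt_of_lt_of_le one_pos hθ
  have hLpos : 0 < L := ell_pos hW hs ht
  have hL1 : t * L ≤ 1 := tell_le_one hW hs ht
  set Dx := t + Aop W x k + s ^ 2 / (t + Aop W x (σ k)) with hDx
  set Dy := t + Aop W y k + s ^ 2 / (t + Aop W y (σ k)) with hDy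
  have hDxpos : 0 < Dx := denom_pos hW hs ht (fun j => (hx j).1) k
  have hDypos : 0 < Dy := denom_pos hW hs ht (fun j => (hy j).1) k
  have hAx : 0 ≤ Aop W x (σ k) := Aop_nonneg hW (fun j => (hx j).1) (σ k)
  have hAy : 0 ≤ Aop W y (σ k) := Aop_nonneg hW (fun j => (hy j).1) (σ k)
  -- step 1 : Dy ≤ θ * Dx - (θ - 1) * t
  have h1 : Aop W y k ≤ θ * Aop W x k := Aop_le hW hyx k
  have h2 : Aop W x (σ k) ≤ θ * Aop W y (σ k) := Aop_le hW hxy (σ k)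
  have h3 : s ^ 2 / (t + Aop W y (σ k)) ≤ θ * (s ^ 2 / (t + Aop W x (σ k))) := by
    have hb : (0:ℝ) < t + Aop W x (σ k) := by linarith
    have hb' : (0:ℝ) < t + Aop W y (σ k) := by linarith
    have key : t + Aop W x (σ k) ≤ θ * (t + Aop W y (σ k)) := by nlinarith
    rw [mul_div_assoc' θ (s ^ 2) _, div_le_div_iff₀ hb' hb]
    nlinarith [sq_nonneg s]
  have hstep : Dy ≤ θ * Dx - (θ - 1) * t := by
    rw [hDy, hDx]
    have : θ * (t + Aop W x k + s ^ 2 / (t + Aop W x (σ k))) - (θ - 1) * t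
        = t + θ * Aop W x k + θ * (s ^ 2 / (t + Aop W x (σ k))) := by ring
    rw [this]
    linarith
  -- step 2 : θ * Dx - (θ-1) * t ≤ (1 + (1 - t*L)*(θ-1)) * Dx
  have hDxle : Dx ≤ 1 / L := denom_le hW hs ht hx k
  have hstep2 : θ * Dx - (θ - 1) * t ≤ (1 + (1 - t * L) * (θ - 1)) * Dx := by
    have : L * Dx ≤ 1 := by
      calc L * Dx ≤ L * (1 / L) := mul_le_mul_of_nonneg_left hDxle hLpos.le
        _ = 1 := by field_simp
    nlinarith [mul_nonneg (mul_nonneg (sub_nonneg.2 hθ) ht.le) (sub_nonneg.2 this)]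
  have hDyle : Dy ≤ (1 + (1 - t * L) * (θ - 1)) * Dx := le_trans hstep hstep2
  -- conclude
  rw [Top, Top, ← hDx, ← hDy, mul_one_div, div_le_div_iff₀ hDxpos hDypos]
  calc 1 * Dy = Dy := one_mul Dy
    _ ≤ (1 + (1 - t * L) * (θ - 1)) * Dx := hDyle

/-- key: any two positive fixed points coincide -/
lemma fixed_unique [Nonempty K] (hW : ∀ k j, 0 ≤ W k j) (hs : 0 < s) (ht : 0 < t)
    {x y : K → ℝ} (hx : ∀ k, 0 < x k) (hy : ∀ k, 0 < y k)
    (hfx : ∀ k, Top W σ s t x k = x k) (hfy : ∀ k, Top W σ s t y k = y k) : x = y := by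
  set L := ell W s t with hL
  have hLpos : 0 < L := ell_pos hW hs ht
  have hL1 : t * L ≤ 1 := tell_le_one hW hs ht
  have hxbox : ∀ k, 0 ≤ x k ∧ x k ≤ 1 / t := fun k =>
    ⟨(hx k).le, (hfx k) ▸ Top_le hW hs ht (fun j => (hx j).le) k⟩
  have hybox : ∀ k, 0 ≤ y k ∧ y k ≤ 1 / t := fun k =>
    ⟨(hy k).le, (hfy k) ▸ Top_le hW hs ht (fun j => (hy j).le) k⟩
  set θ : ℝ := max 1 (Finset.univ.sup' Finset.univ_nonempty
      (fun k => max (x k / y k) (y k / x k))) with hθdef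
  have hθ1 : 1 ≤ θ := le_max_left _ _
  have hxy : ∀ k, x k ≤ θ * y k := by
    intro k
    have h1 : x k / y k ≤ θ := by
      refine le_trans (le_trans (le_max_left (x k / y k) (y k / x k)) ?_) (le_max_right _ _)
      exact Finset.le_sup' (fun k => max (x k / y k) (y k / x k)) (Finset.mem_univ k)
    calc x k = x k / y k * y k := by field_simp [(hy k).ne']
      _ ≤ θ * y k := mul_le_mul_of_nonneg_right h1 (hy k).le
  have hyx : ∀ k, y k ≤ θ * x k := by
    intro k
    have h1 : y k / x k ≤ θ := by
      refine le_trans (le_trans (le_max_right (x k / y k) (y k / x k)) ?_) (le_max_right _ _)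
      exact Finset.le_sup' (fun k => max (x k / y k) (y k / x k)) (Finset.mem_univ k)
    calc y k = y k / x k * x k := by field_simp [(hx k).ne']
      _ ≤ θ * x k := mul_le_mul_of_nonneg_right h1 (hx k).le
  set θ' : ℝ := 1 + (1 - t * L) * (θ - 1) with hθ'def
  have hc1 : ∀ k, x k ≤ θ' * y k := fun k =>
    (hfx k) ▸ (hfy k) ▸ contract hW hs ht hxbox hybox hθ1 hxy hyx k
  have hc2 : ∀ k, y k ≤ θ' * x k := fun k =>
    (hfy k) ▸ (hfx k) ▸ contract hW hs ht hybox hxbox hθ1 hyx hxy k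
  have hθ'1 : 1 ≤ θ' := by
    have : 0 ≤ (1 - t * L) * (θ - 1) := mul_nonneg (by linarith) (by linarith)
    linarith
  have hθθ' : θ ≤ θ' := by
    rw [hθdef]
    refine max_le hθ'1 (Finset.sup'_le _ _ fun k _ => max_le ?_ ?_)
    · rw [div_le_iff₀ (hy k)]; linarith [hc1 k]
    · rw [div_le_iff₀ (hx k)]; linarith [hc2 k]
  have hθeq : θ ≤ 1 := by
    rw [hθ'def] at hθθ'
    nlinarith [mul_pos ht hLpos]
  funext k
  have h1 : x k ≤ y k := by have := hxy k; nlinarith [hy k]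
  have h2 : y k ≤ x k := by have := hyx k; nlinarith [hx k]
  linarith

lemma continuous_Aop (W : K → K → ℝ) (k : K) : Continuous (fun x : K → ℝ => Aop W x k) := by
  unfold Aop
  exact continuous_finset_sum _ fun j _ => continuous_const.mul (continuous_apply j)

lemma continuousAt_Top (hW : ∀ k j, 0 ≤ W k j) (hs : 0 < s) (ht : 0 < t)
    {x : K → ℝ} (hx : ∀ k, 0 ≤ x k) : ContinuousAt (Top W σ s t) x := by
  rw [continuousAt_pi]
  intro k
  have hinner : ContinuousAt (fun y : K → ℝ => t + Aop W y (σ k)) x :=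
    (continuous_const.add (continuous_Aop W (σ k))).continuousAt
  have hinner_ne : t + Aop W x (σ k) ≠ 0 := by
    have := Aop_nonneg hW hx (σ k); positivity
  have houter : ContinuousAt
      (fun y : K → ℝ => t + Aop W y k + s ^ 2 / (t + Aop W y (σ k))) x :=
    ((continuous_const.add (continuous_Aop W k)).continuousAt).add
      (ContinuousAt.div continuousAt_const hinner hinner_ne)
  have houter_ne : t + Aop W x k + s ^ 2 / (t + Aop W x (σ k)) ≠ 0 :=
    (denom_pos hW hs ht hx k).ne'
  exact ContinuousAt.div continuousAt_const houter houter_ne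

/-- existence of a positive fixed point -/
lemma fixed_exists (hW : ∀ k j, 0 ≤ W k j) (hs : 0 < s) (ht : 0 < t) :
    ∃ x : K → ℝ, (∀ k, ell W s t ≤ x k ∧ x k ≤ 1 / t) ∧
      (∀ k, Top W σ s t x k = x k) := by
  classical
  set L := ell W s t with hLdef
  have hLpos : 0 < L := ell_pos hW hs ht
  have hLle : L ≤ 1 / t := ell_le hW hs ht
  have hL1 : t * L ≤ 1 := tell_le_one hW hs ht
  set lam : ℝ := 1 - t * L with hlam
  have hlam0 : 0 ≤ lam := by linarith
  have hlam1 : lam < 1 := by nlinarith [mul_pos ht hLpos]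
  set x₀ : K → ℝ := fun _ => 1 / t with hx₀
  set u : ℕ → K → ℝ := fun m => (Top W σ s t)^[m] x₀ with hu
  have hstep : ∀ m, u (m + 1) = Top W σ s t (u m) := fun m => by
    rw [hu]; exact Function.iterate_succ_apply' _ _ _
  -- box bounds
  have hbox : ∀ m k, 0 < u m k ∧ u m k ≤ 1 / t := by
    intro m
    induction m with
    | zero =>
      intro k
      simp only [hu, Function.iterate_zero, id, hx₀]
      exact ⟨by positivity, le_refl _⟩
    | succ m ih =>
      intro k
      rw [hstep m]
      exact ⟨Top_pos hW hs ht (fun j => (ih j).1.le) k,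
        Top_le hW hs ht (fun j => (ih j).1.le) k⟩
  have hboxL : ∀ m k, L ≤ u (m + 1) k := by
    intro m k
    rw [hstep m]
    exact Top_ge hW hs ht (fun j => ⟨(hbox m j).1.le, (hbox m j).2⟩) k
  -- ratio bounds between consecutive iterates
  set Θ : ℕ → ℝ := fun m => 1 + lam ^ m * (1 / (t * L) - 1) with hΘ
  have htLpos : 0 < t * L := mul_pos ht hLpos
  have hone : (1:ℝ) ≤ 1 / (t * L) := by
    rw [le_div_iff₀ htLpos]; simpa using hL1
  have hΘ1 : ∀ m, 1 ≤ Θ m := by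
    intro m
    have : 0 ≤ lam ^ m * (1 / (t * L) - 1) :=
      mul_nonneg (pow_nonneg hlam0 m) (by linarith)
    simp only [hΘ]; linarith
  have hratio : ∀ m k, u (m + 1) k ≤ Θ m * u (m + 2) k ∧ u (m + 2) k ≤ Θ m * u (m + 1) k := by
    intro m
    induction m with
    | zero =>
      intro k
      have h1 := hboxL 0 k
      have h2 := hboxL 1 k
      have h3 := (hbox 1 k).2
      have h4 := (hbox 2 k).2
      have hΘ0 : Θ 0 = 1 / (t * L) := by simp [hΘ]
      constructor
      · rw [hΘ0]
        calc u 1 k ≤ 1 / t := h3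
          _ = 1 / (t * L) * L := by field_simp
          _ ≤ 1 / (t * L) * u 2 k := by
              exact mul_le_mul_of_nonneg_left h2 (one_div_pos.2 htLpos).le
      · rw [hΘ0]
        calc u 2 k ≤ 1 / t := h4
          _ = 1 / (t * L) * L := by field_simp
          _ ≤ 1 / (t * L) * u 1 k := by
              exact mul_le_mul_of_nonneg_left h1 (one_div_pos.2 htLpos).le
    | succ m ih =>
      have hxb : ∀ j, 0 ≤ u (m + 1) j ∧ u (m + 1) j ≤ 1 / t :=
        fun j => ⟨(hbox (m + 1) j).1.le, (hbox (m + 1) j).2⟩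
      have hyb : ∀ j, 0 ≤ u (m + 2) j ∧ u (m + 2) j ≤ 1 / t :=
        fun j => ⟨(hbox (m + 2) j).1.le, (hbox (m + 2) j).2⟩
      have hnext : 1 + (1 - t * L) * (Θ m - 1) = Θ (m + 1) := by
        simp only [hΘ, ← hlam]; ring
      intro k
      constructor
      · have := contract (σ := σ) hW hs ht hxb hyb (hΘ1 m) (fun j => (ih j).1) (fun j => (ih j).2) k
        rw [← hstep (m + 1), ← hstep (m + 2), hnext] at this
        exact this
      · have := contract (σ := σ) hW hs ht hyb hxb (hΘ1 m) (fun j => (ih j).2) (fun j => (ih j).1) k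
        rw [← hstep (m + 1), ← hstep (m + 2), hnext] at this
        exact this
  -- distance bound
  set Cd : ℝ := (1 / (t * L) - 1) / t with hCd
  have hCd0 : 0 ≤ Cd := by
    have h : 0 ≤ 1 / (t * L) - 1 := by linarith
    exact div_nonneg h ht.le
  have hdist : ∀ m, dist (u (m + 1)) (u (m + 2)) ≤ Cd * lam ^ m := by
    intro m
    have hnn : 0 ≤ Cd * lam ^ m := mul_nonneg hCd0 (pow_nonneg hlam0 m)
    rw [dist_pi_le_iff hnn]
    intro k
    rw [Real.dist_eq, abs_sub_le_iff]
    have h1 := (hratio m k).1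
    have h2 := (hratio m k).2
    have hb1 := (hbox (m + 1) k).2
    have hb2 := (hbox (m + 2) k).2
    have hp1 := (hbox (m + 1) k).1
    have hp2 := (hbox (m + 2) k).1
    have hΘm : Θ m - 1 = lam ^ m * (1 / (t * L) - 1) := by simp [hΘ]
    have hkey : Cd * lam ^ m = (Θ m - 1) * (1 / t) := by
      rw [hΘm, hCd]; ring
    constructor
    · rw [hkey]
      have : u (m + 1) k - u (m + 2) k ≤ (Θ m - 1) * u (m + 2) k := by linarith
      calc u (m + 1) k - u (m + 2) k ≤ (Θ m - 1) * u (m + 2) k := this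
        _ ≤ (Θ m - 1) * (1 / t) := by
            apply mul_le_mul_of_nonneg_left hb2 (by linarith [hΘ1 m])
    · rw [hkey]
      have : u (m + 2) k - u (m + 1) k ≤ (Θ m - 1) * u (m + 1) k := by linarith
      calc u (m + 2) k - u (m + 1) k ≤ (Θ m - 1) * u (m + 1) k := this
        _ ≤ (Θ m - 1) * (1 / t) := by
            apply mul_le_mul_of_nonneg_left hb1 (by linarith [hΘ1 m])
  -- Cauchy and limit
  have hcauchy : CauchySeq (fun m => u (m + 1)) :=
    cauchySeq_of_le_geometric lam Cd hlam1 hdist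
  obtain ⟨x, hx⟩ := cauchySeq_tendsto_of_complete hcauchy
  have hxcoord : ∀ k, Filter.Tendsto (fun m => u (m + 1) k) Filter.atTop (nhds (x k)) :=
    fun k => (tendsto_pi_nhds.1 hx) k
  have hxbox : ∀ k, L ≤ x k ∧ x k ≤ 1 / t := by
    intro k
    constructor
    · exact le_of_tendsto_of_tendsto tendsto_const_nhds (hxcoord k)
        (Filter.eventually_atTop.2 ⟨0, fun m _ => hboxL m k⟩)
    · exact le_of_tendsto_of_tendsto (hxcoord k) tendsto_const_nhds
        (Filter.eventually_atTop.2 ⟨0, fun m _ => (hbox (m + 1) k).2⟩)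
  have hxpos : ∀ k, 0 ≤ x k := fun k => le_trans hLpos.le (hxbox k).1
  -- x is a fixed point
  have hTx : Top W σ s t x = x := by
    have hc : ContinuousAt (Top W σ s t) x := continuousAt_Top hW hs ht hxpos
    have h1 : Filter.Tendsto (fun m => Top W σ s t (u (m + 1))) Filter.atTop
        (nhds (Top W σ s t x)) := hc.tendsto.comp hx
    have h2 : (fun m => Top W σ s t (u (m + 1))) = fun m => u (m + 2) := by
      funext m; rw [hstep (m + 1)]
    rw [h2] at h1
    have h3 : Filter.Tendsto (fun m => u (m + 2)) Filter.atTop (nhds x) :=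
      Filter.Tendsto.congr (fun n => rfl) (hx.comp (Filter.tendsto_add_atTop_nat 1))
    exact tendsto_nhds_unique h1 h3
  exact ⟨x, hxbox, fun k => congrFun hTx k⟩

end RegMEAux

/-- The Regularized Master Equations associated with a nonnegative `n × n` matrix `V`
and parameters `s, t`: the unknowns `r, r̃ ∈ ℝⁿ` have positive entries and satisfy
`r_i = ((Vᵀ r)_i + t) / (s² + ((V r̃)_i + t)((Vᵀ r)_i + t))` and
`r̃_i = ((V r̃)_i + t) / (s² + ((V r̃)_i + t)((Vᵀ r)_i + t))`. -/
def RegME {n : ℕ} (V : Matrix (Fin n) (Fin n) ℝ) (s t : ℝ)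
    (r rt : Fin n → ℝ) : Prop :=
  (∀ i, 0 < r i) ∧ (∀ i, 0 < rt i) ∧
  (∀ i, r i = ((Vᵀ.mulVec r) i + t) /
      (s ^ 2 + ((V.mulVec rt) i + t) * ((Vᵀ.mulVec r) i + t))) ∧
  (∀ i, rt i = ((V.mulVec rt) i + t) /
      (s ^ 2 + ((V.mulVec rt) i + t) * ((Vᵀ.mulVec r) i + t)))


namespace RegMEAux

/-- the big symmetrized coefficient matrix -/
def bigW {n : ℕ} (V : Matrix (Fin n) (Fin n) ℝ) :
    (Fin n ⊕ Fin n) → (Fin n ⊕ Fin n) → ℝ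
  | Sum.inl i, Sum.inr j => V i j
  | Sum.inr i, Sum.inl j => V j i
  | Sum.inl _, Sum.inl _ => 0
  | Sum.inr _, Sum.inr _ => 0

variable {n : ℕ} {V : Matrix (Fin n) (Fin n) ℝ}

lemma bigW_nonneg (hV : ∀ i j, 0 ≤ V i j) : ∀ k j, 0 ≤ bigW V k j := by
  intro k j
  cases k <;> cases j <;> simp [bigW] <;> apply hV


lemma Aop_elim_inl (r rt : Fin n → ℝ) (i : Fin n) :
    Aop (bigW V) (Sum.elim r rt) (Sum.inl i) = V.mulVec rt i := by
  rw [Aop, Matrix.mulVec, dotProduct, Fintype.sum_sum_type]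
  simp [bigW]

lemma Aop_elim_inr (r rt : Fin n → ℝ) (i : Fin n) :
    Aop (bigW V) (Sum.elim r rt) (Sum.inr i) = Vᵀ.mulVec r i := by
  rw [Aop, Matrix.mulVec, dotProduct, Fintype.sum_sum_type]
  simp [bigW, Matrix.transpose_apply]

lemma mulVec_nonneg' {M : Matrix (Fin n) (Fin n) ℝ} (hM : ∀ i j, 0 ≤ M i j)
    {v : Fin n → ℝ} (hv : ∀ j, 0 ≤ v j) (i : Fin n) : 0 ≤ M.mulVec v i := by
  rw [Matrix.mulVec, dotProduct]
  exact Finset.sum_nonneg fun j _ => mul_nonneg (hM i j) (hv j)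

lemma alg {a b s : ℝ} (ha : 0 < a) (hb : 0 < b) (hs : 0 < s) :
    b / (s ^ 2 + a * b) = 1 / (a + s ^ 2 / b) := by
  have h1 : (0:ℝ) < s ^ 2 + a * b := by positivity
  have h2 : (0:ℝ) < a + s ^ 2 / b := by positivity
  rw [div_eq_div_iff h1.ne' h2.ne', one_mul]
  field_simp
  ring

lemma regme_iff_fixed (hV : ∀ i j, 0 ≤ V i j) {s t : ℝ} (hs : 0 < s) (ht : 0 < t)
    {r rt : Fin n → ℝ} (hr : ∀ i, 0 < r i) (hrt : ∀ i, 0 < rt i) :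
    RegME V s t r rt ↔
      ∀ k, Top (bigW V) Sum.swap s t (Sum.elim r rt) k = Sum.elim r rt k := by
  have hVt : ∀ i j, 0 ≤ Vᵀ i j := fun i j => hV j i
  have ha : ∀ i, 0 < V.mulVec rt i + t := fun i => by
    have := mulVec_nonneg' hV (fun j => (hrt j).le) i; linarith
  have hb : ∀ i, 0 < Vᵀ.mulVec r i + t := fun i => by
    have := mulVec_nonneg' hVt (fun j => (hr j).le) i; linarith
  have key1 : ∀ i, Top (bigW V) Sum.swap s t (Sum.elim r rt) (Sum.inl i)
      = ((Vᵀ.mulVec r) i + t) /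
        (s ^ 2 + ((V.mulVec rt) i + t) * ((Vᵀ.mulVec r) i + t)) := by
    intro i
    rw [Top]
    have hsw : Sum.swap (Sum.inl i : Fin n ⊕ Fin n) = Sum.inr i := rfl
    rw [hsw, Aop_elim_inl, Aop_elim_inr]
    rw [alg (ha i) (hb i) hs]
    rw [add_comm t (V.mulVec rt i), add_comm t (Vᵀ.mulVec r i)]
  have key2 : ∀ i, Top (bigW V) Sum.swap s t (Sum.elim r rt) (Sum.inr i)
      = ((V.mulVec rt) i + t) /
        (s ^ 2 + ((V.mulVec rt) i + t) * ((Vᵀ.mulVec r) i + t)) := by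
    intro i
    rw [Top]
    have hsw : Sum.swap (Sum.inr i : Fin n ⊕ Fin n) = Sum.inl i := rfl
    rw [hsw, Aop_elim_inl, Aop_elim_inr]
    rw [mul_comm ((V.mulVec rt) i + t) ((Vᵀ.mulVec r) i + t)]
    rw [alg (hb i) (ha i) hs]
    rw [add_comm t (V.mulVec rt i), add_comm t (Vᵀ.mulVec r i)]
  constructor
  · rintro ⟨_, _, he1, he2⟩ k
    cases k with
    | inl i => rw [key1 i, Sum.elim_inl, he1 i]
    | inr i => rw [key2 i, Sum.elim_inr, he2 i]
  · intro h
    refine ⟨hr, hrt, fun i => ?_, fun i => ?_⟩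
    · have := h (Sum.inl i); rw [key1 i, Sum.elim_inl] at this; exact this.symm
    · have := h (Sum.inr i); rw [key2 i, Sum.elim_inr] at this; exact this.symm

lemma regme_sum (hV : ∀ i j, 0 ≤ V i j) {s t : ℝ} (hs : 0 < s) (ht : 0 < t)
    {r rt : Fin n → ℝ} (h : RegME V s t r rt) : ∑ i, r i = ∑ i, rt i := by
  obtain ⟨hr, hrt, he1, he2⟩ := h
  have hVt : ∀ i j, 0 ≤ Vᵀ i j := fun i j => hV j i
  have key : ∀ i, r i * (V.mulVec rt i + t) = rt i * (Vᵀ.mulVec r i + t) := by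
    intro i
    have ha : 0 ≤ V.mulVec rt i := mulVec_nonneg' hV (fun j => (hrt j).le) i
    have hb : 0 ≤ Vᵀ.mulVec r i := mulVec_nonneg' hVt (fun j => (hr j).le) i
    have hd : s ^ 2 + (V.mulVec rt i + t) * (Vᵀ.mulVec r i + t) ≠ 0 := by positivity
    rw [he1 i, he2 i]
    field_simp
  have hsum : ∑ i, r i * (V.mulVec rt i + t) = ∑ i, rt i * (Vᵀ.mulVec r i + t) :=
    Finset.sum_congr rfl fun i _ => key i
  have exch : ∑ i, r i * V.mulVec rt i = ∑ i, rt i * Vᵀ.mulVec r i := by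
    simp only [Matrix.mulVec, dotProduct, Finset.mul_sum, Matrix.transpose_apply]
    rw [Finset.sum_comm]
    exact Finset.sum_congr rfl fun i _ => Finset.sum_congr rfl fun j _ => by ring
  have e1 : ∑ i, r i * (V.mulVec rt i + t)
      = (∑ i, r i * V.mulVec rt i) + t * ∑ i, r i := by
    simp only [mul_add, Finset.sum_add_distrib, Finset.mul_sum]
    congr 1
    exact Finset.sum_congr rfl fun i _ => mul_comm _ _
  have e2 : ∑ i, rt i * (Vᵀ.mulVec r i + t)
      = (∑ i, rt i * Vᵀ.mulVec r i) + t * ∑ i, rt i := by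
    simp only [mul_add, Finset.sum_add_distrib, Finset.mul_sum]
    congr 1
    exact Finset.sum_congr rfl fun i _ => mul_comm _ _
  rw [e1, e2] at hsum
  have : t * ∑ i, r i = t * ∑ i, rt i := by linarith [exch]
  exact mul_left_cancel₀ ht.ne' this

end RegMEAux

/-- For every `n ≥ 1`, nonnegative matrix `V` and `s, t > 0`, the Regularized Master
Equations admit a unique positive solution `(r, r̃)`, and this solution satisfies
`∑ i, r i = ∑ i, r̃ i`. -/
theorem regularized_master_equations_unique_solution
    (n : ℕ) (hn : 1 ≤ n) (V : Matrix (Fin n) (Fin n) ℝ)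
    (hV : ∀ i j, 0 ≤ V i j) (s t : ℝ) (hs : 0 < s) (ht : 0 < t) :
    ∃ r rt : Fin n → ℝ, RegME V s t r rt ∧ (∑ i, r i = ∑ i, rt i) ∧
      ∀ r' rt' : Fin n → ℝ, RegME V s t r' rt' → r' = r ∧ rt' = rt := by
  haveI : Nonempty (Fin n) := ⟨⟨0, hn⟩⟩
  classical
  have hW : ∀ k j, 0 ≤ RegMEAux.bigW V k j := RegMEAux.bigW_nonneg hV
  obtain ⟨x, hxbox, hxfix⟩ :=
    RegMEAux.fixed_exists (W := RegMEAux.bigW V) (σ := Sum.swap) hW hs ht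
  have hLpos := RegMEAux.ell_pos (W := RegMEAux.bigW V) hW hs ht
  set r : Fin n → ℝ := fun i => x (Sum.inl i) with hrdef
  set rt : Fin n → ℝ := fun i => x (Sum.inr i) with hrtdef
  have helim : Sum.elim r rt = x := by funext k; cases k <;> rfl
  have hr : ∀ i, 0 < r i := fun i => lt_of_lt_of_le hLpos (hxbox (Sum.inl i)).1
  have hrt : ∀ i, 0 < rt i := fun i => lt_of_lt_of_le hLpos (hxbox (Sum.inr i)).1
  have hxfix' : ∀ k, RegMEAux.Top (RegMEAux.bigW V) Sum.swap s t (Sum.elim r rt) k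
      = Sum.elim r rt k := by rw [helim]; exact hxfix
  have hreg : RegME V s t r rt :=
    (RegMEAux.regme_iff_fixed hV hs ht hr hrt).2 hxfix'
  refine ⟨r, rt, hreg, RegMEAux.regme_sum hV hs ht hreg, ?_⟩
  intro r' rt' hreg'
  have hr' : ∀ i, 0 < r' i := hreg'.1
  have hrt' : ∀ i, 0 < rt' i := hreg'.2.1
  have hfix' := (RegMEAux.regme_iff_fixed hV hs ht hr' hrt').1 hreg'
  have hpos' : ∀ k, 0 < Sum.elim r' rt' k := by
    intro k; cases k with
    | inl i => exact hr' i
    | inr i => exact hrt' i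
  have hpos : ∀ k, 0 < Sum.elim r rt k := by
    intro k; cases k with
    | inl i => exact hr i
    | inr i => exact hrt i
  have heq : Sum.elim r' rt' = Sum.elim r rt :=
    RegMEAux.fixed_unique hW hs ht hpos' hpos hfix' hxfix'
  constructor
  · funext i; exact congrFun heq (Sum.inl i)
  · funext i; exact congrFun heq (Sum.inr i)
end

section
/- Let A be an n×n irreducible matrix with nonnegative entries and set V = (1/n) A⊙A (entrywise square divided by n). If s ≥ √ρ(V), then the only solution of the Master Equations with nonnegative entries is the trivial solution q = q̃ = 0. -/
open Matrix Finset

/-- Spectral radius of a real square matrix: the supremum of the moduli of its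
complex eigenvalues. -/
noncomputable def specRad {n : ℕ} (V : Matrix (Fin n) (Fin n) ℝ) : ℝ :=
  sSup {r : ℝ | ∃ μ : ℂ, r = ‖μ‖ ∧
    Module.End.HasEigenvalue (Matrix.toLin' (V.map (fun x : ℝ => (x : ℂ)))) μ}

/-- A nonnegative matrix `A` is irreducible if for every pair `(i,j)` some power
`A^k`, `k ≥ 1`, has a positive `(i,j)` entry. -/
def Irred {n : ℕ} (A : Matrix (Fin n) (Fin n) ℝ) : Prop :=
  ∀ i j, ∃ k : ℕ, 1 ≤ k ∧ 0 < (A ^ k) i j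

/-- The Master Equations associated with a nonnegative `n × n` matrix `V` and a
parameter `s`: the unknowns `q, q̃ ∈ ℝⁿ` have nonnegative entries and satisfy
`q_i = (Vᵀ q)_i / (s² + (V q̃)_i (Vᵀ q)_i)`,
`q̃_i = (V q̃)_i / (s² + (V q̃)_i (Vᵀ q)_i)` and `∑ q_i = ∑ q̃_i`. -/
def MasterEq {n : ℕ} (V : Matrix (Fin n) (Fin n) ℝ) (s : ℝ)
    (q qt : Fin n → ℝ) : Prop :=
  (∀ i, 0 ≤ q i) ∧ (∀ i, 0 ≤ qt i) ∧
  (∀ i, q i = (Vᵀ.mulVec q) i /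
      (s ^ 2 + (V.mulVec qt) i * (Vᵀ.mulVec q) i)) ∧
  (∀ i, qt i = (V.mulVec qt) i /
      (s ^ 2 + (V.mulVec qt) i * (Vᵀ.mulVec q) i)) ∧
  (∑ i, q i = ∑ i, qt i)

open Filter Topology

attribute [local instance] Matrix.linftyOpNormedRing Matrix.linftyOpNormedAlgebra

lemma eig_iff_spec {n : ℕ} (W : Matrix (Fin n) (Fin n) ℂ) (μ : ℂ) :
    Module.End.HasEigenvalue (Matrix.toLin' W) μ ↔ μ ∈ spectrum ℂ W := by
  have h1 : Matrix.toLin' W = Matrix.toLinAlgEquiv' W := by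
    ext v; simp [Matrix.toLin'_apply, Matrix.toLinAlgEquiv'_apply]
  rw [h1, Module.End.hasEigenvalue_iff_mem_spectrum, AlgEquiv.spectrum_eq]

lemma pow_entry_nonneg {n : ℕ} {M : Matrix (Fin n) (Fin n) ℝ} (hM : ∀ i j, 0 ≤ M i j) :
    ∀ k, ∀ i j, 0 ≤ (M ^ k) i j := by
  intro k
  induction k with
  | zero => intro i j; simp [Matrix.one_apply]; positivity
  | succ k ih =>
    intro i j
    rw [pow_succ, Matrix.mul_apply]
    exact Finset.sum_nonneg fun m _ => mul_nonneg (ih i m) (hM m j)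

lemma mulVec_mono {n : ℕ} {N : Matrix (Fin n) (Fin n) ℝ} (hN : ∀ i j, 0 ≤ N i j)
    {x y : Fin n → ℝ} (hxy : ∀ i, x i ≤ y i) (i : Fin n) :
    N.mulVec x i ≤ N.mulVec y i :=
by
  simp only [Matrix.mulVec, dotProduct]
  exact Finset.sum_le_sum fun m _ => mul_le_mul_of_nonneg_left (hxy m) (hN i m)

lemma specRad_lower {n : ℕ} (hn : 1 ≤ n) (M : Matrix (Fin n) (Fin n) ℝ)
    (hM : ∀ i j, 0 ≤ M i j) (t : ℝ) (ht : 0 ≤ t) (u : Fin n → ℝ)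
    (hu : ∀ i, 0 ≤ u i) (j : Fin n) (huj : 0 < u j)
    (h : ∀ i, t * u i ≤ M.mulVec u i) :
    t ≤ specRad M := by
  have : Nonempty (Fin n) := ⟨⟨0, hn⟩⟩
  -- powers
  have hpow : ∀ k, ∀ i, t ^ k * u i ≤ (M ^ k).mulVec u i := by
    intro k
    induction k with
    | zero => intro i; simp [Matrix.mulVec, dotProduct, Matrix.one_apply]
    | succ k ih =>
      intro i
      have h1 : (M ^ (k+1)).mulVec u = (M ^ k).mulVec (M.mulVec u) := by
        rw [pow_succ, ← Matrix.mulVec_mulVec]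
      rw [h1]
      calc t ^ (k+1) * u i = t * (t ^ k * u i) := by ring
        _ ≤ t * ((M ^ k).mulVec u i) :=
            mul_le_mul_of_nonneg_left (ih i) ht
        _ = (M ^ k).mulVec (t • u) i := by
            rw [Matrix.mulVec_smul]; simp [smul_eq_mul]
        _ ≤ (M ^ k).mulVec (M.mulVec u) i :=
            mulVec_mono (pow_entry_nonneg hM k) (fun i' => h i') i
  set uC : Fin n → ℂ := fun i => (u i : ℂ) with huC
  set W : Matrix (Fin n) (Fin n) ℂ := M.map (fun x : ℝ => (x : ℂ)) with hW
  have hWpow : ∀ k, W ^ k = (M ^ k).map (fun x : ℝ => (x : ℂ)) := by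
    intro k
    exact (Complex.ofRealHom.mapMatrix.map_pow M k).symm
  have hc : 0 < ‖uC‖ := by
    have h1 : ‖uC j‖ ≤ ‖uC‖ := norm_le_pi_norm uC j
    have h2 : ‖uC j‖ = u j := by
      simp [huC, Complex.norm_real, abs_of_nonneg (hu j)]
    linarith
  have hkey : ∀ k, t ^ k * (u j / ‖uC‖) ≤ ‖W ^ k‖ := by
    intro k
    have h1 : ((W ^ k) *ᵥ uC) j = (((M ^ k) *ᵥ u) j : ℂ) := by
      rw [hWpow]
      simp [Matrix.mulVec, dotProduct, Matrix.map_apply, huC]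
    have h2 : ((M ^ k) *ᵥ u) j ≤ ‖W ^ k‖ * ‖uC‖ := by
      calc ((M ^ k) *ᵥ u) j ≤ ‖(((M ^ k) *ᵥ u) j : ℂ)‖ := by
            rw [Complex.norm_real]; exact le_abs_self _
        _ = ‖((W ^ k) *ᵥ uC) j‖ := by rw [h1]
        _ ≤ ‖(W ^ k) *ᵥ uC‖ := norm_le_pi_norm _ j
        _ ≤ ‖W ^ k‖ * ‖uC‖ := Matrix.linfty_opNorm_mulVec _ _
    have h3 : t ^ k * u j ≤ ‖W ^ k‖ * ‖uC‖ := (hpow k j).trans h2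
    calc t ^ k * (u j / ‖uC‖) = t ^ k * u j / ‖uC‖ := by ring
      _ ≤ ‖W ^ k‖ := by rw [div_le_iff₀ hc]; exact h3
  -- pass to ENNReal
  set d : ℝ := u j / ‖uC‖ with hd
  have hd0 : 0 < d := div_pos huj hc
  set T : ENNReal := ENNReal.ofReal t with hT
  set C : ENNReal := ENNReal.ofReal d with hC
  have hgel := spectrum.pow_nnnorm_pow_one_div_tendsto_nhds_spectralRadius W
  have hmono : ∀ᶠ k : ℕ in atTop,
      T * C ^ (1 / (k:ℝ)) ≤ (‖W ^ k‖₊ : ENNReal) ^ (1 / (k:ℝ)) := by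
    filter_upwards [Filter.eventually_ge_atTop 1] with k hk
    have hk0 : (k : ℝ) ≠ 0 := by positivity
    have h1 : ENNReal.ofReal (t ^ k * d) ≤ (‖W ^ k‖₊ : ENNReal) := by
      rw [← enorm_eq_nnnorm, ← ofReal_norm]
      exact ENNReal.ofReal_le_ofReal (hkey k)
    have h2 : ENNReal.ofReal (t ^ k * d) = T ^ k * C := by
      rw [ENNReal.ofReal_mul (by positivity), ENNReal.ofReal_pow ht]
    have h3 := ENNReal.rpow_le_rpow (h2 ▸ h1) (by positivity : (0:ℝ) ≤ 1 / (k:ℝ))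
    calc T * C ^ (1 / (k:ℝ)) = (T ^ k * C) ^ (1 / (k:ℝ)) := by
          rw [ENNReal.mul_rpow_of_nonneg _ _ (by positivity : (0:ℝ) ≤ 1 / (k:ℝ)),
            ← ENNReal.rpow_natCast T k, ← ENNReal.rpow_mul]
          norm_num [hk0]
      _ ≤ (‖W ^ k‖₊ : ENNReal) ^ (1 / (k:ℝ)) := h3
  have hlim : Filter.Tendsto (fun k : ℕ => T * C ^ (1 / (k:ℝ))) atTop (𝓝 T) := by
    have h1 : Filter.Tendsto (fun k : ℕ => C ^ (1 / (k:ℝ))) atTop (𝓝 1) := by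
      have h2 : Filter.Tendsto (fun k : ℕ => d ^ (1 / (k:ℝ))) atTop (𝓝 1) := by
        have h3 := (Real.continuousAt_const_rpow (a := d) (b := (0:ℝ)) (ne_of_gt hd0)).tendsto
        rw [Real.rpow_zero] at h3
        exact h3.comp tendsto_one_div_atTop_nhds_zero_nat
      have h4 : ∀ k : ℕ, C ^ (1 / (k:ℝ)) = ENNReal.ofReal (d ^ (1 / (k:ℝ))) := by
        intro k
        rw [hC, ← ENNReal.ofReal_rpow_of_pos hd0]
      simp only [h4]
      have := (ENNReal.continuous_ofReal.tendsto 1).comp h2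
      simpa [Function.comp_def] using this
    have := ENNReal.Tendsto.const_mul (a := T) h1 (Or.inr (by simp [hT]))
    simpa using this
  have hTle : T ≤ spectralRadius ℂ W := le_of_tendsto_of_tendsto hlim hgel hmono
  -- extract an eigenvalue of maximal modulus
  have hne : (spectrum ℂ W).Nonempty := by
    have : Nonempty (Fin n) := ⟨⟨0, hn⟩⟩
    exact spectrum.nonempty_of_isAlgClosed_of_finiteDimensional ℂ W
  have hfin : (spectrum ℂ W).Finite := Matrix.finite_spectrum W
  obtain ⟨μ, hμ, hmax⟩ := Set.exists_max_image (spectrum ℂ W) (fun μ => ‖μ‖) hfin hne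
  have hsup : spectralRadius ℂ W ≤ (‖μ‖₊ : ENNReal) := by
    rw [spectralRadius]
    exact iSup₂_le fun ν hν => by
      simpa [ENNReal.coe_le_coe, ← NNReal.coe_le_coe] using hmax ν hν
  have ht2 : t ≤ ‖μ‖ := by
    have := hTle.trans hsup
    rw [hT, ← enorm_eq_nnnorm, ← ofReal_norm] at this
    have := (ENNReal.ofReal_le_ofReal_iff (norm_nonneg μ)).mp this
    exact this
  refine ht2.trans (le_csSup ?_ ?_)
  · have : {r : ℝ | ∃ μ : ℂ, r = ‖μ‖ ∧
        Module.End.HasEigenvalue (Matrix.toLin' W) μ} = (fun μ : ℂ => ‖μ‖) '' (spectrum ℂ W) := by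
      ext r
      simp only [Set.mem_setOf_eq, Set.mem_image]
      constructor
      · rintro ⟨ν, rfl, hν⟩; exact ⟨ν, (eig_iff_spec W ν).mp hν, rfl⟩
      · rintro ⟨ν, hν, rfl⟩; exact ⟨ν, rfl, (eig_iff_spec W ν).mpr hν⟩
    show BddAbove {r : ℝ | ∃ μ : ℂ, r = ‖μ‖ ∧
        Module.End.HasEigenvalue (Matrix.toLin' W) μ}
    rw [this]
    exact (hfin.image _).bddAbove
  · exact ⟨μ, rfl, (eig_iff_spec W μ).mpr hμ⟩

lemma pos_of_mul_pos' {x y : ℝ} (hx : 0 ≤ x) (hy : 0 ≤ y) (h : 0 < x * y) :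
    0 < x ∧ 0 < y := by
  constructor <;> by_contra hc <;> push_neg at hc <;> nlinarith

lemma exists_pos_term {n : ℕ} {f : Fin n → ℝ} (h : 0 < ∑ i, f i) :
    ∃ i, 0 < f i := by
  by_contra hc
  push_neg at hc
  have : ∑ i, f i ≤ 0 := Finset.sum_nonpos fun i _ => hc i
  linarith

lemma had_pow_pos {n : ℕ} {B : Matrix (Fin n) (Fin n) ℝ} (hB : ∀ i j, 0 ≤ B i j) :
    ∀ k i j, 0 < (B ^ k) i j → 0 < ((Matrix.hadamard B B) ^ k) i j := by
  have hhad : ∀ i j, 0 ≤ (Matrix.hadamard B B) i j := fun i j =>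
    mul_nonneg (hB i j) (hB i j)
  intro k
  induction k with
  | zero =>
    intro i j hij
    simp only [pow_zero] at *
    rcases eq_or_ne i j with rfl | hne
    · simp [Matrix.one_apply]
    · simp [Matrix.one_apply, hne] at hij
  | succ k ih =>
    intro i j hij
    rw [pow_succ, Matrix.mul_apply] at hij
    obtain ⟨m, hm⟩ := exists_pos_term hij
    obtain ⟨h1, h2⟩ := pos_of_mul_pos' (pow_entry_nonneg hB k i m) (hB m j) hm
    rw [pow_succ, Matrix.mul_apply]
    have hterm : 0 < ((Matrix.hadamard B B) ^ k) i m * (Matrix.hadamard B B) m j :=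
      mul_pos (ih i m h1) (mul_pos h2 h2)
    have hle : ((Matrix.hadamard B B) ^ k) i m * (Matrix.hadamard B B) m j ≤
        ∑ x, ((Matrix.hadamard B B) ^ k) i x * (Matrix.hadamard B B) x j :=
      Finset.single_le_sum (f := fun x => ((Matrix.hadamard B B) ^ k) i x *
        (Matrix.hadamard B B) x j)
        (fun x _ => mul_nonneg (pow_entry_nonneg hhad k i x) (hhad x j)) (Finset.mem_univ m)
    linarith

/-- If `A` is irreducible nonnegative, `V = (1/n) A⊙A`, and `s ≥ √ρ(V)`, then the
only nonnegative solution of the Master Equations is the trivial one. -/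
theorem master_equations_trivial_above_spectral_radius
    (n : ℕ) (hn : 1 ≤ n) (A : Matrix (Fin n) (Fin n) ℝ)
    (hA : ∀ i j, 0 ≤ A i j) (hirr : Irred A)
    (V : Matrix (Fin n) (Fin n) ℝ)
    (hV : V = (n : ℝ)⁻¹ • (Matrix.hadamard A A))
    (s : ℝ) (hs : Real.sqrt (specRad V) ≤ s)
    (q qt : Fin n → ℝ) (h : MasterEq V s q qt) :
    q = 0 ∧ qt = 0 := by
  obtain ⟨hq, hqt, heq1, heq2, hsum⟩ := h
  have hninv : (0:ℝ) < (n : ℝ)⁻¹ := by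
    have : (0:ℝ) < n := by exact_mod_cast hn
    positivity
  have hVnn : ∀ i j, 0 ≤ V i j := by
    intro i j
    rw [hV]
    have := hA i j
    simp [Matrix.hadamard]
    positivity
  -- V is irreducible
  have hirrV : Irred V := by
    intro i j
    obtain ⟨k, hk1, hkpos⟩ := hirr i j
    refine ⟨k, hk1, ?_⟩
    rw [hV, smul_pow]
    have := had_pow_pos hA k i j hkpos
    simp only [Matrix.smul_apply, smul_eq_mul]
    positivity
  -- every row and column of V has a positive entry
  have hrow : ∀ i, ∃ m, 0 < V i m := by
    intro i
    obtain ⟨k, hk1, hkpos⟩ := hirrV i i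
    obtain ⟨k', rfl⟩ : ∃ k', k = k' + 1 := ⟨k - 1, by omega⟩
    rw [pow_succ', Matrix.mul_apply] at hkpos
    obtain ⟨m, hm⟩ := exists_pos_term hkpos
    exact ⟨m, (pos_of_mul_pos' (hVnn i m) (pow_entry_nonneg hVnn k' m i) hm).1⟩
  have hcol : ∀ i, ∃ m, 0 < V m i := by
    intro i
    obtain ⟨k, hk1, hkpos⟩ := hirrV i i
    obtain ⟨k', rfl⟩ : ∃ k', k = k' + 1 := ⟨k - 1, by omega⟩
    rw [pow_succ, Matrix.mul_apply] at hkpos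
    obtain ⟨m, hm⟩ := exists_pos_term hkpos
    exact ⟨m, (pos_of_mul_pos' (pow_entry_nonneg hVnn k' i m) (hVnn m i) hm).2⟩
  -- specRad V is positive
  have hone : Nonempty (Fin n) := ⟨⟨0, hn⟩⟩
  obtain ⟨i₀, _, hmin⟩ := Finset.exists_min_image Finset.univ (fun i => ∑ m, V i m)
    ⟨⟨0, hn⟩, Finset.mem_univ _⟩
  have ht₀pos : 0 < ∑ m, V i₀ m := by
    obtain ⟨m, hm⟩ := hrow i₀
    exact Finset.sum_pos' (fun x _ => hVnn i₀ x) ⟨m, Finset.mem_univ m, hm⟩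
  have hρpos : 0 < specRad V := by
    have := specRad_lower hn V hVnn (∑ m, V i₀ m) ht₀pos.le (fun _ => 1)
      (fun _ => zero_le_one) ⟨0, hn⟩ one_pos (fun i => by
        simp only [mul_one, Matrix.mulVec, dotProduct]
        simpa using hmin i (Finset.mem_univ i))
    linarith
  have hspos : 0 < s := lt_of_lt_of_le (Real.sqrt_pos.mpr hρpos) hs
  have hρle : specRad V ≤ s ^ 2 := by
    nlinarith [Real.sq_sqrt hρpos.le, Real.sqrt_nonneg (specRad V), hs]
  -- notation
  set a : Fin n → ℝ := Vᵀ.mulVec q with ha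
  set b : Fin n → ℝ := V.mulVec qt with hb
  have haeq : ∀ i, a i = ∑ m, V m i * q m := fun i => by
    simp [ha, Matrix.mulVec, dotProduct, Matrix.transpose_apply]
  have hbeq : ∀ i, b i = ∑ m, V i m * qt m := fun i => by
    simp [hb, Matrix.mulVec, dotProduct]
  have hann : ∀ i, 0 ≤ a i := fun i => by
    rw [haeq i]; exact Finset.sum_nonneg fun m _ => mul_nonneg (hVnn m i) (hq m)
  have hbnn : ∀ i, 0 ≤ b i := fun i => by
    rw [hbeq i]; exact Finset.sum_nonneg fun m _ => mul_nonneg (hVnn i m) (hqt m)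
  have hden : ∀ i, 0 < s ^ 2 + b i * a i := fun i => by nlinarith [hann i, hbnn i]
  have heqa : ∀ i, q i * (s ^ 2 + b i * a i) = a i := fun i => by
    have := heq1 i
    rw [eq_div_iff (hden i).ne'] at this
    linarith [this]
  have heqb : ∀ i, qt i * (s ^ 2 + b i * a i) = b i := fun i => by
    have := heq2 i
    rw [eq_div_iff (hden i).ne'] at this
    linarith [this]
  have hq0 : q = 0 := by
    by_contra hq0
    have hexq : ∃ j, 0 < q j := by
      by_contra hc
      push_neg at hc
      exact hq0 (funext fun i => le_antisymm (hc i) (hq i))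
    obtain ⟨j, hj⟩ := hexq
    have hsq : 0 < ∑ i, q i := Finset.sum_pos' (fun i _ => hq i) ⟨j, Finset.mem_univ j, hj⟩
    have hexqt : ∃ j', 0 < qt j' := by
      rw [hsum] at hsq
      exact exists_pos_term hsq
    obtain ⟨j', hj'⟩ := hexqt
    have hstepq : ∀ l m, 0 < q m → 0 < V m l → 0 < q l := by
      intro l m hqm hV'
      have hal : 0 < a l := by
        rw [haeq l]
        have h1 : V m l * q m ≤ ∑ x, V x l * q x := Finset.single_le_sum
          (f := fun x => V x l * q x)
          (fun x _ => mul_nonneg (hVnn x l) (hq x)) (Finset.mem_univ m)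
        nlinarith [mul_pos hV' hqm]
      rw [heq1 l]
      exact div_pos hal (hden l)
    have hindq : ∀ k, ∀ m i, 0 < (V ^ k) m i → 0 < q m → 0 < q i := by
      intro k
      induction k with
      | zero =>
        intro m i hmi hm
        rcases eq_or_ne m i with rfl | hne
        · exact hm
        · simp [pow_zero, Matrix.one_apply, hne] at hmi
      | succ k ih =>
        intro m i hmi hm
        rw [pow_succ, Matrix.mul_apply] at hmi
        obtain ⟨x, hx⟩ := exists_pos_term hmi
        obtain ⟨h1, h2⟩ := pos_of_mul_pos' (pow_entry_nonneg hVnn k m x) (hVnn x i) hx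
        exact hstepq i x (ih m x h1 hm) h2
    have hqpos : ∀ i, 0 < q i := fun i => by
      obtain ⟨k, _, hk⟩ := hirrV j i
      exact hindq k j i hk hj
    have hstepqt : ∀ l m, 0 < qt m → 0 < V l m → 0 < qt l := by
      intro l m hqm hV'
      have hbl : 0 < b l := by
        rw [hbeq l]
        have h1 : V l m * qt m ≤ ∑ x, V l x * qt x := Finset.single_le_sum
          (f := fun x => V l x * qt x)
          (fun x _ => mul_nonneg (hVnn l x) (hqt x)) (Finset.mem_univ m)
        nlinarith [mul_pos hV' hqm]
      rw [heq2 l]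
      exact div_pos hbl (hden l)
    have hindqt : ∀ k, ∀ i m, 0 < (V ^ k) i m → 0 < qt m → 0 < qt i := by
      intro k
      induction k with
      | zero =>
        intro i m hmi hm
        rcases eq_or_ne i m with rfl | hne
        · exact hm
        · simp [pow_zero, Matrix.one_apply, hne] at hmi
      | succ k ih =>
        intro i m hmi hm
        rw [pow_succ', Matrix.mul_apply] at hmi
        obtain ⟨x, hx⟩ := exists_pos_term hmi
        obtain ⟨h1, h2⟩ := pos_of_mul_pos' (hVnn i x) (pow_entry_nonneg hVnn k x m) hx
        exact hstepqt i x (ih x m h2 hm) h1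
    have hqtpos : ∀ i, 0 < qt i := fun i => by
      obtain ⟨k, _, hk⟩ := hirrV i j'
      exact hindqt k i j' hk hj'
    have hapos : ∀ i, 0 < a i := fun i => by
      obtain ⟨m, hm⟩ := hcol i
      rw [haeq i]
      have h1 : V m i * q m ≤ ∑ x, V x i * q x := Finset.single_le_sum
        (f := fun x => V x i * q x)
        (fun x _ => mul_nonneg (hVnn x i) (hq x)) (Finset.mem_univ m)
      nlinarith [mul_pos hm (hqpos m)]
    have hbpos : ∀ i, 0 < b i := fun i => by
      obtain ⟨m, hm⟩ := hrow i
      rw [hbeq i]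
      have h1 : V i m * qt m ≤ ∑ x, V i x * qt x := Finset.single_le_sum
        (f := fun x => V i x * qt x)
        (fun x _ => mul_nonneg (hVnn i x) (hqt x)) (Finset.mem_univ m)
      nlinarith [mul_pos hm (hqtpos m)]
    obtain ⟨i₁, _, hmin2⟩ := Finset.exists_min_image Finset.univ (fun i => a i * b i)
      ⟨j, Finset.mem_univ j⟩
    have hεpos : 0 < a i₁ * b i₁ := mul_pos (hapos i₁) (hbpos i₁)
    have hsub : ∀ i, (s ^ 2 + a i₁ * b i₁) * qt i ≤ V.mulVec qt i := by
      intro i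
      have h1 := heqb i
      have h2 : a i₁ * b i₁ ≤ a i * b i := hmin2 i (Finset.mem_univ i)
      have h3 : V.mulVec qt i = b i := rfl
      rw [h3]
      nlinarith [mul_le_mul_of_nonneg_left h2 (hqt i)]
    have := specRad_lower hn V hVnn (s ^ 2 + a i₁ * b i₁) (by positivity) qt hqt j' hj' hsub
    linarith
  refine ⟨hq0, ?_⟩
  have hz : ∑ i, qt i = 0 := by rw [← hsum, hq0]; simp
  funext i
  have := (Finset.sum_eq_zero_iff_of_nonneg (fun i _ => hqt i)).mp hz i (Finset.mem_univ i)
  simpa using this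
end

section
/- Let k ≥ 2, m ≥ 1, n = km, and let J_m denote the m×m all-ones matrix. Let A_n be the n×n block matrix whose (1,j) block is J_m for j = 2,…,k, whose (i,1) block is J_m for i = 2,…,k, and all of whose other m×m blocks are zero. Set V_n = (1/n) A_n⊙A_n. Then: (a) ρ(V_n) = √(k−1)/k; and (b) for every s ∈ (0, ρ*) with ρ* = (k−1)^{1/4}/√k, the unique nontrivial nonnegative solution (q(s), q̃(s)) of the Master Equations associated with V_n satisfies 1 − (1/n)⟨q(s), V_n q̃(s)⟩ = (1/k)√((k−2)² + 4k²s⁴). -/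
open Matrix Finset

lemma scalar_key (k s X Y Xt Yt n α β : ℝ) (hk : 2 ≤ k) (hs : 0 < s) (hn : 0 < n)
    (hX : 0 ≤ X) (hY : 0 ≤ Y) (hXt : 0 ≤ Xt) (hYt : 0 ≤ Yt)
    (hα : α = s ^ 2 + n⁻¹ * Yt * (n⁻¹ * Y))
    (hβ : β = s ^ 2 + n⁻¹ * Xt * (n⁻¹ * X))
    (E1 : k * (X * α) = Y) (E2 : k * (Xt * α) = Yt)
    (E3 : k * (Y * β) = (k - 1) * X) (E4 : k * (Yt * β) = (k - 1) * Xt)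
    (E5 : X + Y = Xt + Yt) (hpos : X + Y ≠ 0) :
    1 - n⁻¹ * (X * (n⁻¹ * Yt) + Y * (n⁻¹ * Xt)) =
      k⁻¹ * Real.sqrt ((k - 2) ^ 2 + 4 * k ^ 2 * s ^ 4) := by
  have hk0 : k ≠ 0 := by linarith
  have hk1 : k - 1 ≠ 0 := by linarith
  have hαpos : 0 < α := by
    rw [hα]
    have h0 : 0 ≤ n⁻¹ * Yt * (n⁻¹ * Y) := by positivity
    nlinarith [mul_pos hs hs]
  have hXY : X * Yt = Xt * Y := by
    have h : (k * α) * (X * Yt) = (k * α) * (Xt * Y) := by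
      linear_combination Yt * E1 - Y * E2
    exact mul_left_cancel₀ (by positivity) h
  have hXtX : Xt = X := by
    have h : Xt * (X + Y) = X * (X + Y) := by linear_combination -hXY - X * E5
    exact mul_right_cancel₀ hpos h
  have hYtY : Yt = Y := by linarith [E5, hXtX]
  simp only [hXtX, hYtY] at hα hβ E1 E2 E3 E4 ⊢
  clear E2 E4 E5 hXY hXt hYt
  have hXpos : 0 < X := by
    rcases lt_or_eq_of_le hX with h | h
    · exact h
    · exfalso
      have hY0 : Y = 0 := by linear_combination -E1 - α * k * h
      exact hpos (by rw [← h, hY0, add_zero])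
  have hYpos : 0 < Y := by
    rcases lt_or_eq_of_le hY with h | h
    · exact h
    · exfalso
      have hX0 : X = 0 := by
        have h2 : (k - 1) * X = 0 := by rw [← E3, ← h]; ring
        exact (mul_eq_zero.mp h2).elim (fun hh => absurd hh hk1) id
      exact hpos (by rw [hX0, ← h, add_zero])
  have hβpos : 0 < β := by
    rw [hβ]
    have h0 : 0 ≤ n⁻¹ * X * (n⁻¹ * X) := by positivity
    nlinarith [mul_pos hs hs]
  have hαβ : k ^ 2 * (α * β) = k - 1 := by
    have h : (k ^ 2 * (α * β)) * (X * Y) = (k - 1) * (X * Y) := by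
      linear_combination (k * Y * β) * E1 + Y * E3
    exact mul_right_cancel₀ (by positivity) h
  set u : ℝ := n⁻¹ * X * (n⁻¹ * Y) with hu
  have R1 : k * u * α = α - s ^ 2 := by
    linear_combination (n⁻¹ * (n⁻¹ * Y)) * E1 - hα
  have R2 : k * u * β = (k - 1) * (β - s ^ 2) := by
    linear_combination (n⁻¹ * (n⁻¹ * X)) * E3 - (k - 1) * hβ
  have R3 : k * u = (k - 1) - k ^ 2 * s ^ 2 * α := by
    have h : (k - 1) * (k * u) = (k - 1) * ((k - 1) - k ^ 2 * s ^ 2 * α) := by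
      linear_combination (k ^ 2 * α) * R2 + ((k - 1) - k * u) * hαβ
    exact mul_left_cancel₀ hk1 h
  have RqE : k ^ 2 * s ^ 2 * α ^ 2 = (k - 2) * α + s ^ 2 := by
    linear_combination (-1) * R1 + α * R3
  have hx : 0 < k ^ 2 * s ^ 2 * α - (k - 2) := by
    have h : (k ^ 2 * s ^ 2 * α - (k - 2)) * α = s ^ 2 := by linear_combination RqE
    nlinarith [mul_pos hs hs]
  have hcc : 0 ≤ 2 * k ^ 2 * s ^ 2 * α - (k - 2) := by nlinarith [mul_pos hs hs, hαpos]
  have hsq : Real.sqrt ((k - 2) ^ 2 + 4 * k ^ 2 * s ^ 4)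
      = 2 * k ^ 2 * s ^ 2 * α - (k - 2) := by
    rw [show (k - 2) ^ 2 + 4 * k ^ 2 * s ^ 4 = (2 * k ^ 2 * s ^ 2 * α - (k - 2)) ^ 2 by
      linear_combination (-4 * k ^ 2 * s ^ 2) * RqE]
    exact Real.sqrt_sq hcc
  rw [hsq]
  have hki : k * k⁻¹ = 1 := mul_inv_cancel₀ hk0
  have h : k * (1 - n⁻¹ * (X * (n⁻¹ * Y) + Y * (n⁻¹ * X)))
      = k * (k⁻¹ * (2 * k ^ 2 * s ^ 2 * α - (k - 2))) := by
    linear_combination (-2) * R3 - (2 * k ^ 2 * s ^ 2 * α - (k - 2)) * hki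
  exact mul_left_cancel₀ hk0 h


set_option maxHeartbeats 2000000

/-- For the block variance profile built from the `km × km` matrix whose first
block row and first block column (off the diagonal block) consist of all-ones
`m × m` blocks, the spectral radius of `V = (1/n) A⊙A` equals `√(k−1)/k`, and for
`0 < s < ρ* = (k−1)^{1/4}/√k` the nontrivial solution of the Master Equations
satisfies `1 − (1/n)⟨q(s), V q̃(s)⟩ = (1/k)√((k−2)² + 4k²s⁴)`. -/
theorem block_profile_F_formula
    (k m : ℕ) (hk : 2 ≤ k) (hm : 1 ≤ m)
    (A : Matrix (Fin (k * m)) (Fin (k * m)) ℝ)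
    (hA : ∀ i j : Fin (k * m),
      A i j = if (((i : ℕ) < m ∧ m ≤ (j : ℕ)) ∨ (m ≤ (i : ℕ) ∧ (j : ℕ) < m))
        then 1 else 0)
    (V : Matrix (Fin (k * m)) (Fin (k * m)) ℝ)
    (hV : V = ((k * m : ℕ) : ℝ)⁻¹ • (Matrix.hadamard A A)) :
    specRad V = Real.sqrt ((k : ℝ) - 1) / k ∧
    ∀ s : ℝ, s ∈ Set.Ioo 0 (((k : ℝ) - 1) ^ ((1 : ℝ)/4) / Real.sqrt k) →
      ∀ q qt : Fin (k * m) → ℝ, MasterEq V s q qt → (q, qt) ≠ (0, 0) →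
        1 - ((k * m : ℕ) : ℝ)⁻¹ * ∑ i, q i * (V.mulVec qt) i =
          (k : ℝ)⁻¹ * Real.sqrt (((k : ℝ) - 2) ^ 2 + 4 * (k : ℝ) ^ 2 * s ^ 4) := by
  have hkm : 0 < k * m := Nat.mul_pos (by omega) hm
  set nR : ℝ := ((k * m : ℕ) : ℝ) with hnRdef
  have hnpos : (0 : ℝ) < nR := by rw [hnRdef]; exact_mod_cast hkm
  have hn0 : nR ≠ 0 := ne_of_gt hnpos
  have hkR : (2 : ℝ) ≤ (k : ℝ) := by exact_mod_cast hk
  have hk0 : (k : ℝ) ≠ 0 := by linarith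
  have hm0 : (m : ℝ) ≠ 0 := by
    have h1 : (1 : ℝ) ≤ (m : ℝ) := by exact_mod_cast hm
    linarith
  have hnkm : nR = (k : ℝ) * (m : ℝ) := by rw [hnRdef]; push_cast; ring
  have hm_n : (m : ℝ) * nR⁻¹ = (k : ℝ)⁻¹ := by
    rw [hnkm, mul_inv]
    field_simp
  have hki : (k : ℝ) * (k : ℝ)⁻¹ = 1 := mul_inv_cancel₀ hk0
  set T : Finset (Fin (k * m)) := Finset.univ.filter (fun i => (i : ℕ) < m) with hT
  set B : Finset (Fin (k * m)) := Finset.univ.filter (fun i => ¬ (i : ℕ) < m) with hB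
  have hTcard : T.card = m := by
    have hmle : m ≤ k * m := Nat.le_mul_of_pos_left m (by omega)
    have heq : T = Finset.map (Fin.castLEEmb hmle) Finset.univ := by
      ext i
      simp only [hT, mem_filter, mem_univ, true_and, Finset.mem_map, Fin.castLEEmb_apply]
      constructor
      · intro h; exact ⟨⟨(i : ℕ), h⟩, by ext; rfl⟩
      · rintro ⟨j, rfl⟩; exact j.isLt
    rw [heq, Finset.card_map, Finset.card_univ, Fintype.card_fin]
  have hBcard : (B.card : ℝ) = ((k : ℝ) - 1) * (m : ℝ) := by
    have hsum : T.card + B.card = k * m := by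
      rw [hT, hB, Finset.card_filter_add_card_filter_not]
      exact Finset.card_univ.trans (Fintype.card_fin _)
    have hb : B.card = k * m - m := by omega
    have hmle : m ≤ k * m := Nat.le_mul_of_pos_left m (by omega)
    rw [hb]
    push_cast [Nat.cast_sub hmle]
    ring
  have hVentry : ∀ i j : Fin (k * m), V i j =
      if (((i : ℕ) < m ∧ m ≤ (j : ℕ)) ∨ (m ≤ (i : ℕ) ∧ (j : ℕ) < m)) then nR⁻¹ else 0 := by
    intro i j
    rw [hV]
    simp only [Matrix.smul_apply, Matrix.hadamard_apply, hA, smul_eq_mul]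
    split_ifs <;> ring
  have hVnn : ∀ i j : Fin (k * m), 0 ≤ V i j := by
    intro i j
    rw [hVentry]
    split_ifs
    · positivity
    · exact le_refl 0
  have hform : ∀ (w : Fin (k * m) → ℝ) (i : Fin (k * m)), (V.mulVec w) i
      = nR⁻¹ * (if (i : ℕ) < m then ∑ j ∈ B, w j else ∑ j ∈ T, w j) := by
    intro w i
    rcases lt_or_ge (i : ℕ) m with hi | hi
    · rw [if_pos hi]
      have hentry : ∀ j : Fin (k * m), V i j * w j
          = if ¬ (j : ℕ) < m then nR⁻¹ * w j else 0 := by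
        intro j
        rw [hVentry]
        split_ifs with h1 h2 h2 <;> try ring
        all_goals (exfalso; omega)
      calc (V.mulVec w) i = ∑ j, V i j * w j := rfl
        _ = ∑ j : Fin (k * m), if ¬ (j : ℕ) < m then nR⁻¹ * w j else 0 :=
            Finset.sum_congr rfl (fun j _ => hentry j)
        _ = nR⁻¹ * ∑ j ∈ B, w j := by rw [hB, ← Finset.sum_filter, Finset.mul_sum]
    · rw [if_neg (not_lt.mpr hi)]
      have hentry : ∀ j : Fin (k * m), V i j * w j
          = if (j : ℕ) < m then nR⁻¹ * w j else 0 := by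
        intro j
        rw [hVentry]
        split_ifs with h1 h2 h2 <;> try ring
        all_goals (exfalso; omega)
      calc (V.mulVec w) i = ∑ j, V i j * w j := rfl
        _ = ∑ j : Fin (k * m), if (j : ℕ) < m then nR⁻¹ * w j else 0 :=
            Finset.sum_congr rfl (fun j _ => hentry j)
        _ = nR⁻¹ * ∑ j ∈ T, w j := by rw [hT, ← Finset.sum_filter, Finset.mul_sum]
  have hsymm : Vᵀ = V := by
    ext i j
    rw [Matrix.transpose_apply, hVentry, hVentry]
    exact if_congr (by tauto) rfl rfl
  have hsplit : ∀ f : Fin (k * m) → ℝ, ∑ i, f i = ∑ i ∈ T, f i + ∑ i ∈ B, f i := by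
    intro f
    rw [hT, hB]
    exact (Finset.sum_filter_add_sum_filter_not Finset.univ _ f).symm
  constructor
  · -- spectral radius
    classical
    set M := V.map (fun x : ℝ => (x : ℂ)) with hM
    set r : ℝ := Real.sqrt ((k : ℝ) - 1) / (k : ℝ) with hr
    have hk1R : (0 : ℝ) ≤ (k : ℝ) - 1 := by linarith
    have hss : Real.sqrt ((k : ℝ) - 1) * Real.sqrt ((k : ℝ) - 1) = (k : ℝ) - 1 :=
      Real.mul_self_sqrt hk1R
    have hrnn : 0 ≤ r := by
      rw [hr]; exact div_nonneg (Real.sqrt_nonneg _) (by linarith)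
    have hmkm : m < k * m := by
      have h2 := Nat.mul_le_mul_right m hk
      omega
    have habs : ∀ i j : Fin (k * m), ‖M i j‖ = V i j := by
      intro i j
      rw [hM, Matrix.map_apply, Complex.norm_real, Real.norm_eq_abs, abs_of_nonneg (hVnn i j)]
    -- the eigenvector for r
    set w : Fin (k * m) → ℂ :=
      fun i => if (i : ℕ) < m then ((Real.sqrt ((k : ℝ) - 1) : ℝ) : ℂ) else 1 with hw
    have hwne : w ≠ 0 := by
      intro h
      have h2 := congrFun h (⟨m, hmkm⟩ : Fin (k * m))
      rw [hw] at h2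
      simp at h2
    have hval1 : (B.card : ℝ) * nR⁻¹ = r * Real.sqrt ((k : ℝ) - 1) := by
      rw [hBcard, hr]
      have h2 : Real.sqrt ((k : ℝ) - 1) / (k : ℝ) * Real.sqrt ((k : ℝ) - 1)
          = ((k : ℝ) - 1) * (k : ℝ)⁻¹ := by
        rw [div_mul_eq_mul_div, hss, div_eq_mul_inv]
      rw [h2]
      calc ((k : ℝ) - 1) * (m : ℝ) * nR⁻¹ = ((k : ℝ) - 1) * ((m : ℝ) * nR⁻¹) := by ring
        _ = ((k : ℝ) - 1) * (k : ℝ)⁻¹ := by rw [hm_n]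
    have hval2 : (T.card : ℝ) * (nR⁻¹ * Real.sqrt ((k : ℝ) - 1)) = r := by
      rw [hTcard, hr]
      calc (m : ℝ) * (nR⁻¹ * Real.sqrt ((k : ℝ) - 1))
          = (m : ℝ) * nR⁻¹ * Real.sqrt ((k : ℝ) - 1) := by ring
        _ = (k : ℝ)⁻¹ * Real.sqrt ((k : ℝ) - 1) := by rw [hm_n]
        _ = Real.sqrt ((k : ℝ) - 1) / (k : ℝ) := by rw [inv_mul_eq_div]
    have hMw : M.mulVec w = ((r : ℝ) : ℂ) • w := by
      funext i
      rcases lt_or_ge (i : ℕ) m with hi | hi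
      · have hcentry : ∀ j : Fin (k * m), M i j * w j
            = if ¬ (j : ℕ) < m then ((nR⁻¹ : ℝ) : ℂ) else 0 := by
          intro j
          rw [hM, Matrix.map_apply, hVentry]
          simp only [hw]
          by_cases hj : (j : ℕ) < m
          · rw [if_neg (not_not_intro hj), if_neg (by omega)]
            simp
          · rw [if_pos hj, if_pos (Or.inl ⟨hi, not_lt.mp hj⟩), if_neg hj, mul_one]
        have hsum : (M.mulVec w) i = (B.card : ℂ) * ((nR⁻¹ : ℝ) : ℂ) := by
          calc (M.mulVec w) i = ∑ j, M i j * w j := rfl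
            _ = ∑ j : Fin (k * m), if ¬ (j : ℕ) < m then ((nR⁻¹ : ℝ) : ℂ) else 0 :=
                Finset.sum_congr rfl fun j _ => hcentry j
            _ = ∑ j ∈ B, ((nR⁻¹ : ℝ) : ℂ) := by rw [hB, ← Finset.sum_filter]
            _ = (B.card : ℂ) * ((nR⁻¹ : ℝ) : ℂ) := by rw [Finset.sum_const, nsmul_eq_mul]
        rw [hsum, Pi.smul_apply]
        simp only [hw]
        rw [if_pos hi, smul_eq_mul]
        push_cast
        exact_mod_cast congrArg (fun x : ℝ => (x : ℂ)) hval1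
      · have hcentry : ∀ j : Fin (k * m), M i j * w j
            = if (j : ℕ) < m then ((nR⁻¹ : ℝ) : ℂ) * ((Real.sqrt ((k : ℝ) - 1) : ℝ) : ℂ)
              else 0 := by
          intro j
          rw [hM, Matrix.map_apply, hVentry]
          simp only [hw]
          by_cases hj : (j : ℕ) < m
          · rw [if_pos hj, if_pos (Or.inr ⟨hi, hj⟩), if_pos hj]
          · rw [if_neg hj, if_neg (by omega)]
            simp [hj]
        have hsum : (M.mulVec w) i
            = (T.card : ℂ) * (((nR⁻¹ : ℝ) : ℂ) * ((Real.sqrt ((k : ℝ) - 1) : ℝ) : ℂ)) := by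
          calc (M.mulVec w) i = ∑ j, M i j * w j := rfl
            _ = ∑ j : Fin (k * m), if (j : ℕ) < m
                then ((nR⁻¹ : ℝ) : ℂ) * ((Real.sqrt ((k : ℝ) - 1) : ℝ) : ℂ) else 0 :=
                Finset.sum_congr rfl fun j _ => hcentry j
            _ = ∑ j ∈ T, ((nR⁻¹ : ℝ) : ℂ) * ((Real.sqrt ((k : ℝ) - 1) : ℝ) : ℂ) := by
                rw [hT, ← Finset.sum_filter]
            _ = _ := by rw [Finset.sum_const, nsmul_eq_mul]
        rw [hsum, Pi.smul_apply]
        simp only [hw]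
        rw [if_neg (not_lt.mpr hi), smul_eq_mul, mul_one]
        exact_mod_cast congrArg (fun x : ℝ => (x : ℂ)) hval2
    have eigr : Module.End.HasEigenvalue (Matrix.toLin' M) ((r : ℝ) : ℂ) := by
      apply Module.End.hasEigenvalue_of_hasEigenvector (x := w)
      refine ⟨Module.End.mem_eigenspace_iff.mpr ?_, hwne⟩
      rw [Matrix.toLin'_apply, hMw]
    have hub : ∀ μ : ℂ, Module.End.HasEigenvalue (Matrix.toLin' M) μ → ‖μ‖ ≤ r := by
      intro μ hμ
      obtain ⟨v, hv⟩ := hμ.exists_hasEigenvector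
      have h1 : M.mulVec v = μ • v := by
        rw [← Matrix.toLin'_apply]; exact hv.apply_eq_smul
      obtain ⟨i0, -, hmax⟩ := Finset.exists_max_image Finset.univ
        (fun i => ‖v i‖) ⟨⟨0, hkm⟩, mem_univ _⟩
      have hvi0 : 0 < ‖v i0‖ := by
        obtain ⟨j, hj⟩ := Function.ne_iff.mp hv.2
        exact lt_of_lt_of_le (norm_pos_iff.mpr hj) (hmax j (mem_univ j))
      have h2 : M.mulVec (M.mulVec v) = (μ ^ 2) • v := by
        rw [h1, Matrix.mulVec_smul, h1, smul_smul, ← sq]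
      have hrow : ∀ l : Fin (k * m), (∑ j, V l j)
          = nR⁻¹ * (if (l : ℕ) < m then (B.card : ℝ) else (T.card : ℝ)) := by
        intro l
        calc ∑ j, V l j = ∑ j, V l j * (fun _ => (1 : ℝ)) j := by simp
          _ = (V.mulVec (fun _ => 1)) l := rfl
          _ = nR⁻¹ * (if (l : ℕ) < m then ∑ j ∈ B, (1 : ℝ) else ∑ j ∈ T, (1 : ℝ)) :=
              hform _ l
          _ = nR⁻¹ * (if (l : ℕ) < m then (B.card : ℝ) else (T.card : ℝ)) := by
              rw [Finset.sum_const, Finset.sum_const]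
              simp
      have hrow2 : ∀ i : Fin (k * m),
          ∑ l, V i l * (∑ j, V l j) = ((k : ℝ) - 1) / (k : ℝ) ^ 2 := by
        intro i
        have hcalc : ∑ l, V i l * (∑ j, V l j)
            = (V.mulVec (fun l => nR⁻¹ * (if (l : ℕ) < m then (B.card : ℝ) else (T.card : ℝ)))) i :=
          Finset.sum_congr rfl fun l _ => by rw [hrow l]
        rw [hcalc, hform]
        have hnum : nR⁻¹ * ((B.card : ℝ) * (nR⁻¹ * (T.card : ℝ))) = ((k : ℝ) - 1) / (k : ℝ) ^ 2 := by
          rw [hTcard, hBcard]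
          calc nR⁻¹ * (((k : ℝ) - 1) * (m : ℝ) * (nR⁻¹ * (m : ℝ)))
              = ((k : ℝ) - 1) * ((m : ℝ) * nR⁻¹) * ((m : ℝ) * nR⁻¹) := by ring
            _ = ((k : ℝ) - 1) * (k : ℝ)⁻¹ * (k : ℝ)⁻¹ := by rw [hm_n]
            _ = ((k : ℝ) - 1) / (k : ℝ) ^ 2 := by
                rw [div_eq_mul_inv, sq, mul_inv, ← mul_assoc]
        rcases lt_or_ge (i : ℕ) m with hi | hi
        · rw [if_pos hi]
          have hc : ∀ l ∈ B, nR⁻¹ * (if (l : ℕ) < m then (B.card : ℝ) else (T.card : ℝ))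
              = nR⁻¹ * (T.card : ℝ) := by
            intro l hl
            have hl' : ¬ (l : ℕ) < m := by rw [hB] at hl; exact (mem_filter.mp hl).2
            rw [if_neg hl']
          rw [Finset.sum_congr rfl hc, Finset.sum_const, nsmul_eq_mul]
          exact hnum
        · rw [if_neg (not_lt.mpr hi)]
          have hc : ∀ l ∈ T, nR⁻¹ * (if (l : ℕ) < m then (B.card : ℝ) else (T.card : ℝ))
              = nR⁻¹ * (B.card : ℝ) := by
            intro l hl
            have hl' : (l : ℕ) < m := by rw [hT] at hl; exact (mem_filter.mp hl).2
            rw [if_pos hl']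
          rw [Finset.sum_congr rfl hc, Finset.sum_const, nsmul_eq_mul]
          rw [← hnum]; ring
      have hchain : ‖μ‖ ^ 2 * ‖v i0‖
          ≤ (((k : ℝ) - 1) / (k : ℝ) ^ 2) * ‖v i0‖ := by
        have e1 : ‖μ‖ ^ 2 * ‖v i0‖
            = ‖(M.mulVec (M.mulVec v)) i0‖ := by
          rw [h2, Pi.smul_apply, smul_eq_mul, norm_mul, norm_pow]
        rw [e1]
        calc ‖(M.mulVec (M.mulVec v)) i0‖
            = ‖∑ l, M i0 l * (M.mulVec v) l‖ := rfl
          _ ≤ ∑ l, ‖M i0 l * (M.mulVec v) l‖ := norm_sum_le _ _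
          _ = ∑ l, V i0 l * ‖(M.mulVec v) l‖ :=
              Finset.sum_congr rfl fun l _ => by rw [norm_mul, habs]
          _ ≤ ∑ l, V i0 l * (∑ j, V l j * ‖v j‖) := by
              refine Finset.sum_le_sum fun l _ => ?_
              refine mul_le_mul_of_nonneg_left ?_ (hVnn i0 l)
              calc ‖(M.mulVec v) l‖ = ‖∑ j, M l j * v j‖ := rfl
                _ ≤ ∑ j, ‖M l j * v j‖ := norm_sum_le _ _
                _ = ∑ j, V l j * ‖v j‖ :=
                    Finset.sum_congr rfl fun j _ => by rw [norm_mul, habs]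
          _ ≤ ∑ l, V i0 l * (∑ j, V l j * ‖v i0‖) := by
              refine Finset.sum_le_sum fun l _ => ?_
              refine mul_le_mul_of_nonneg_left (Finset.sum_le_sum fun j _ => ?_) (hVnn i0 l)
              exact mul_le_mul_of_nonneg_left (hmax j (mem_univ j)) (hVnn l j)
          _ = (∑ l, V i0 l * (∑ j, V l j)) * ‖v i0‖ := by
              rw [Finset.sum_mul]
              refine Finset.sum_congr rfl fun l _ => ?_
              rw [← Finset.sum_mul]
              ring
          _ = (((k : ℝ) - 1) / (k : ℝ) ^ 2) * ‖v i0‖ := by rw [hrow2]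
      have h3 : ‖μ‖ ^ 2 ≤ ((k : ℝ) - 1) / (k : ℝ) ^ 2 :=
        le_of_mul_le_mul_right hchain hvi0
      have hr2 : r ^ 2 = ((k : ℝ) - 1) / (k : ℝ) ^ 2 := by
        rw [hr, div_pow, Real.sq_sqrt hk1R]
      nlinarith [norm_nonneg μ, hrnn]
    have hmem : r ∈ {x : ℝ | ∃ μ : ℂ, x = ‖μ‖ ∧
        Module.End.HasEigenvalue (Matrix.toLin' M) μ} :=
      ⟨((r : ℝ) : ℂ), by rw [Complex.norm_real, Real.norm_eq_abs, abs_of_nonneg hrnn], eigr⟩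
    have hub' : ∀ x ∈ {x : ℝ | ∃ μ : ℂ, x = ‖μ‖ ∧
        Module.End.HasEigenvalue (Matrix.toLin' M) μ}, x ≤ r := by
      rintro x ⟨μ, rfl, hμ⟩
      exact hub μ hμ
    show sSup {x : ℝ | ∃ μ : ℂ, x = ‖μ‖ ∧
        Module.End.HasEigenvalue (Matrix.toLin' M) μ} = r
    exact le_antisymm (csSup_le ⟨r, hmem⟩ hub') (le_csSup ⟨r, hub'⟩ hmem)
  · rintro s ⟨hs0, hs1⟩ q qt hME hne
    obtain ⟨hq0, hqt0, heq, heqt, hsum⟩ := hME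
    rw [hsymm] at heq heqt
    set X : ℝ := ∑ i ∈ T, q i with hX
    set Y : ℝ := ∑ i ∈ B, q i with hY
    set Xt : ℝ := ∑ i ∈ T, qt i with hXt
    set Yt : ℝ := ∑ i ∈ B, qt i with hYt
    have hXnn : 0 ≤ X := Finset.sum_nonneg fun i _ => hq0 i
    have hYnn : 0 ≤ Y := Finset.sum_nonneg fun i _ => hq0 i
    have hXtnn : 0 ≤ Xt := Finset.sum_nonneg fun i _ => hqt0 i
    have hYtnn : 0 ≤ Yt := Finset.sum_nonneg fun i _ => hqt0 i
    set α : ℝ := s ^ 2 + nR⁻¹ * Yt * (nR⁻¹ * Y) with hαdef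
    set β : ℝ := s ^ 2 + nR⁻¹ * Xt * (nR⁻¹ * X) with hβdef
    have hαpos : 0 < α := by
      rw [hαdef]
      have h0 : 0 ≤ nR⁻¹ * Yt * (nR⁻¹ * Y) := by positivity
      exact add_pos_of_pos_of_nonneg (pow_pos hs0 2) h0
    have hβpos : 0 < β := by
      rw [hβdef]
      have h0 : 0 ≤ nR⁻¹ * Xt * (nR⁻¹ * X) := by positivity
      exact add_pos_of_pos_of_nonneg (pow_pos hs0 2) h0
    have hqT : ∀ i ∈ T, q i * α = nR⁻¹ * Y := by
      intro i hi
      have hi' : (i : ℕ) < m := by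
        rw [hT] at hi; exact (mem_filter.mp hi).2
      have h := heq i
      rw [hform q i, hform qt i, if_pos hi', if_pos hi', ← hY, ← hYt, ← hαdef] at h
      rw [h]
      exact div_mul_cancel₀ _ (ne_of_gt hαpos)
    have hqtT : ∀ i ∈ T, qt i * α = nR⁻¹ * Yt := by
      intro i hi
      have hi' : (i : ℕ) < m := by
        rw [hT] at hi; exact (mem_filter.mp hi).2
      have h := heqt i
      rw [hform q i, hform qt i, if_pos hi', if_pos hi', ← hY, ← hYt, ← hαdef] at h
      rw [h]
      exact div_mul_cancel₀ _ (ne_of_gt hαpos)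
    have hqB : ∀ i ∈ B, q i * β = nR⁻¹ * X := by
      intro i hi
      have hi' : ¬ (i : ℕ) < m := by
        rw [hB] at hi; exact (mem_filter.mp hi).2
      have h := heq i
      rw [hform q i, hform qt i, if_neg hi', if_neg hi', ← hX, ← hXt, ← hβdef] at h
      rw [h]
      exact div_mul_cancel₀ _ (ne_of_gt hβpos)
    have hqtB : ∀ i ∈ B, qt i * β = nR⁻¹ * Xt := by
      intro i hi
      have hi' : ¬ (i : ℕ) < m := by
        rw [hB] at hi; exact (mem_filter.mp hi).2
      have h := heqt i
      rw [hform q i, hform qt i, if_neg hi', if_neg hi', ← hX, ← hXt, ← hβdef] at h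
      rw [h]
      exact div_mul_cancel₀ _ (ne_of_gt hβpos)
    have E1raw : X * α = (m : ℝ) * (nR⁻¹ * Y) := by
      rw [hX, Finset.sum_mul, Finset.sum_congr rfl hqT, Finset.sum_const, nsmul_eq_mul, hTcard]
    have E2raw : Xt * α = (m : ℝ) * (nR⁻¹ * Yt) := by
      rw [hXt, Finset.sum_mul, Finset.sum_congr rfl hqtT, Finset.sum_const, nsmul_eq_mul, hTcard]
    have E3raw : Y * β = (B.card : ℝ) * (nR⁻¹ * X) := by
      rw [hY, Finset.sum_mul, Finset.sum_congr rfl hqB, Finset.sum_const, nsmul_eq_mul]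
    have E4raw : Yt * β = (B.card : ℝ) * (nR⁻¹ * Xt) := by
      rw [hYt, Finset.sum_mul, Finset.sum_congr rfl hqtB, Finset.sum_const, nsmul_eq_mul]
    have E1 : (k : ℝ) * (X * α) = Y := by
      rw [E1raw]
      calc (k : ℝ) * ((m : ℝ) * (nR⁻¹ * Y)) = (k : ℝ) * ((m : ℝ) * nR⁻¹) * Y := by ring
        _ = (k : ℝ) * (k : ℝ)⁻¹ * Y := by rw [hm_n]
        _ = Y := by rw [hki, one_mul]
    have E2 : (k : ℝ) * (Xt * α) = Yt := by
      rw [E2raw]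
      calc (k : ℝ) * ((m : ℝ) * (nR⁻¹ * Yt)) = (k : ℝ) * ((m : ℝ) * nR⁻¹) * Yt := by ring
        _ = (k : ℝ) * (k : ℝ)⁻¹ * Yt := by rw [hm_n]
        _ = Yt := by rw [hki, one_mul]
    have E3 : (k : ℝ) * (Y * β) = ((k : ℝ) - 1) * X := by
      rw [E3raw, hBcard]
      calc (k : ℝ) * (((k : ℝ) - 1) * (m : ℝ) * (nR⁻¹ * X))
          = ((k : ℝ) - 1) * ((m : ℝ) * nR⁻¹) * (k : ℝ) * X := by ring
        _ = ((k : ℝ) - 1) * (k : ℝ)⁻¹ * (k : ℝ) * X := by rw [hm_n]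
        _ = ((k : ℝ) - 1) * X := by
            field_simp
    have E4 : (k : ℝ) * (Yt * β) = ((k : ℝ) - 1) * Xt := by
      rw [E4raw, hBcard]
      calc (k : ℝ) * (((k : ℝ) - 1) * (m : ℝ) * (nR⁻¹ * Xt))
          = ((k : ℝ) - 1) * ((m : ℝ) * nR⁻¹) * (k : ℝ) * Xt := by ring
        _ = ((k : ℝ) - 1) * (k : ℝ)⁻¹ * (k : ℝ) * Xt := by rw [hm_n]
        _ = ((k : ℝ) - 1) * Xt := by
            field_simp
    have e1 : ∑ i, q i = X + Y := by rw [hX, hY]; exact hsplit q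
    have e2 : ∑ i, qt i = Xt + Yt := by rw [hXt, hYt]; exact hsplit qt
    have E5 : X + Y = Xt + Yt := by rw [← e1, ← e2]; exact hsum
    have hne' : q ≠ 0 ∨ qt ≠ 0 := by
      by_contra h
      push_neg at h
      exact hne (by rw [h.1, h.2])
    have hXYpos : 0 < ∑ i, q i := by
      rcases hne' with h | h
      · obtain ⟨i, hi⟩ := Function.ne_iff.mp h
        have hqi : 0 < q i := lt_of_le_of_ne (hq0 i) (Ne.symm hi)
        exact lt_of_lt_of_le hqi (Finset.single_le_sum (fun j _ => hq0 j) (mem_univ i))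
      · rw [hsum]
        obtain ⟨i, hi⟩ := Function.ne_iff.mp h
        have hqi : 0 < qt i := lt_of_le_of_ne (hqt0 i) (Ne.symm hi)
        exact lt_of_lt_of_le hqi (Finset.single_le_sum (fun j _ => hqt0 j) (mem_univ i))
    have hpos : X + Y ≠ 0 := by rw [← e1]; exact ne_of_gt hXYpos
    have hsum2 : ∑ i, q i * (V.mulVec qt) i = X * (nR⁻¹ * Yt) + Y * (nR⁻¹ * Xt) := by
      rw [hsplit (fun i => q i * (V.mulVec qt) i)]
      congr 1
      · rw [show ∑ i ∈ T, q i * (V.mulVec qt) i = ∑ i ∈ T, q i * (nR⁻¹ * Yt) from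
          Finset.sum_congr rfl (fun i hi => by
            have hi' : (i : ℕ) < m := by rw [hT] at hi; exact (mem_filter.mp hi).2
            rw [hform qt i, if_pos hi', ← hYt]), ← Finset.sum_mul, ← hX]
      · rw [show ∑ i ∈ B, q i * (V.mulVec qt) i = ∑ i ∈ B, q i * (nR⁻¹ * Xt) from
          Finset.sum_congr rfl (fun i hi => by
            have hi' : ¬ (i : ℕ) < m := by rw [hB] at hi; exact (mem_filter.mp hi).2
            rw [hform qt i, if_neg hi', ← hXt]), ← Finset.sum_mul, ← hY]
    rw [hsum2]
    exact scalar_key (k : ℝ) s X Y Xt Yt nR α β hkR hs0 hnpos hXnn hYnn hXtnn hYtnn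
      hαdef hβdef E1 E2 E3 E4 E5 hpos
end

section
/- Let n ≥ 1 and let d, d̃ ∈ (0,∞)^n with components d_i, d̃_i, and set ρ = (1/n) Σ_{i=1}^n d_i d̃_i. Then: (a) ρ equals the spectral radius of the matrix V = (1/n) d d̃ᵀ; (b) for each s ∈ (0, √ρ) there exists a unique u_n(s) > 0 such that (1/n) Σ_{i=1}^n d_i d̃_i / (s² + d_i d̃_i u_n(s)) = 1; (c) u_n(s) → 1 as s ↓ 0; and (d) setting u_n(s) = 0 for s ≥ √ρ, the function s ↦ u_n(s) is continuous on (0,∞). -/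
open Matrix Finset

namespace SepAux


noncomputable def F (n : ℕ) (c : Fin n → ℝ) (s u : ℝ) : ℝ :=
  (n : ℝ)⁻¹ * ∑ i, c i / (s ^ 2 + c i * u)

variable {n : ℕ}

lemma denom_pos {c : Fin n → ℝ} (hc : ∀ i, 0 < c i) {s u : ℝ} (hs : 0 < s) (hu : 0 ≤ u)
    (i : Fin n) : 0 < s ^ 2 + c i * u :=
  add_pos_of_pos_of_nonneg (pow_pos hs 2) (mul_nonneg (hc i).le hu)

lemma anti (hn : 1 ≤ n) {c : Fin n → ℝ} (hc : ∀ i, 0 < c i) {s u v : ℝ}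
    (hs : 0 < s) (hu : 0 ≤ u) (huv : u < v) : F n c s v < F n c s u := by
  haveI : Nonempty (Fin n) := ⟨⟨0, hn⟩⟩
  have hninv : (0:ℝ) < (n:ℝ)⁻¹ := inv_pos.2 (Nat.cast_pos.2 hn)
  refine mul_lt_mul_of_pos_left ?_ hninv
  refine Finset.sum_lt_sum_of_nonempty univ_nonempty (fun i _ => ?_)
  refine div_lt_div_of_pos_left (hc i) (denom_pos hc hs hu i) ?_
  have := hc i
  nlinarith

lemma lt_inv (hn : 1 ≤ n) {c : Fin n → ℝ} (hc : ∀ i, 0 < c i) {s w : ℝ}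
    (hs : 0 < s) (hw : 0 < w) : F n c s w < 1 / w := by
  haveI : Nonempty (Fin n) := ⟨⟨0, hn⟩⟩
  have hn0 : (n:ℝ) ≠ 0 := Nat.cast_ne_zero.2 (by omega)
  have h1 : ∑ i, c i / (s ^ 2 + c i * w) < ∑ _i : Fin n, 1 / w := by
    refine Finset.sum_lt_sum_of_nonempty univ_nonempty (fun i _ => ?_)
    have h2 : c i / (s ^ 2 + c i * w) < c i / (c i * w) := by
      refine div_lt_div_of_pos_left (hc i) (mul_pos (hc i) hw) ?_
      nlinarith [pow_pos hs 2]
    have h3 : c i / (c i * w) = 1 / w := by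
      rw [mul_comm, div_eq_div_iff (mul_pos hw (hc i)).ne' hw.ne']
      ring
    linarith [h2, h3.le]
  have : F n c s w < (n:ℝ)⁻¹ * ∑ _i : Fin n, 1 / w := by
    exact mul_lt_mul_of_pos_left h1 (inv_pos.2 (Nat.cast_pos.2 hn))
  calc F n c s w < (n:ℝ)⁻¹ * ∑ _i : Fin n, 1 / w := this
    _ = 1 / w := by
        simp [Finset.sum_const, Finset.card_univ]
        field_simp

lemma at_zero {c : Fin n → ℝ} {s : ℝ} (hs : s ≠ 0) :
    F n c s 0 = ((n:ℝ)⁻¹ * ∑ i, c i) / s ^ 2 := by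
  simp only [F, mul_zero, add_zero]
  rw [mul_div_assoc, Finset.sum_div]

lemma cont_s {c : Fin n → ℝ} (hc : ∀ i, 0 < c i) {w : ℝ} (hw : 0 < w) :
    Continuous fun s => F n c s w := by
  refine continuous_const.mul (continuous_finset_sum _ (fun i _ => ?_))
  exact continuous_const.div (by fun_prop)
    (fun s => ne_of_gt (add_pos_of_nonneg_of_pos (sq_nonneg s) (mul_pos (hc i) hw)))

lemma exists_root (hn : 1 ≤ n) {c : Fin n → ℝ} (hc : ∀ i, 0 < c i) {s : ℝ}
    (hs : 0 < s) (hslt : s ^ 2 < (n:ℝ)⁻¹ * ∑ i, c i) :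
    ∃ u ∈ Set.Ioo (0:ℝ) 1, F n c s u = 1 := by
  have hcont : ContinuousOn (fun u => F n c s u) (Set.Icc 0 1) := by
    refine continuousOn_const.mul (?_)
    refine continuousOn_finset_sum _ (fun i _ => ?_)
    refine ContinuousOn.div continuousOn_const (by fun_prop) (fun u hu => ?_)
    exact ne_of_gt (denom_pos hc hs hu.1 i)
  have h0 : 1 < F n c s 0 := by
    rw [at_zero hs.ne']
    exact (one_lt_div (pow_pos hs 2)).2 hslt
  have h1 : F n c s 1 < 1 := by
    have := lt_inv hn hc hs one_pos
    simpa using this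
  have := intermediate_value_Ioo' (le_of_lt one_pos) hcont (Set.mem_Ioo.2 ⟨h1, h0⟩)
  obtain ⟨u, hu, hfu⟩ := this
  exact ⟨u, hu, hfu⟩



lemma specRad_eq (n : ℕ) (hn : 1 ≤ n) (d dt : Fin n → ℝ)
    (hd : ∀ i, 0 < d i) (hdt : ∀ i, 0 < dt i)
    (ρ : ℝ) (hρ : ρ = (n : ℝ)⁻¹ * ∑ i, d i * dt i)
    (hρpos : 0 < ρ) :
    ρ = specRad ((n : ℝ)⁻¹ • Matrix.vecMulVec d dt) := by
  haveI : Nonempty (Fin n) := ⟨⟨0, hn⟩⟩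
  set M : Matrix (Fin n) (Fin n) ℂ :=
    (((n : ℝ)⁻¹ • Matrix.vecMulVec d dt).map (fun x : ℝ => (x : ℂ))) with hM
  have hMapp : ∀ i j, M i j = ((n:ℂ)⁻¹ * ((d i : ℂ) * (dt j : ℂ))) := by
    intro i j
    simp [hM, Matrix.map_apply, Matrix.smul_apply, Matrix.vecMulVec_apply]
  set S : Set ℝ := {r : ℝ | ∃ μ : ℂ, r = ‖μ‖ ∧
    Module.End.HasEigenvalue (Matrix.toLin' M) μ} with hS
  -- membership
  have hmem : ρ ∈ S := by
    refine ⟨(ρ : ℂ), by rw [Complex.norm_of_nonneg hρpos.le], ?_⟩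
    refine Module.End.hasEigenvalue_of_hasEigenvector (x := fun i => (d i : ℂ)) ⟨?_, ?_⟩
    · rw [Module.End.mem_eigenspace_iff, Matrix.toLin'_apply]
      funext i
      show ∑ j, M i j * (d j : ℂ) = (ρ : ℂ) * (d i : ℂ)
      calc ∑ j, M i j * (d j : ℂ)
          = ∑ j, ((n:ℂ)⁻¹ * ((d j : ℂ) * (dt j : ℂ))) * (d i : ℂ) := by
            refine Finset.sum_congr rfl (fun j _ => ?_)
            rw [hMapp]; ring
        _ = ((n:ℂ)⁻¹ * ∑ j, (d j : ℂ) * (dt j : ℂ)) * (d i : ℂ) := by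
            rw [← Finset.sum_mul, Finset.mul_sum]
        _ = (ρ : ℂ) * (d i : ℂ) := by rw [hρ]; push_cast; ring
    · intro h
      have := congrFun h ⟨0, hn⟩
      simp only [Pi.zero_apply, Complex.ofReal_eq_zero] at this
      exact (hd ⟨0, hn⟩).ne' this
  -- upper bound
  have hub : ∀ r ∈ S, r ≤ ρ := by
    rintro r ⟨μ, hr, hμ⟩
    obtain ⟨v, hv1, hv2⟩ := hμ.exists_hasEigenvector
    rw [Module.End.mem_eigenspace_iff, Matrix.toLin'_apply] at hv1
    set T : ℂ := ∑ j, (dt j : ℂ) * v j with hT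
    clear_value T
    have key : ∀ i, (n:ℂ)⁻¹ * (d i : ℂ) * T = μ * v i := by
      intro i
      have := congrFun hv1 i
      show _ = _
      calc (n:ℂ)⁻¹ * (d i : ℂ) * T = ∑ j, M i j * v j := by
            rw [hT, Finset.mul_sum]
            refine Finset.sum_congr rfl (fun j _ => ?_)
            rw [hMapp]; ring
        _ = μ * v i := this
    have hsum : (ρ : ℂ) * T = μ * T := by
      have : ∑ i, (dt i : ℂ) * ((n:ℂ)⁻¹ * (d i : ℂ) * T) = ∑ i, (dt i : ℂ) * (μ * v i) := by
        refine Finset.sum_congr rfl (fun i _ => by rw [key])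
      calc (ρ : ℂ) * T = ∑ i, (dt i : ℂ) * ((n:ℂ)⁻¹ * (d i : ℂ) * T) := by
            rw [hρ]; push_cast
            rw [Finset.mul_sum, Finset.sum_mul]
            refine Finset.sum_congr rfl (fun i _ => by ring)
        _ = ∑ i, (dt i : ℂ) * (μ * v i) := this
        _ = μ * T := by
            rw [hT, Finset.mul_sum]
            refine Finset.sum_congr rfl (fun i _ => by ring)
    by_cases hT0 : T = 0
    · have hμ0 : μ = 0 := by
        obtain ⟨i, hi⟩ := Function.ne_iff.1 hv2
        have := key i
        rw [hT0, mul_zero] at this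
        have : μ * v i = 0 := this.symm
        rcases mul_eq_zero.1 this with h | h
        · exact h
        · exact absurd h hi
      rw [hr, hμ0]
      simpa using hρpos.le
    · have hμρ : μ = (ρ : ℂ) := (mul_right_cancel₀ hT0 hsum.symm)
      rw [hr, hμρ, Complex.norm_of_nonneg hρpos.le]
  refine le_antisymm (le_csSup ⟨ρ, hub⟩ hmem) (csSup_le ⟨ρ, hmem⟩ hub)

end SepAux

/-- For a separable variance profile `V = (1/n) d d̃ᵀ` with positive `d, d̃`:
the spectral radius of `V` is `ρ = (1/n) ∑ dᵢ d̃ᵢ`; for each `s ∈ (0, √ρ)` the scalar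
master equation `(1/n) ∑ᵢ dᵢd̃ᵢ/(s² + dᵢd̃ᵢ u) = 1` has a unique positive solution
`u_n(s)`; `u_n(s) → 1` as `s ↓ 0`; and, extended by `0` for `s ≥ √ρ`, the function
`u_n` is continuous on `(0, ∞)`. -/
theorem separable_profile_scalar_equation
    (n : ℕ) (hn : 1 ≤ n) (d dt : Fin n → ℝ)
    (hd : ∀ i, 0 < d i) (hdt : ∀ i, 0 < dt i)
    (ρ : ℝ) (hρ : ρ = (n : ℝ)⁻¹ * ∑ i, d i * dt i) :
    ρ = specRad ((n : ℝ)⁻¹ • Matrix.vecMulVec d dt) ∧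
    ∃ u : ℝ → ℝ,
      (∀ s ∈ Set.Ioo 0 (Real.sqrt ρ),
        0 < u s ∧
        (n : ℝ)⁻¹ * ∑ i, d i * dt i / (s ^ 2 + d i * dt i * u s) = 1 ∧
        ∀ v : ℝ, 0 < v →
          (n : ℝ)⁻¹ * ∑ i, d i * dt i / (s ^ 2 + d i * dt i * v) = 1 → v = u s) ∧
      (∀ s, Real.sqrt ρ ≤ s → u s = 0) ∧
      Filter.Tendsto u (nhdsWithin 0 (Set.Ioi 0)) (nhds 1) ∧
      ContinuousOn u (Set.Ioi 0) := by
  classical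
  haveI : Nonempty (Fin n) := ⟨⟨0, hn⟩⟩
  set c : Fin n → ℝ := fun i => d i * dt i with hc_def
  have hc : ∀ i, 0 < c i := fun i => mul_pos (hd i) (hdt i)
  have hρc : ρ = (n:ℝ)⁻¹ * ∑ i, c i := hρ
  have hρpos : 0 < ρ := by
    rw [hρc]
    exact mul_pos (inv_pos.2 (Nat.cast_pos.2 hn)) (Finset.sum_pos (fun i _ => hc i) univ_nonempty)
  have hsqrtpos : 0 < Real.sqrt ρ := Real.sqrt_pos.2 hρpos
  refine ⟨SepAux.specRad_eq n hn d dt hd hdt ρ hρ hρpos, ?_⟩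
  have hsq : ∀ s ∈ Set.Ioo (0:ℝ) (Real.sqrt ρ), s ^ 2 < (n:ℝ)⁻¹ * ∑ i, c i := by
    intro s hs
    rw [← hρc]
    exact (Real.lt_sqrt hs.1.le).1 hs.2
  have E : ∀ s ∈ Set.Ioo (0:ℝ) (Real.sqrt ρ), ∃ w ∈ Set.Ioo (0:ℝ) 1, SepAux.F n c s w = 1 :=
    fun s hs => SepAux.exists_root hn hc hs.1 (hsq s hs)
  set u : ℝ → ℝ :=
    fun s => if h : s ∈ Set.Ioo (0:ℝ) (Real.sqrt ρ) then (E s h).choose else 0 with hu_def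
  have huIoo : ∀ s (hs : s ∈ Set.Ioo (0:ℝ) (Real.sqrt ρ)),
      u s ∈ Set.Ioo (0:ℝ) 1 ∧ SepAux.F n c s (u s) = 1 := by
    intro s hs
    have h1 := (E s hs).choose_spec
    have h2 : u s = (E s hs).choose := by simp only [hu_def, dif_pos hs]
    rw [h2]
    exact ⟨h1.1, h1.2⟩
  have hzero : ∀ s, Real.sqrt ρ ≤ s → u s = 0 := by
    intro s hs
    have h1 : s ∉ Set.Ioo (0:ℝ) (Real.sqrt ρ) := fun h => absurd h.2 (not_lt.2 hs)
    simp only [hu_def, dif_neg h1]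
  have hnonneg : ∀ s, 0 ≤ u s := by
    intro s
    by_cases h : s ∈ Set.Ioo (0:ℝ) (Real.sqrt ρ)
    · exact ((huIoo s h).1.1).le
    · simp only [hu_def, dif_neg h]; exact le_refl 0
  have hlt : ∀ s (hs : s ∈ Set.Ioo (0:ℝ) (Real.sqrt ρ)), ∀ a, 0 ≤ a →
      1 < SepAux.F n c s a → a < u s := by
    intro s hs a ha hFa
    by_contra h
    push_neg at h
    rcases eq_or_lt_of_le h with h' | h'
    · rw [← h', (huIoo s hs).2] at hFa; exact lt_irrefl 1 hFa
    · have h2 := SepAux.anti hn hc hs.1 (hnonneg s) h'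
      rw [(huIoo s hs).2] at h2
      linarith
  have hgt : ∀ s (hs : s ∈ Set.Ioo (0:ℝ) (Real.sqrt ρ)), ∀ b, 0 ≤ b →
      SepAux.F n c s b < 1 → u s < b := by
    intro s hs b hb hFb
    by_contra h
    push_neg at h
    rcases eq_or_lt_of_le h with h' | h'
    · rw [h', (huIoo s hs).2] at hFb; exact lt_irrefl 1 hFb
    · have h2 := SepAux.anti hn hc hs.1 hb h'
      rw [(huIoo s hs).2] at h2
      linarith
  have hsmall : ∀ δ : ℝ, 0 < δ → ∀ᶠ s in nhdsWithin 0 (Set.Ioi 0), s ∈ Set.Ioo (0:ℝ) δ := by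
    intro δ hδ
    have h1 : ∀ᶠ s in nhdsWithin (0:ℝ) (Set.Ioi 0), s < δ :=
      Filter.Eventually.filter_mono nhdsWithin_le_nhds
        (Filter.eventually_of_mem (Iio_mem_nhds hδ) fun x hx => hx)
    have h2 : ∀ᶠ s in nhdsWithin (0:ℝ) (Set.Ioi 0), (0:ℝ) < s := eventually_mem_nhdsWithin
    filter_upwards [h1, h2] with s hs1 hs2
    exact ⟨hs2, hs1⟩
  refine ⟨u, ?_, hzero, ?_, ?_⟩
  · intro s hs
    obtain ⟨hmem, hF⟩ := huIoo s hs
    refine ⟨hmem.1, hF, ?_⟩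
    intro v hv hFv
    have hFv' : SepAux.F n c s v = 1 := hFv
    rcases lt_trichotomy v (u s) with h | h | h
    · have h2 := SepAux.anti hn hc hs.1 hv.le h
      rw [hF, hFv'] at h2; exact absurd h2 (lt_irrefl 1)
    · exact h
    · have h2 := SepAux.anti hn hc hs.1 hmem.1.le h
      rw [hF, hFv'] at h2; exact absurd h2 (lt_irrefl 1)
  · -- tendsto at 0+
    refine tendsto_order.2 ⟨?_, ?_⟩
    · intro a ha
      rcases le_or_gt a 0 with ha0 | ha0
      · filter_upwards [hsmall (Real.sqrt ρ) hsqrtpos] with s hs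
        exact lt_of_le_of_lt ha0 (huIoo s hs).1.1
      · obtain ⟨i₀, -, hmin⟩ := Finset.exists_min_image univ c univ_nonempty
        set m : ℝ := c i₀ with hm_def
        have hm : 0 < m := hc i₀
        have hma : 0 < m * (1 - a) := mul_pos hm (by linarith)
        set δ : ℝ := min (Real.sqrt ρ) (Real.sqrt (m * (1 - a))) with hδ_def
        have hδ : 0 < δ := lt_min hsqrtpos (Real.sqrt_pos.2 hma)
        filter_upwards [hsmall δ hδ] with s hs
        have hsρ : s ∈ Set.Ioo (0:ℝ) (Real.sqrt ρ) :=
          ⟨hs.1, lt_of_lt_of_le hs.2 (min_le_left _ _)⟩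
        have hs2 : s ^ 2 < m * (1 - a) := by
          have h3 : s < Real.sqrt (m * (1 - a)) := lt_of_lt_of_le hs.2 (min_le_right _ _)
          exact (Real.lt_sqrt hs.1.le).1 h3
        refine hlt s hsρ a ha0.le ?_
        have hterm : ∀ i : Fin n, 1 < c i / (s ^ 2 + c i * a) := by
          intro i
          rw [one_lt_div (SepAux.denom_pos hc hs.1 ha0.le i)]
          have h4 : m ≤ c i := hmin i (mem_univ i)
          nlinarith
        have hn0 : (n:ℝ) ≠ 0 := Nat.cast_ne_zero.2 (by omega)
        calc (1:ℝ) = (n:ℝ)⁻¹ * ∑ _i : Fin n, (1:ℝ) := by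
              simp [Finset.sum_const, Finset.card_univ]
              exact (inv_mul_cancel₀ hn0).symm
          _ < SepAux.F n c s a :=
              mul_lt_mul_of_pos_left
                (Finset.sum_lt_sum_of_nonempty univ_nonempty (fun i _ => hterm i))
                (inv_pos.2 (Nat.cast_pos.2 hn))
    · intro b hb
      filter_upwards [hsmall (Real.sqrt ρ) hsqrtpos] with s hs
      exact lt_trans (huIoo s hs).1.2 hb
  · -- continuity
    intro s₀ hs₀
    rcases lt_trichotomy s₀ (Real.sqrt ρ) with hcase | hcase | hcase
    · have hmemIoo : s₀ ∈ Set.Ioo (0:ℝ) (Real.sqrt ρ) := ⟨hs₀, hcase⟩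
      apply ContinuousAt.continuousWithinAt
      obtain ⟨hu0mem, hF0⟩ := huIoo s₀ hmemIoo
      have hevIoo : ∀ᶠ s in nhds s₀, s ∈ Set.Ioo (0:ℝ) (Real.sqrt ρ) :=
        isOpen_Ioo.eventually_mem hmemIoo
      rw [ContinuousAt]
      refine tendsto_order.2 ⟨?_, ?_⟩
      · intro a ha
        rcases le_or_gt a 0 with ha0 | ha0
        · filter_upwards [hevIoo] with s hs
          exact lt_of_le_of_lt ha0 (huIoo s hs).1.1
        · have hFa : 1 < SepAux.F n c s₀ a := by
            have h2 := SepAux.anti hn hc hmemIoo.1 ha0.le ha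
            rw [hF0] at h2
            exact h2
          have hev2 := (SepAux.cont_s hc ha0).continuousAt.eventually_const_lt hFa
          filter_upwards [hevIoo, hev2] with s h1 h2
          exact hlt s h1 a ha0.le h2
      · intro b hb
        have hb0 : 0 < b := hu0mem.1.trans hb
        have hFb : SepAux.F n c s₀ b < 1 := by
          have h2 := SepAux.anti hn hc hmemIoo.1 hu0mem.1.le hb
          rw [hF0] at h2
          exact h2
        have hev2 := (SepAux.cont_s hc hb0).continuousAt.eventually_lt_const hFb
        filter_upwards [hevIoo, hev2] with s h1 h2
        exact hgt s h1 b hb0.le h2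
    · have hs₀pos : (0:ℝ) < s₀ := hs₀
      have hu0 : u s₀ = 0 := hzero s₀ hcase.ge
      rw [ContinuousWithinAt, hu0]
      refine tendsto_order.2 ⟨?_, ?_⟩
      · intro a ha
        exact Filter.Eventually.of_forall (fun s => lt_of_lt_of_le ha (hnonneg s))
      · intro b hb
        have hFb : SepAux.F n c s₀ b < 1 := by
          have h1 : SepAux.F n c s₀ b < SepAux.F n c s₀ 0 :=
            SepAux.anti hn hc hs₀pos le_rfl hb
          have h2 : SepAux.F n c s₀ 0 = 1 := by
            rw [SepAux.at_zero hs₀pos.ne', ← hρc, hcase, Real.sq_sqrt hρpos.le,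
              div_self hρpos.ne']
          linarith [h1, h2.le]
        have hev2 : ∀ᶠ s in nhdsWithin s₀ (Set.Ioi 0), SepAux.F n c s b < 1 :=
          ((SepAux.cont_s hc hb).continuousAt.eventually_lt_const hFb).filter_mono
            nhdsWithin_le_nhds
        filter_upwards [hev2] with s h2
        by_cases hsIoo : s ∈ Set.Ioo (0:ℝ) (Real.sqrt ρ)
        · exact hgt s hsIoo b hb.le h2
        · have h3 : u s = 0 := by simp only [hu_def, dif_neg hsIoo]
          rw [h3]; exact hb
    · have hu0 : u s₀ = 0 := hzero s₀ hcase.le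
      apply ContinuousAt.continuousWithinAt
      have hev : ∀ᶠ s in nhds s₀, u s = 0 := by
        filter_upwards [Ioi_mem_nhds hcase] with s hs
        exact hzero s hs.le
      rw [ContinuousAt, hu0]
      exact Filter.Tendsto.congr'
        (by filter_upwards [hev] with s hs; exact hs.symm) tendsto_const_nhds
end

section
/- Let n ≥ 1, let d, d̃ ∈ (0,∞)^n, set ρ = (1/n) Σ_i d_i d̃_i, and for s ∈ (0, √ρ) let u_n(s) > 0 be the unique positive solution of (1/n) Σ_i d_i d̃_i/(s² + d_i d̃_i u_n(s)) = 1. Then u_n is continuously differentiable on (0, √ρ) with u_n'(s) = −2s · (Σ_i d_i d̃_i/(s² + d_i d̃_i u_n(s))²) / (Σ_i d_i² d̃_i²/(s² + d_i d̃_i u_n(s))²), and consequently lim_{s↓0} ( −u_n'(s)/(2πs) ) = (1/(nπ)) Σ_{i=1}^n 1/(d_i d̃_i). -/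
open Finset Real

set_option maxHeartbeats 1600000 in
/-- For a separable variance profile with positive `d, d̃` and
`ρ = (1/n) ∑ dᵢ d̃ᵢ`, the solution `u_n` of the scalar master equation is
continuously differentiable on `(0, √ρ)` with
`u_n'(s) = −2s (∑ᵢ dᵢd̃ᵢ/(s²+dᵢd̃ᵢu)²)/(∑ᵢ dᵢ²d̃ᵢ²/(s²+dᵢd̃ᵢu)²)`, and consequently
`lim_{s↓0} (−u_n'(s)/(2πs)) = (1/(nπ)) ∑ᵢ 1/(dᵢd̃ᵢ)` (the value of the density of
`μ_n` at zero). -/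
theorem separable_profile_derivative_and_density_at_zero
    (n : ℕ) (hn : 1 ≤ n) (d dt : Fin n → ℝ)
    (hd : ∀ i, 0 < d i) (hdt : ∀ i, 0 < dt i)
    (ρ : ℝ) (hρ : ρ = (n : ℝ)⁻¹ * ∑ i, d i * dt i)
    (u : ℝ → ℝ)
    (hu : ∀ s ∈ Set.Ioo 0 (Real.sqrt ρ),
      0 < u s ∧ (n : ℝ)⁻¹ * ∑ i, d i * dt i / (s ^ 2 + d i * dt i * u s) = 1) :
    (∀ s ∈ Set.Ioo 0 (Real.sqrt ρ),
      HasDerivAt u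
        (-2 * s * (∑ i, d i * dt i / (s ^ 2 + d i * dt i * u s) ^ 2) /
          (∑ i, (d i) ^ 2 * (dt i) ^ 2 / (s ^ 2 + d i * dt i * u s) ^ 2)) s) ∧
    ContinuousOn (deriv u) (Set.Ioo 0 (Real.sqrt ρ)) ∧
    Filter.Tendsto (fun s => -(deriv u s) / (2 * Real.pi * s))
      (nhdsWithin 0 (Set.Ioi 0))
      (nhds ((n * Real.pi)⁻¹ * ∑ i, (d i * dt i)⁻¹)) := by
  have hne : (Finset.univ : Finset (Fin n)).Nonempty := ⟨⟨0, hn⟩, Finset.mem_univ _⟩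
  have hn0 : (0:ℝ) < n := by exact_mod_cast hn
  set a : Fin n → ℝ := fun i => d i * dt i with ha_def
  have ha : ∀ i, 0 < a i := fun i => mul_pos (hd i) (hdt i)
  have hρpos : 0 < ρ := by
    rw [hρ]
    exact mul_pos (inv_pos.mpr hn0) (Finset.sum_pos (fun i _ => ha i) hne)
  have hsρ : 0 < Real.sqrt ρ := Real.sqrt_pos.mpr hρpos
  -- positivity of denominators
  have hP : ∀ (s v : ℝ), 0 < v → ∀ i, 0 < s ^ 2 + a i * v :=
    fun s v hv i => add_pos_of_nonneg_of_pos (sq_nonneg s) (mul_pos (ha i) hv)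
  -- the master equation in sum form
  have hEq : ∀ s ∈ Set.Ioo 0 (Real.sqrt ρ),
      ∑ i, a i / (s ^ 2 + a i * u s) = (n : ℝ) := by
    intro s hs
    have h := (hu s hs).2
    field_simp at h
    linarith [h]
  -- strict antitonicity in the second variable
  have hanti : ∀ (s v w : ℝ), 0 < v → v < w →
      ∑ i, a i / (s ^ 2 + a i * w) < ∑ i, a i / (s ^ 2 + a i * v) := by
    intro s v w hv hvw
    refine Finset.sum_lt_sum_of_nonempty hne (fun i _ => ?_)
    refine div_lt_div_of_pos_left (ha i) (hP s v hv i) ?_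
    nlinarith [ha i]
  have hanti' : ∀ (s v w : ℝ), 0 < v → v ≤ w →
      ∑ i, a i / (s ^ 2 + a i * w) ≤ ∑ i, a i / (s ^ 2 + a i * v) := by
    intro s v w hv hvw
    rcases eq_or_lt_of_le hvw with rfl | h
    · exact le_rfl
    · exact (hanti s v w hv h).le
  -- continuity of s ↦ F(s, v) for fixed v > 0
  have hFcont : ∀ (v : ℝ), 0 < v →
      Continuous (fun s : ℝ => ∑ i, a i / (s ^ 2 + a i * v)) := by
    intro v hv
    refine continuous_finset_sum _ (fun i _ => ?_)
    exact continuous_const.div ((continuous_pow 2).add continuous_const)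
      (fun s => (hP s v hv i).ne')
  -- continuity of u at every point of the interval
  have hcont : ∀ s₀ ∈ Set.Ioo 0 (Real.sqrt ρ),
      Filter.Tendsto u (nhds s₀) (nhds (u s₀)) := by
    intro s₀ hs₀
    obtain ⟨hu0, -⟩ := hu s₀ hs₀
    rw [Metric.tendsto_nhds]
    intro ε hε
    set ε' := min (ε / 2) (u s₀ / 2) with hε'
    have hε'pos : 0 < ε' := lt_min (by linarith) (by linarith)
    have hε'lt : ε' < ε := lt_of_le_of_lt (min_le_left _ _) (by linarith)
    have hlow : 0 < u s₀ - ε' := by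
      have := min_le_right (ε / 2) (u s₀ / 2)
      simp only [← hε'] at this ⊢
      linarith
    have h1 : ∑ i, a i / (s₀ ^ 2 + a i * (u s₀ + ε')) < (n : ℝ) := by
      rw [← hEq s₀ hs₀]
      exact hanti s₀ (u s₀) (u s₀ + ε') hu0 (by linarith)
    have h2 : (n : ℝ) < ∑ i, a i / (s₀ ^ 2 + a i * (u s₀ - ε')) := by
      rw [← hEq s₀ hs₀]
      exact hanti s₀ (u s₀ - ε') (u s₀) hlow (by linarith)
    have e1 : ∀ᶠ s in nhds s₀, ∑ i, a i / (s ^ 2 + a i * (u s₀ + ε')) < (n : ℝ) :=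
      (((hFcont (u s₀ + ε') (by linarith)).tendsto s₀)).eventually_lt_const h1
    have e2 : ∀ᶠ s in nhds s₀, (n : ℝ) < ∑ i, a i / (s ^ 2 + a i * (u s₀ - ε')) :=
      (((hFcont (u s₀ - ε') hlow).tendsto s₀)).eventually_const_lt h2
    have e3 : ∀ᶠ s in nhds s₀, s ∈ Set.Ioo 0 (Real.sqrt ρ) :=
      isOpen_Ioo.eventually_mem hs₀
    filter_upwards [e1, e2, e3] with s hs1 hs2 hsIoo
    obtain ⟨hus, -⟩ := hu s hsIoo
    have hEqs := hEq s hsIoo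
    have hub : u s < u s₀ + ε' := by
      by_contra hcon
      push_neg at hcon
      have := hanti' s (u s₀ + ε') (u s) (by linarith) hcon
      rw [hEqs] at this
      linarith
    have hlb : u s₀ - ε' < u s := by
      by_contra hcon
      push_neg at hcon
      have := hanti' s (u s) (u s₀ - ε') hus hcon
      rw [hEqs] at this
      linarith
    rw [Real.dist_eq, abs_lt]
    constructor <;> linarith
  -- the derivative at every point of the interval
  have hderiv : ∀ s₀ ∈ Set.Ioo 0 (Real.sqrt ρ),
      HasDerivAt u
        (-2 * s₀ * (∑ i, a i / (s₀ ^ 2 + a i * u s₀) ^ 2) /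
          (∑ i, a i * a i / (s₀ ^ 2 + a i * u s₀) ^ 2)) s₀ := by
    intro s₀ hs₀
    obtain ⟨hu0, -⟩ := hu s₀ hs₀
    have hQ : ∀ i, 0 < s₀ ^ 2 + a i * u s₀ := hP s₀ (u s₀) hu0
    rw [hasDerivAt_iff_tendsto_slope]
    set A : ℝ → ℝ := fun s => ∑ i, a i /
      ((s ^ 2 + a i * u s) * (s₀ ^ 2 + a i * u s₀)) with hA
    set B : ℝ → ℝ := fun s => ∑ i, a i * a i /
      ((s ^ 2 + a i * u s) * (s₀ ^ 2 + a i * u s₀)) with hB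
    have hAlim : Filter.Tendsto A (nhds s₀)
        (nhds (∑ i, a i / (s₀ ^ 2 + a i * u s₀) ^ 2)) := by
      have : ∀ i : Fin n, Filter.Tendsto
          (fun s => a i / ((s ^ 2 + a i * u s) * (s₀ ^ 2 + a i * u s₀))) (nhds s₀)
          (nhds (a i / (s₀ ^ 2 + a i * u s₀) ^ 2)) := by
        intro i
        have hden : Filter.Tendsto (fun s => (s ^ 2 + a i * u s) * (s₀ ^ 2 + a i * u s₀))
            (nhds s₀) (nhds ((s₀ ^ 2 + a i * u s₀) * (s₀ ^ 2 + a i * u s₀))) :=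
          ((((continuous_pow 2).tendsto s₀).add
            (tendsto_const_nhds.mul (hcont s₀ hs₀)))).mul tendsto_const_nhds
        have := (tendsto_const_nhds : Filter.Tendsto (fun _ : ℝ => a i) (nhds s₀)
          (nhds (a i))).div hden (mul_pos (hQ i) (hQ i)).ne'
        simp only [sq] at this ⊢
        exact this
      exact tendsto_finset_sum _ (fun i _ => this i)
    have hBlim : Filter.Tendsto B (nhds s₀)
        (nhds (∑ i, a i * a i / (s₀ ^ 2 + a i * u s₀) ^ 2)) := by
      have : ∀ i : Fin n, Filter.Tendsto
          (fun s => a i * a i / ((s ^ 2 + a i * u s) * (s₀ ^ 2 + a i * u s₀))) (nhds s₀)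
          (nhds (a i * a i / (s₀ ^ 2 + a i * u s₀) ^ 2)) := by
        intro i
        have hden : Filter.Tendsto (fun s => (s ^ 2 + a i * u s) * (s₀ ^ 2 + a i * u s₀))
            (nhds s₀) (nhds ((s₀ ^ 2 + a i * u s₀) * (s₀ ^ 2 + a i * u s₀))) :=
          ((((continuous_pow 2).tendsto s₀).add
            (tendsto_const_nhds.mul (hcont s₀ hs₀)))).mul tendsto_const_nhds
        have := (tendsto_const_nhds : Filter.Tendsto (fun _ : ℝ => a i * a i) (nhds s₀)
          (nhds (a i * a i))).div hden (mul_pos (hQ i) (hQ i)).ne'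
        simp only [sq] at this ⊢
        exact this
      exact tendsto_finset_sum _ (fun i _ => this i)
    have hB0pos : 0 < ∑ i, a i * a i / (s₀ ^ 2 + a i * u s₀) ^ 2 :=
      Finset.sum_pos (fun i _ => div_pos (mul_pos (ha i) (ha i)) (pow_pos (hQ i) 2)) hne
    have hlim : Filter.Tendsto (fun s => -(s + s₀) * A s / B s) (nhds s₀)
        (nhds (-2 * s₀ * (∑ i, a i / (s₀ ^ 2 + a i * u s₀) ^ 2) /
          (∑ i, a i * a i / (s₀ ^ 2 + a i * u s₀) ^ 2))) := by
      have h1 : Filter.Tendsto (fun s : ℝ => -(s + s₀)) (nhds s₀) (nhds (-(s₀ + s₀))) :=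
        ((continuous_id.add continuous_const).neg).tendsto s₀
      have := (h1.mul hAlim).div hBlim hB0pos.ne'
      have heq : -(s₀ + s₀) = -2 * s₀ := by ring
      rw [heq] at this
      exact this
    refine Filter.Tendsto.congr' ?_ (hlim.mono_left nhdsWithin_le_nhds)
    have e3 : ∀ᶠ s in nhdsWithin s₀ {s₀}ᶜ, s ∈ Set.Ioo 0 (Real.sqrt ρ) :=
      Filter.eventually_iff_exists_mem.mpr
        ⟨Set.Ioo 0 (Real.sqrt ρ), nhdsWithin_le_nhds (isOpen_Ioo.mem_nhds hs₀),
          fun s hs => hs⟩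
    filter_upwards [e3, self_mem_nhdsWithin] with s hsIoo hsne
    have hsne' : s ≠ s₀ := hsne
    obtain ⟨hus, -⟩ := hu s hsIoo
    have hPs : ∀ i, 0 < s ^ 2 + a i * u s := hP s (u s) hus
    -- key algebraic identity
    have key : (u s - u s₀) * B s = (s₀ ^ 2 - s ^ 2) * A s := by
      have h0 : ∑ i, a i / (s ^ 2 + a i * u s)
          - ∑ i, a i / (s₀ ^ 2 + a i * u s₀) = 0 := by
        rw [hEq s hsIoo, hEq s₀ hs₀]; ring
      rw [← Finset.sum_sub_distrib] at h0
      have hterm : ∀ i ∈ Finset.univ, a i / (s ^ 2 + a i * u s)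
          - a i / (s₀ ^ 2 + a i * u s₀)
          = (s₀ ^ 2 - s ^ 2) * (a i / ((s ^ 2 + a i * u s) * (s₀ ^ 2 + a i * u s₀)))
            + (u s₀ - u s) * (a i * a i / ((s ^ 2 + a i * u s) * (s₀ ^ 2 + a i * u s₀))) := by
        intro i _
        have h1 : s ^ 2 + a i * u s ≠ 0 := (hPs i).ne'
        have h2 : s₀ ^ 2 + a i * u s₀ ≠ 0 := (hQ i).ne'
        field_simp
        ring
      rw [Finset.sum_congr rfl hterm, Finset.sum_add_distrib,
        ← Finset.mul_sum, ← Finset.mul_sum] at h0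
      simp only [hA, hB]
      linear_combination (-1 : ℝ) * h0
    have hBpos : 0 < B s :=
      Finset.sum_pos (fun i _ => div_pos (mul_pos (ha i) (ha i))
        (mul_pos (hPs i) (hQ i))) hne
    have hss : s - s₀ ≠ 0 := sub_ne_zero.mpr hsne'
    have husub : u s - u s₀ = (s₀ ^ 2 - s ^ 2) * A s / B s := by
      rw [eq_div_iff hBpos.ne']; exact key
    rw [slope_def_field, husub]
    field_simp
    ring
  -- rewrite the formula in the statement's form
  have hform : ∀ s : ℝ,
      (-2 * s * (∑ i, a i / (s ^ 2 + a i * u s) ^ 2) /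
        (∑ i, a i * a i / (s ^ 2 + a i * u s) ^ 2))
      = (-2 * s * (∑ i, d i * dt i / (s ^ 2 + d i * dt i * u s) ^ 2) /
        (∑ i, (d i) ^ 2 * (dt i) ^ 2 / (s ^ 2 + d i * dt i * u s) ^ 2)) := by
    intro s
    simp only [ha_def]
    congr 1
    refine Finset.sum_congr rfl (fun i _ => ?_)
    ring
  have part1 : ∀ s ∈ Set.Ioo 0 (Real.sqrt ρ),
      HasDerivAt u
        (-2 * s * (∑ i, d i * dt i / (s ^ 2 + d i * dt i * u s) ^ 2) /
          (∑ i, (d i) ^ 2 * (dt i) ^ 2 / (s ^ 2 + d i * dt i * u s) ^ 2)) s := by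
    intro s hs
    have := hderiv s hs
    rwa [hform s] at this
  refine ⟨part1, ?_, ?_⟩
  · -- continuity of the derivative
    have hderiv' : ∀ s ∈ Set.Ioo 0 (Real.sqrt ρ), deriv u s =
        -2 * s * (∑ i, a i / (s ^ 2 + a i * u s) ^ 2) /
          (∑ i, a i * a i / (s ^ 2 + a i * u s) ^ 2) := by
      intro s hs
      rw [(hderiv s hs).deriv]
    have hucont : ContinuousOn u (Set.Ioo 0 (Real.sqrt ρ)) := fun s hs =>
      ContinuousAt.continuousWithinAt (hcont s hs)
    have hXcont : ∀ i : Fin n, ContinuousOn (fun s => s ^ 2 + a i * u s)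
        (Set.Ioo 0 (Real.sqrt ρ)) :=
      fun i => ((continuous_pow 2).continuousOn).add (continuousOn_const.mul hucont)
    have hS1 : ContinuousOn (fun s => ∑ i, a i / (s ^ 2 + a i * u s) ^ 2)
        (Set.Ioo 0 (Real.sqrt ρ)) := by
      refine continuousOn_finset_sum _ (fun i _ => ?_)
      exact continuousOn_const.div ((hXcont i).pow 2)
        (fun s hs => (pow_pos (hP s (u s) (hu s hs).1 i) 2).ne')
    have hS2 : ContinuousOn (fun s => ∑ i, a i * a i / (s ^ 2 + a i * u s) ^ 2)
        (Set.Ioo 0 (Real.sqrt ρ)) := by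
      refine continuousOn_finset_sum _ (fun i _ => ?_)
      exact continuousOn_const.div ((hXcont i).pow 2)
        (fun s hs => (pow_pos (hP s (u s) (hu s hs).1 i) 2).ne')
    have hS2ne : ∀ s ∈ Set.Ioo 0 (Real.sqrt ρ),
        (∑ i, a i * a i / (s ^ 2 + a i * u s) ^ 2) ≠ 0 := by
      intro s hs
      exact (Finset.sum_pos (fun i _ => div_pos (mul_pos (ha i) (ha i))
        (pow_pos (hP s (u s) (hu s hs).1 i) 2)) hne).ne'
    have hg : ContinuousOn (fun s => -2 * s * (∑ i, a i / (s ^ 2 + a i * u s) ^ 2) /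
          (∑ i, a i * a i / (s ^ 2 + a i * u s) ^ 2)) (Set.Ioo 0 (Real.sqrt ρ)) :=
      ((continuousOn_const.mul continuousOn_id).mul hS1).div hS2 hS2ne
    exact ContinuousOn.congr hg hderiv'
  · -- the limit at 0
    have hmemIoo : Set.Ioo (0:ℝ) (Real.sqrt ρ) ∈ nhdsWithin 0 (Set.Ioi 0) :=
      Ioo_mem_nhdsGT_of_mem ⟨le_rfl, hsρ⟩
    set c : ℝ := ∑ i, (a i)⁻¹ with hc
    have hcpos : 0 < c := Finset.sum_pos (fun i _ => inv_pos.mpr (ha i)) hne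
    -- u tends to 1 at 0+
    have hub : ∀ s ∈ Set.Ioo 0 (Real.sqrt ρ), u s ≤ 1 := by
      intro s hs
      obtain ⟨hus, -⟩ := hu s hs
      have hEqs := hEq s hs
      have hspos : 0 < s := hs.1
      have hstep : ∀ i ∈ Finset.univ, a i / (s ^ 2 + a i * u s) < a i / (a i * u s) := by
        intro i _
        refine div_lt_div_of_pos_left (ha i) (mul_pos (ha i) hus) ?_
        nlinarith [sq_nonneg s, hspos]
      have hsum : ∑ i, a i / (s ^ 2 + a i * u s) < ∑ i, a i / (a i * u s) :=
        Finset.sum_lt_sum_of_nonempty hne (fun i hi => hstep i hi)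
      have hcalc : ∑ i : Fin n, a i / (a i * u s) = n * (u s)⁻¹ := by
        rw [Finset.sum_congr rfl (fun i _ => by
          rw [div_mul_eq_div_div, div_self (ha i).ne', one_div])]
        rw [Finset.sum_const, Finset.card_univ, Fintype.card_fin, nsmul_eq_mul]
      rw [hEqs, hcalc] at hsum
      have h2 := mul_lt_mul_of_pos_right hsum hus
      rw [mul_assoc, inv_mul_cancel₀ hus.ne', mul_one] at h2
      nlinarith
    have hlb : ∀ s ∈ Set.Ioo 0 (Real.sqrt ρ), 1 - s ^ 2 * c ≤ u s := by
      intro s hs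
      obtain ⟨hus, -⟩ := hu s hs
      have hEqs := hEq s hs
      have hden : 0 < s ^ 2 * c + u s :=
        add_pos_of_nonneg_of_pos (mul_nonneg (sq_nonneg s) hcpos.le) hus
      have hstep : ∀ i ∈ Finset.univ,
          (1 : ℝ) / (s ^ 2 * c + u s) ≤ a i / (s ^ 2 + a i * u s) := by
        intro i _
        rw [div_le_div_iff₀ hden (hP s (u s) hus i)]
        have h1 : (a i)⁻¹ ≤ c := Finset.single_le_sum
          (fun j (_ : j ∈ Finset.univ) => (inv_pos.mpr (ha j)).le) (Finset.mem_univ i)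
        have h2 : s ^ 2 ≤ a i * (s ^ 2 * c) := by
          have := mul_le_mul_of_nonneg_left h1 (mul_nonneg (ha i).le (sq_nonneg s))
          calc s ^ 2 = a i * (a i)⁻¹ * s ^ 2 := by
                rw [mul_inv_cancel₀ (ha i).ne', one_mul]
            _ ≤ a i * c * s ^ 2 := by nlinarith [sq_nonneg s, ha i]
            _ = a i * (s ^ 2 * c) := by ring
        nlinarith [ha i]
      have hsum : ∑ i : Fin n, (1 : ℝ) / (s ^ 2 * c + u s)
          ≤ ∑ i, a i / (s ^ 2 + a i * u s) := Finset.sum_le_sum hstep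
      rw [hEqs] at hsum
      have hcalc : ∑ i : Fin n, (1 : ℝ) / (s ^ 2 * c + u s)
          = n * (s ^ 2 * c + u s)⁻¹ := by
        rw [Finset.sum_const, Finset.card_univ, Fintype.card_fin, nsmul_eq_mul, one_div]
      rw [hcalc] at hsum
      -- n / (s²c + u) ≤ n ⇒ 1 ≤ s²c + u
      have : (1 : ℝ) ≤ s ^ 2 * c + u s := by
        have h2 := mul_le_mul_of_nonneg_right hsum hden.le
        rw [mul_assoc, inv_mul_cancel₀ hden.ne', mul_one] at h2
        nlinarith
      linarith
    have hu1 : Filter.Tendsto u (nhdsWithin 0 (Set.Ioi 0)) (nhds 1) := by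
      have hlow : Filter.Tendsto (fun s : ℝ => 1 - s ^ 2 * c)
          (nhdsWithin 0 (Set.Ioi 0)) (nhds 1) := by
        have hcts : Continuous (fun s : ℝ => 1 - s ^ 2 * c) :=
          continuous_const.sub ((continuous_pow 2).mul continuous_const)
        have : Filter.Tendsto (fun s : ℝ => 1 - s ^ 2 * c) (nhds 0) (nhds 1) := by
          simpa using hcts.tendsto (0 : ℝ)
        exact this.mono_left nhdsWithin_le_nhds
      refine tendsto_of_tendsto_of_tendsto_of_le_of_le' hlow tendsto_const_nhds ?_ ?_
      · filter_upwards [hmemIoo] with s hs using hlb s hs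
      · filter_upwards [hmemIoo] with s hs using hub s hs
    -- limits of numerator and denominator sums
    have hXlim : ∀ i : Fin n, Filter.Tendsto (fun s => (s ^ 2 + a i * u s) ^ 2)
        (nhdsWithin 0 (Set.Ioi 0)) (nhds ((a i) ^ 2)) := by
      intro i
      have h1 : Filter.Tendsto (fun s : ℝ => s ^ 2 + a i * u s)
          (nhdsWithin 0 (Set.Ioi 0)) (nhds (a i)) := by
        have hsq : Filter.Tendsto (fun s : ℝ => s ^ 2) (nhdsWithin 0 (Set.Ioi 0))
            (nhds 0) := by
          have h := (continuous_pow 2).tendsto (0 : ℝ)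
          rw [zero_pow two_ne_zero] at h
          exact h.mono_left nhdsWithin_le_nhds
        have h2 : Filter.Tendsto (fun s : ℝ => a i * u s) (nhdsWithin 0 (Set.Ioi 0))
            (nhds (a i * 1)) := hu1.const_mul (a i)
        have h3 := hsq.add h2
        rw [zero_add, mul_one] at h3
        exact h3
      have h4 := h1.pow 2
      exact h4
    have hS1lim : Filter.Tendsto (fun s => ∑ i, a i / (s ^ 2 + a i * u s) ^ 2)
        (nhdsWithin 0 (Set.Ioi 0)) (nhds c) := by
      have : Filter.Tendsto (fun s => ∑ i, a i / (s ^ 2 + a i * u s) ^ 2)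
          (nhdsWithin 0 (Set.Ioi 0)) (nhds (∑ i, a i / (a i) ^ 2)) :=
        tendsto_finset_sum _ (fun i _ =>
          (tendsto_const_nhds : Filter.Tendsto (fun _ : ℝ => a i)
            (nhdsWithin 0 (Set.Ioi 0)) (nhds (a i))).div
            (hXlim i) (pow_pos (ha i) 2).ne')
      have heq : ∑ i, a i / (a i) ^ 2 = c := by
        refine Finset.sum_congr rfl (fun i _ => ?_)
        rw [sq]
        rw [div_mul_eq_div_div, div_self (ha i).ne', one_div]
      rwa [heq] at this
    have hS2lim : Filter.Tendsto (fun s => ∑ i, a i * a i / (s ^ 2 + a i * u s) ^ 2)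
        (nhdsWithin 0 (Set.Ioi 0)) (nhds (n : ℝ)) := by
      have : Filter.Tendsto (fun s => ∑ i, a i * a i / (s ^ 2 + a i * u s) ^ 2)
          (nhdsWithin 0 (Set.Ioi 0)) (nhds (∑ i, a i * a i / (a i) ^ 2)) :=
        tendsto_finset_sum _ (fun i _ =>
          (tendsto_const_nhds : Filter.Tendsto (fun _ : ℝ => a i * a i)
            (nhdsWithin 0 (Set.Ioi 0)) (nhds (a i * a i))).div
            (hXlim i) (pow_pos (ha i) 2).ne')
      have heq : ∑ i : Fin n, a i * a i / (a i) ^ 2 = (n : ℝ) := by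
        rw [Finset.sum_congr rfl (fun i _ => by
          rw [sq, div_self (mul_pos (ha i) (ha i)).ne'])]
        rw [Finset.sum_const, Finset.card_univ, Fintype.card_fin, nsmul_eq_mul, mul_one]
      rwa [heq] at this
    have hfinal : Filter.Tendsto
        (fun s => (∑ i, a i / (s ^ 2 + a i * u s) ^ 2) /
          (Real.pi * (∑ i, a i * a i / (s ^ 2 + a i * u s) ^ 2)))
        (nhdsWithin 0 (Set.Ioi 0)) (nhds ((n * Real.pi)⁻¹ * ∑ i, (d i * dt i)⁻¹)) := by
      have := hS1lim.div (Filter.Tendsto.const_mul Real.pi hS2lim)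
        (by positivity : Real.pi * (n : ℝ) ≠ 0)
      have heq : c / (Real.pi * n) = (n * Real.pi)⁻¹ * ∑ i, (d i * dt i)⁻¹ := by
        rw [hc]
        simp only [ha_def]
        rw [div_eq_inv_mul, mul_comm Real.pi (n:ℝ)]
      rwa [heq] at this
    refine Filter.Tendsto.congr' ?_ hfinal
    filter_upwards [hmemIoo, self_mem_nhdsWithin] with s hsIoo hspos
    obtain ⟨hus, -⟩ := hu s hsIoo
    have hs0 : (s : ℝ) ≠ 0 := ne_of_gt hspos
    have hS2pos : 0 < ∑ i, a i * a i / (s ^ 2 + a i * u s) ^ 2 :=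
      Finset.sum_pos (fun i _ => div_pos (mul_pos (ha i) (ha i))
        (pow_pos (hP s (u s) hus i) 2)) hne
    have hds : deriv u s = -2 * s * (∑ i, a i / (s ^ 2 + a i * u s) ^ 2) /
        (∑ i, a i * a i / (s ^ 2 + a i * u s) ^ 2) := (hderiv s hsIoo).deriv
    rw [hds]
    generalize (∑ i, a i / (s ^ 2 + a i * u s) ^ 2) = X
    generalize hY : (∑ i, a i * a i / (s ^ 2 + a i * u s) ^ 2) = Y at hS2pos ⊢
    have hπ : Real.pi ≠ 0 := Real.pi_ne_zero
    field_simp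
end

section
/- Let d, d̃ : [0,1] → [0,∞) be continuous functions with d(x) > 0 and d̃(x) > 0 for all x ∈ (0,1], and set ρ_∞ = ∫_0^1 d(x) d̃(x) dx. Then: (a) for each s ∈ (0, √ρ_∞) there exists a unique u_∞(s) > 0 such that ∫_0^1 d(x) d̃(x) / (s² + d(x) d̃(x) u_∞(s)) dx = 1; (b) setting u_∞(s) = 0 for s ≥ √ρ_∞, the function s ↦ u_∞(s) is continuous on (0,∞); and (c) the limit lim_{s↓0} u_∞(s) exists and equals 1. -/
open MeasureTheory Real Set Filter

namespace SampledSep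

noncomputable def G (f : ℝ → ℝ) (s u : ℝ) : ℝ :=
  ∫ x in Set.Icc (0:ℝ) 1, f x / (s ^ 2 + f x * u)

variable {f : ℝ → ℝ}

lemma integral_pos_of_pos {h : ℝ → ℝ} (hc : ContinuousOn h (Icc 0 1))
    (hnn : ∀ x ∈ Icc (0:ℝ) 1, 0 ≤ h x) (hp : ∀ x ∈ Ioc (0:ℝ) 1, 0 < h x) :
    0 < ∫ x in Icc (0:ℝ) 1, h x := by
  have hint : IntegrableOn h (Icc 0 1) := hc.integrableOn_Icc
  rw [MeasureTheory.setIntegral_pos_iff_support_of_nonneg_ae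
    (by filter_upwards [ae_restrict_mem measurableSet_Icc] with x hx using hnn x hx) hint]
  refine lt_of_lt_of_le ?_ (measure_mono (?_ : Ioc (0:ℝ) 1 ⊆ Function.support h ∩ Icc 0 1))
  · simp [Real.volume_Ioc]
  · intro x hx; exact ⟨(hp x hx).ne', Ioc_subset_Icc_self hx⟩

lemma cont_integrand (hf : ContinuousOn f (Icc 0 1)) (hnn : ∀ x ∈ Icc (0:ℝ) 1, 0 ≤ f x)
    {s u : ℝ} (hs : s ≠ 0) (hu : 0 ≤ u) :
    ContinuousOn (fun x => f x / (s ^ 2 + f x * u)) (Icc 0 1) := by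
  refine hf.div ((continuousOn_const).add (hf.mul continuousOn_const)) ?_
  intro x hx
  have := hnn x hx
  positivity

lemma integrable_integrand (hf : ContinuousOn f (Icc 0 1)) (hnn : ∀ x ∈ Icc (0:ℝ) 1, 0 ≤ f x)
    {s u : ℝ} (hs : s ≠ 0) (hu : 0 ≤ u) :
    IntegrableOn (fun x => f x / (s ^ 2 + f x * u)) (Icc 0 1) :=
  (cont_integrand hf hnn hs hu).integrableOn_Icc

lemma G_strict_anti (hf : ContinuousOn f (Icc 0 1)) (hnn : ∀ x ∈ Icc (0:ℝ) 1, 0 ≤ f x)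
    (hp : ∀ x ∈ Ioc (0:ℝ) 1, 0 < f x)
    {s u v : ℝ} (hs : 0 < s) (hu : 0 ≤ u) (huv : u < v) :
    G f s v < G f s u := by
  have hv : 0 ≤ v := hu.trans huv.le
  have key : 0 < ∫ x in Icc (0:ℝ) 1,
      (f x / (s ^ 2 + f x * u) - f x / (s ^ 2 + f x * v)) := by
    refine integral_pos_of_pos
      ((cont_integrand hf hnn hs.ne' hu).sub (cont_integrand hf hnn hs.ne' hv)) ?_ ?_
    · intro x hx
      rcases eq_or_lt_of_le (hnn x hx) with h0 | h0
      · simp [← h0]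
      · have h1 : (0:ℝ) < s ^ 2 + f x * u := by positivity
        have h2 : s ^ 2 + f x * u ≤ s ^ 2 + f x * v := by nlinarith
        have := div_le_div_of_nonneg_left (le_of_lt h0) h1 h2
        linarith [this]
    · intro x hx
      have h0 : 0 < f x := hp x hx
      have h1 : (0:ℝ) < s ^ 2 + f x * u := by positivity
      have h2 : s ^ 2 + f x * u < s ^ 2 + f x * v := by nlinarith
      have := div_lt_div_of_pos_left h0 h1 h2
      linarith [this]
  rw [integral_sub (integrable_integrand hf hnn hs.ne' hu)
    (integrable_integrand hf hnn hs.ne' hv)] at key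
  unfold G; linarith

lemma G_antitone (hf : ContinuousOn f (Icc 0 1)) (hnn : ∀ x ∈ Icc (0:ℝ) 1, 0 ≤ f x)
    (hp : ∀ x ∈ Ioc (0:ℝ) 1, 0 < f x)
    {s u v : ℝ} (hs : 0 < s) (hu : 0 ≤ u) (huv : u ≤ v) :
    G f s v ≤ G f s u := by
  rcases eq_or_lt_of_le huv with rfl | h
  · exact le_refl _
  · exact (G_strict_anti hf hnn hp hs hu h).le

lemma G_zero (hf : ContinuousOn f (Icc 0 1)) {s : ℝ} (hs : s ≠ 0) :
    G f s 0 = (∫ x in Icc (0:ℝ) 1, f x) / s ^ 2 := by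
  unfold G
  rw [← integral_div]
  simp

lemma G_one_lt (hf : ContinuousOn f (Icc 0 1)) (hnn : ∀ x ∈ Icc (0:ℝ) 1, 0 ≤ f x)
    {s : ℝ} (hs : 0 < s) : G f s 1 < 1 := by
  have key : 0 < ∫ x in Icc (0:ℝ) 1, (1 - f x / (s ^ 2 + f x * 1)) := by
    refine integral_pos_of_pos (continuousOn_const.sub
      (cont_integrand hf hnn hs.ne' zero_le_one)) ?_ ?_
    · intro x hx
      have h0 := hnn x hx
      have h1 : (0:ℝ) < s ^ 2 + f x * 1 := by positivity
      have : f x / (s ^ 2 + f x * 1) ≤ 1 := by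
        rw [div_le_one h1]; nlinarith
      linarith
    · intro x hx
      have h0' : 0 ≤ f x := hnn x (Ioc_subset_Icc_self hx)
      have h1 : (0:ℝ) < s ^ 2 + f x * 1 := by positivity
      have : f x / (s ^ 2 + f x * 1) < 1 := by
        rw [div_lt_one h1]; nlinarith
      linarith
  rw [integral_sub (integrableOn_const (C := (1:ℝ)) (s := Icc (0:ℝ) 1) (μ := volume) (by simp [Real.volume_Icc]))
    (integrable_integrand hf hnn hs.ne' zero_le_one)] at key
  have hone : ∫ (_ : ℝ) in Icc (0:ℝ) 1, (1:ℝ) = 1 := by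
    simp [Real.volume_Icc]
  unfold G
  linarith [key, hone]

end SampledSep

namespace SampledSep2
open SampledSep

variable {f : ℝ → ℝ}

lemma G_cont_u (hf : ContinuousOn f (Set.Icc 0 1)) (hnn : ∀ x ∈ Icc (0:ℝ) 1, 0 ≤ f x)
    {s : ℝ} (hs : 0 < s) : ContinuousOn (fun u => G f s u) (Ici 0) := by
  refine MeasureTheory.continuousOn_of_dominated (bound := fun x => f x / s ^ 2) ?_ ?_ ?_ ?_
  · intro u hu
    exact ((cont_integrand hf hnn hs.ne' hu).aestronglyMeasurable measurableSet_Icc)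
  · intro u hu
    have hu' : (0:ℝ) ≤ u := hu
    filter_upwards [ae_restrict_mem measurableSet_Icc] with x hx
    have h0 := hnn x hx
    have h1 : (0:ℝ) < s ^ 2 + f x * u := by nlinarith [mul_nonneg h0 hu']
    rw [Real.norm_eq_abs, abs_of_nonneg (div_nonneg h0 h1.le)]
    gcongr
    nlinarith [mul_nonneg h0 hu']
  · exact (hf.integrableOn_Icc).div_const _
  · filter_upwards [ae_restrict_mem measurableSet_Icc] with x hx
    have h0 := hnn x hx
    refine continuousOn_const.div (continuousOn_const.add
      (continuousOn_const.mul continuousOn_id)) ?_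
    intro u hu
    have hu' : (0:ℝ) ≤ u := hu
    exact ne_of_gt (by nlinarith [mul_nonneg h0 hu'])

lemma tendsto_G_s (hf : ContinuousOn f (Set.Icc 0 1)) (hnn : ∀ x ∈ Icc (0:ℝ) 1, 0 ≤ f x)
    {c s₀ : ℝ} (hc : 0 ≤ c) (hs₀ : 0 < s₀) :
    Tendsto (fun s => G f s c) (nhds s₀) (nhds (G f s₀ c)) := by
  refine MeasureTheory.tendsto_integral_filter_of_dominated_convergence
    (bound := fun x => f x / (s₀ / 2) ^ 2) ?_ ?_ ?_ ?_
  · filter_upwards [eventually_gt_nhds (show s₀ / 2 < s₀ by linarith)] with s hs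
    exact (cont_integrand hf hnn (show (0:ℝ) < s by nlinarith).ne'
      hc).aestronglyMeasurable measurableSet_Icc
  · filter_upwards [eventually_gt_nhds (show s₀ / 2 < s₀ by linarith)] with s hs
    filter_upwards [ae_restrict_mem measurableSet_Icc] with x hx
    have h0 := hnn x hx
    have hs' : (0:ℝ) < s := lt_trans (by positivity) hs
    have h1 : (0:ℝ) < s ^ 2 + f x * c := by positivity
    rw [Real.norm_eq_abs, abs_of_nonneg (div_nonneg h0 h1.le)]
    gcongr
    nlinarith
  · exact (hf.integrableOn_Icc).div_const _
  · filter_upwards [ae_restrict_mem measurableSet_Icc] with x hx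
    have h0 := hnn x hx
    have hden : (0:ℝ) < s₀ ^ 2 + f x * c := by positivity
    exact (tendsto_const_nhds.div
      (((continuous_pow 2).tendsto s₀).add tendsto_const_nhds) hden.ne')

lemma tendsto_G_zero (hf : ContinuousOn f (Set.Icc 0 1)) (hnn : ∀ x ∈ Icc (0:ℝ) 1, 0 ≤ f x)
    (hp : ∀ x ∈ Ioc (0:ℝ) 1, 0 < f x) {c : ℝ} (hc : 0 < c) :
    Tendsto (fun s => G f s c) (nhdsWithin 0 (Ioi 0)) (nhds (1 / c)) := by
  have hμ : ∀ᵐ x ∂(volume.restrict (Icc (0:ℝ) 1)), x ∈ Ioc (0:ℝ) 1 := by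
    have h0 : ∀ᵐ x ∂(volume : Measure ℝ), x ≠ 0 := by
      refine (MeasureTheory.ae_iff).mpr ?_
      have hset : {x : ℝ | ¬ x ≠ 0} = {0} := by ext y; simp
      rw [hset]
      exact Real.volume_singleton
    filter_upwards [ae_restrict_mem measurableSet_Icc, ae_restrict_of_ae h0] with x hx hx0
    exact ⟨lt_of_le_of_ne hx.1 (Ne.symm hx0), hx.2⟩
  have hconst : (1 / c : ℝ) = ∫ _x in Icc (0:ℝ) 1, (1 / c : ℝ) := by
    simp [Real.volume_Icc]
  rw [hconst]
  refine MeasureTheory.tendsto_integral_filter_of_dominated_convergence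
    (bound := fun _x => 1 / c) ?_ ?_ ?_ ?_
  · filter_upwards [self_mem_nhdsWithin] with s hs
    exact (cont_integrand hf hnn (ne_of_gt hs) hc.le).aestronglyMeasurable measurableSet_Icc
  · filter_upwards [self_mem_nhdsWithin] with s hs
    filter_upwards [ae_restrict_mem measurableSet_Icc] with x hx
    have h0 := hnn x hx
    have hs' : (0:ℝ) < s := hs
    have h1 : (0:ℝ) < s ^ 2 + f x * c := by positivity
    rw [Real.norm_eq_abs, abs_of_nonneg (div_nonneg h0 h1.le)]
    rcases eq_or_lt_of_le h0 with h2 | h2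
    · rw [← h2, zero_div]; positivity
    · have : f x / (s ^ 2 + f x * c) ≤ f x / (f x * c) := by
        apply div_le_div_of_nonneg_left h0 (by positivity)
        nlinarith
      calc f x / (s ^ 2 + f x * c) ≤ f x / (f x * c) := this
        _ = 1 / c := by field_simp
  · exact integrableOn_const (by simp [Real.volume_Icc])
  · filter_upwards [hμ] with x hx
    have h0 : 0 < f x := hp x hx
    have key : Tendsto (fun s : ℝ => f x / (s ^ 2 + f x * c)) (nhds 0)
        (nhds (f x / ((0:ℝ) ^ 2 + f x * c))) := by
      refine tendsto_const_nhds.div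
        (((continuous_pow 2).tendsto 0).add tendsto_const_nhds) ?_
      positivity
    have : f x / ((0:ℝ) ^ 2 + f x * c) = 1 / c := by
      rw [show (0:ℝ) ^ 2 + f x * c = f x * c by ring]
      field_simp
    rw [this] at key
    exact key.mono_left nhdsWithin_le_nhds

end SampledSep2
open SampledSep SampledSep2 in
/-- For a sampled separable variance profile with continuous `d, d̃ : [0,1] → [0,∞)`
that are positive on `(0,1]`, and `ρ_∞ = ∫₀¹ d d̃`: for each `s ∈ (0, √ρ_∞)` the
equation `∫₀¹ d(x)d̃(x)/(s² + d(x)d̃(x) u) dx = 1` has a unique positive solution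
`u_∞(s)`; extended by `0` for `s ≥ √ρ_∞`, the function `u_∞` is continuous on
`(0,∞)`; and `u_∞(s) → 1` as `s ↓ 0`. -/
theorem sampled_separable_scalar_equation
    (d dt : ℝ → ℝ)
    (hdc : ContinuousOn d (Set.Icc 0 1)) (hdtc : ContinuousOn dt (Set.Icc 0 1))
    (hd0 : ∀ x ∈ Set.Icc (0:ℝ) 1, 0 ≤ d x ∧ 0 ≤ dt x)
    (hdpos : ∀ x ∈ Set.Ioc (0:ℝ) 1, 0 < d x ∧ 0 < dt x)
    (ρ : ℝ) (hρ : ρ = ∫ x in Set.Icc (0:ℝ) 1, d x * dt x) :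
    ∃ u : ℝ → ℝ,
      (∀ s ∈ Set.Ioo 0 (Real.sqrt ρ),
        0 < u s ∧
        (∫ x in Set.Icc (0:ℝ) 1, d x * dt x / (s ^ 2 + d x * dt x * u s)) = 1 ∧
        ∀ v : ℝ, 0 < v →
          (∫ x in Set.Icc (0:ℝ) 1, d x * dt x / (s ^ 2 + d x * dt x * v)) = 1 →
          v = u s) ∧
      (∀ s, Real.sqrt ρ ≤ s → u s = 0) ∧
      ContinuousOn u (Set.Ioi 0) ∧
      Filter.Tendsto u (nhdsWithin 0 (Set.Ioi 0)) (nhds 1) := by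
  classical
  set f : ℝ → ℝ := fun x => d x * dt x with hfdef
  have hf : ContinuousOn f (Set.Icc 0 1) := hdc.mul hdtc
  have hnn : ∀ x ∈ Set.Icc (0:ℝ) 1, 0 ≤ f x :=
    fun x hx => mul_nonneg (hd0 x hx).1 (hd0 x hx).2
  have hp : ∀ x ∈ Set.Ioc (0:ℝ) 1, 0 < f x :=
    fun x hx => mul_pos (hdpos x hx).1 (hdpos x hx).2
  have hρeq : ρ = ∫ x in Set.Icc (0:ℝ) 1, f x := hρ
  have hρpos : 0 < ρ := hρeq ▸ integral_pos_of_pos hf hnn hp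
  have hsq : Real.sqrt ρ ^ 2 = ρ := Real.sq_sqrt hρpos.le
  have hsqpos : 0 < Real.sqrt ρ := Real.sqrt_pos.mpr hρpos
  -- existence of roots
  have hex : ∀ s ∈ Set.Ioo 0 (Real.sqrt ρ), ∃ w, 0 < w ∧ w < 1 ∧ G f s w = 1 := by
    intro s hs
    have hs0 : 0 < s := hs.1
    have hslt : s ^ 2 < ρ := by
      calc s ^ 2 < Real.sqrt ρ ^ 2 := by nlinarith [hs.2]
        _ = ρ := hsq
    have hG0 : 1 < G f s 0 := by
      rw [G_zero hf hs0.ne', ← hρeq, lt_div_iff₀ (by positivity)]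
      linarith
    have hG1 : G f s 1 < 1 := G_one_lt hf hnn hs0
    have hsub : Set.Icc (G f s 1) (G f s 0) ⊆ (fun u => G f s u) '' Set.Icc 0 1 :=
      intermediate_value_Icc' zero_le_one
        ((G_cont_u hf hnn hs0).mono (fun u hu => hu.1))
    obtain ⟨w, hwmem, hw⟩ := hsub ⟨hG1.le, hG0.le⟩
    have hw' : G f s w = 1 := hw
    refine ⟨w, ?_, ?_, hw'⟩
    · rcases eq_or_lt_of_le hwmem.1 with h | h
      · exfalso; rw [← h] at hw'; rw [hw'] at hG0; exact lt_irrefl 1 hG0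
      · exact h
    · rcases eq_or_lt_of_le hwmem.2 with h | h
      · exfalso; rw [h] at hw'; rw [hw'] at hG1; exact lt_irrefl 1 hG1
      · exact h
  choose w hw1 hw2 hw3 using hex
  set u : ℝ → ℝ := fun s =>
    if h : s ∈ Set.Ioo 0 (Real.sqrt ρ) then w s h else 0 with hudef
  have huP : ∀ s (h : s ∈ Set.Ioo 0 (Real.sqrt ρ)),
      0 < u s ∧ u s < 1 ∧ G f s (u s) = 1 := by
    intro s h
    have : u s = w s h := dif_pos h
    rw [this]
    exact ⟨hw1 s h, hw2 s h, hw3 s h⟩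
  have hu0 : ∀ s, s ∉ Set.Ioo 0 (Real.sqrt ρ) → u s = 0 := fun s h => dif_neg h
  -- comparison lemmas
  have hlt : ∀ s ∈ Set.Ioo 0 (Real.sqrt ρ), ∀ c : ℝ, 0 ≤ c → G f s c < 1 → u s < c := by
    intro s hs c hc hGc
    by_contra h
    push_neg at h
    have hmono := G_antitone hf hnn hp hs.1 hc h
    have hP := (huP s hs).2.2
    rw [hP] at hmono
    linarith
  have hgt : ∀ s ∈ Set.Ioo 0 (Real.sqrt ρ), ∀ c : ℝ, 0 ≤ c → 1 < G f s c → c < u s := by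
    intro s hs c hc hGc
    by_contra h
    push_neg at h
    have hmono := G_antitone hf hnn hp hs.1 (huP s hs).1.le h
    have hP := (huP s hs).2.2
    rw [hP] at hmono
    linarith
  refine ⟨u, ?_, ?_, ?_, ?_⟩
  · -- part (a)
    intro s hs
    obtain ⟨h1, h2, h3⟩ := huP s hs
    refine ⟨h1, by simpa [G, hfdef] using h3, ?_⟩
    intro v hv hGv
    have hGv' : G f s v = 1 := by simpa [G, hfdef] using hGv
    rcases lt_trichotomy v (u s) with h | h | h
    · exfalso
      have := G_strict_anti hf hnn hp hs.1 hv.le h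
      rw [hGv', h3] at this; exact lt_irrefl 1 this
    · exact h
    · exfalso
      have := G_strict_anti hf hnn hp hs.1 h1.le h
      rw [hGv', h3] at this; exact lt_irrefl 1 this
  · -- zero extension
    intro s hsle
    exact hu0 s (fun hmem => absurd hmem.2 (not_lt.mpr hsle))
  · -- continuity
    intro s₀ hs₀
    have hs₀' : (0:ℝ) < s₀ := hs₀
    rcases lt_trichotomy s₀ (Real.sqrt ρ) with hcase | hcase | hcase
    · -- interior case
      have hmem : s₀ ∈ Set.Ioo 0 (Real.sqrt ρ) := ⟨hs₀', hcase⟩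
      obtain ⟨hu0pos, hu0lt1, hGu0⟩ := huP s₀ hmem
      have : Filter.Tendsto u (nhdsWithin s₀ (Set.Ioi 0)) (nhds (u s₀)) := by
        rw [Metric.tendsto_nhds]
        intro ε hε
        set δ : ℝ := min (ε / 2) (u s₀ / 2) with hδdef
        have hδpos : 0 < δ := lt_min (by linarith) (by linarith)
        have hδ1 : δ ≤ ε / 2 := min_le_left _ _
        have hδ2 : δ ≤ u s₀ / 2 := min_le_right _ _
        have hplus : G f s₀ (u s₀ + ε / 2) < 1 := by
          have := G_strict_anti hf hnn hp hs₀' hu0pos.le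
            (show u s₀ < u s₀ + ε / 2 by linarith)
          rw [hGu0] at this; exact this
        have hminus : 1 < G f s₀ (u s₀ - δ) := by
          have := G_strict_anti hf hnn hp hs₀' (by linarith : (0:ℝ) ≤ u s₀ - δ)
            (show u s₀ - δ < u s₀ by linarith)
          rw [hGu0] at this; exact this
        have hev1 : ∀ᶠ s in nhds s₀, G f s (u s₀ + ε / 2) < 1 :=
          (tendsto_G_s hf hnn (by linarith) hs₀').eventually_lt_const hplus
        have hev2 : ∀ᶠ s in nhds s₀, 1 < G f s (u s₀ - δ) :=
          (tendsto_G_s hf hnn (by linarith) hs₀').eventually_const_lt hminus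
        have hev3 : ∀ᶠ s in nhds s₀, s ∈ Set.Ioo 0 (Real.sqrt ρ) :=
          isOpen_Ioo.eventually_mem hmem
        filter_upwards [hev1.filter_mono nhdsWithin_le_nhds,
          hev2.filter_mono nhdsWithin_le_nhds,
          hev3.filter_mono nhdsWithin_le_nhds] with s h1 h2 h3
        have ha := hlt s h3 _ (by linarith) h1
        have hb := hgt s h3 _ (by linarith) h2
        rw [Real.dist_eq, abs_lt]
        constructor <;> linarith
      exact this
    · -- boundary case
      have hu0s : u s₀ = 0 := hu0 s₀ (fun hmem => absurd hmem.2 (by rw [hcase]; exact lt_irrefl _))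
      have : Filter.Tendsto u (nhdsWithin s₀ (Set.Ioi 0)) (nhds (u s₀)) := by
        rw [hu0s, Metric.tendsto_nhds]
        intro ε hε
        have hG0eq : G f (Real.sqrt ρ) 0 = 1 := by
          rw [G_zero hf hsqpos.ne', ← hρeq, hsq, div_self hρpos.ne']
        have hGhalf : G f (Real.sqrt ρ) (ε / 2) < 1 := by
          have := G_strict_anti hf hnn hp hsqpos (le_refl 0) (by linarith : (0:ℝ) < ε / 2)
          rw [hG0eq] at this; exact this
        have hev1 : ∀ᶠ s in nhds s₀, G f s (ε / 2) < 1 := by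
          rw [hcase]
          exact (tendsto_G_s hf hnn (by linarith) hsqpos).eventually_lt_const hGhalf
        filter_upwards [hev1.filter_mono nhdsWithin_le_nhds, self_mem_nhdsWithin]
          with s h1 h2
        rcases le_or_gt (Real.sqrt ρ) s with h | h
        · have : u s = 0 := hu0 s (fun hmem => absurd hmem.2 (not_lt.mpr h))
          rw [this]; simpa using hε
        · have hmem : s ∈ Set.Ioo 0 (Real.sqrt ρ) := ⟨h2, h⟩
          have ha := hlt s hmem _ (by linarith) h1
          have hb := (huP s hmem).1
          rw [Real.dist_eq, abs_lt]
          constructor <;> linarith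
      exact this
    · -- s₀ > sqrt ρ
      have hu0s : u s₀ = 0 := hu0 s₀ (fun hmem => absurd hmem.2 (not_lt.mpr hcase.le))
      have hev : ∀ᶠ s in nhdsWithin s₀ (Set.Ioi 0), u s = 0 := by
        filter_upwards [(eventually_gt_nhds hcase).filter_mono nhdsWithin_le_nhds] with s hs
        exact hu0 s (fun hmem => absurd hmem.2 (not_lt.mpr hs.le))
      exact (continuousWithinAt_const (b := (0:ℝ))).congr_of_eventuallyEq hev hu0s
  · -- limit at 0
    rw [Metric.tendsto_nhds]
    intro ε hε
    obtain ⟨c, hcdef⟩ : ∃ c : ℝ, c = 1 - min (ε / 2) (1 / 2) := ⟨_, rfl⟩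
    have hmin1 : min (ε / 2) (1 / 2) ≤ ε / 2 := min_le_left _ _
    have hmin2 : min (ε / 2) (1 / 2) ≤ 1 / 2 := min_le_right _ _
    have hminpos : 0 < min (ε / 2) (1 / 2) := lt_min (by linarith) (by linarith)
    have hc0 : 0 < c := by rw [hcdef]; linarith
    have hc1 : c < 1 := by rw [hcdef]; linarith
    have hinv : 1 < 1 / c := by rw [lt_div_iff₀ hc0]; linarith
    have hev1 : ∀ᶠ s in nhdsWithin 0 (Set.Ioi 0), 1 < G f s c :=
      (tendsto_G_zero hf hnn hp hc0).eventually_const_lt hinv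
    have hev2 : ∀ᶠ s in nhdsWithin 0 (Set.Ioi 0), s < Real.sqrt ρ :=
      (eventually_lt_nhds hsqpos).filter_mono nhdsWithin_le_nhds
    filter_upwards [hev1, hev2, self_mem_nhdsWithin] with s h1 h2 h3
    have hmem : s ∈ Set.Ioo 0 (Real.sqrt ρ) := ⟨h3, h2⟩
    have ha := hgt s hmem c hc0.le h1
    have hb := (huP s hmem).2.1
    rw [Real.dist_eq, abs_lt]
    constructor <;> linarith
end

section
/- Let d, d̃ : [0,1] → [0,∞) be continuous functions with d(x) > 0 and d̃(x) > 0 for all x ∈ (0,1], set ρ_∞ = ∫_0^1 d(x) d̃(x) dx, and for s ∈ (0, √ρ_∞) let u_∞(s) > 0 be the unique positive solution of ∫_0^1 d(x) d̃(x)/(s² + d(x) d̃(x) u_∞(s)) dx = 1. Then u_∞ is continuously differentiable on (0, √ρ_∞) and u_∞'(s) = −2s · ( ∫_0^1 d(x) d̃(x)/(s² + d(x) d̃(x) u_∞(s))² dx ) / ( ∫_0^1 d(x)² d̃(x)²/(s² + d(x) d̃(x) u_∞(s))² dx ). -/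
open MeasureTheory Real Filter Set Topology

private lemma integral_pos_aux (g : ℝ → ℝ) (hg : ContinuousOn g (Icc 0 1))
    (hp : ∀ x ∈ Ioc (0:ℝ) 1, 0 < g x) :
    0 < ∫ x in Icc (0:ℝ) 1, g x := by
  rw [MeasureTheory.integral_Icc_eq_integral_Ioc,
    ← intervalIntegral.integral_of_le (by norm_num : (0:ℝ) ≤ 1)]
  apply intervalIntegral.intervalIntegral_pos_of_pos_on
  · apply ContinuousOn.intervalIntegrable
    rwa [uIcc_of_le (by norm_num : (0:ℝ) ≤ 1)]
  · exact fun x hx => hp x ⟨hx.1, hx.2.le⟩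
  · norm_num

private lemma dct_aux (g : ℝ → ℝ) (hg : ContinuousOn g (Icc 0 1)) (N : ℝ)
    (D : ℝ → ℝ → ℝ) (s₀ : ℝ) (Dl : ℝ → ℝ) (ε : ℝ) (hε : 0 < ε)
    (hDc : ∀ᶠ s in 𝓝 s₀, ContinuousOn (fun x => D s x) (Icc 0 1))
    (hDlb : ∀ᶠ s in 𝓝 s₀, ∀ x ∈ Icc (0:ℝ) 1, ε ≤ D s x)
    (hgN : ∀ x ∈ Icc (0:ℝ) 1, |g x| ≤ N)
    (hlim : ∀ x ∈ Icc (0:ℝ) 1, Tendsto (fun s => D s x) (𝓝 s₀) (𝓝 (Dl x)))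
    (hDl0 : ∀ x ∈ Icc (0:ℝ) 1, Dl x ≠ 0) :
    Tendsto (fun s => ∫ x in Icc (0:ℝ) 1, g x / D s x) (𝓝 s₀)
      (𝓝 (∫ x in Icc (0:ℝ) 1, g x / Dl x)) := by
  have hN0 : 0 ≤ N := (abs_nonneg _).trans (hgN 0 (by norm_num))
  apply tendsto_integral_filter_of_dominated_convergence (fun _ => N / ε)
  · filter_upwards [hDc, hDlb] with s hc hlb
    exact (hg.div hc fun x hx => (lt_of_lt_of_le hε (hlb x hx)).ne').aestronglyMeasurable
      measurableSet_Icc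
  · filter_upwards [hDlb] with s hlb
    filter_upwards [ae_restrict_mem measurableSet_Icc] with x hx
    have h1 : ε ≤ D s x := hlb x hx
    rw [norm_div, Real.norm_eq_abs, Real.norm_eq_abs, abs_of_pos (lt_of_lt_of_le hε h1)]
    exact div_le_div₀ hN0 (hgN x hx) hε h1
  · simp [integrableOn_const, Real.volume_Icc]
  · filter_upwards [ae_restrict_mem measurableSet_Icc] with x hx
    exact Tendsto.div tendsto_const_nhds (hlim x hx) (hDl0 x hx)

set_option maxHeartbeats 1000000 in
private lemma aux (f : ℝ → ℝ) (hfc : ContinuousOn f (Icc 0 1))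
    (hf0 : ∀ x ∈ Icc (0:ℝ) 1, 0 ≤ f x)
    (hfpos : ∀ x ∈ Ioc (0:ℝ) 1, 0 < f x)
    (ρ : ℝ) (hρ : ρ = ∫ x in Icc (0:ℝ) 1, f x)
    (u : ℝ → ℝ)
    (hu : ∀ s ∈ Ioo 0 (Real.sqrt ρ),
      0 < u s ∧ (∫ x in Icc (0:ℝ) 1, f x / (s ^ 2 + f x * u s)) = 1) :
    (∀ s ∈ Ioo 0 (Real.sqrt ρ),
      HasDerivAt u
        (-2 * s * (∫ x in Icc (0:ℝ) 1, f x / (s ^ 2 + f x * u s) ^ 2) /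
          (∫ x in Icc (0:ℝ) 1, (f x) ^ 2 / (s ^ 2 + f x * u s) ^ 2)) s) ∧
    ContinuousOn (deriv u) (Ioo 0 (Real.sqrt ρ)) := by
  have hIcc : MeasurableSet (Icc (0:ℝ) 1) := measurableSet_Icc
  have hρpos : 0 < ρ := hρ ▸ integral_pos_aux f hfc hfpos
  obtain ⟨M, hM⟩ := isCompact_Icc.exists_bound_of_continuousOn hfc
  have hM' : ∀ x ∈ Icc (0:ℝ) 1, f x ≤ M := fun x hx =>
    (le_abs_self _).trans (le_of_eq_of_le (Real.norm_eq_abs _).symm (hM x hx))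
  have hM0 : 0 ≤ M := le_trans (hf0 0 (by norm_num)) (hM' 0 (by norm_num))
  have hs2 : ∀ s ∈ Ioo 0 (Real.sqrt ρ), 0 < s ∧ s ^ 2 < ρ := by
    intro s hs
    refine ⟨hs.1, ?_⟩
    have h := Real.sq_sqrt hρpos.le
    nlinarith [hs.2, hs.1, Real.sqrt_nonneg ρ]
  have hdenpos : ∀ s ∈ Ioo 0 (Real.sqrt ρ), ∀ x ∈ Icc (0:ℝ) 1,
      0 < s ^ 2 + f x * u s := by
    intro s hs x hx
    have h1 := (hu s hs).1
    have h2 := hf0 x hx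
    nlinarith [(hs2 s hs).1]
  have hdcont : ∀ s : ℝ, ContinuousOn (fun x => s ^ 2 + f x * u s) (Icc 0 1) :=
    fun s => continuousOn_const.add (hfc.mul continuousOn_const)
  have hcont1 : ∀ s ∈ Ioo 0 (Real.sqrt ρ),
      ContinuousOn (fun x => f x / (s ^ 2 + f x * u s)) (Icc 0 1) :=
    fun s hs => hfc.div (hdcont s) fun x hx => (hdenpos s hs x hx).ne'
  -- u bounded by 1
  have hu1 : ∀ s ∈ Ioo 0 (Real.sqrt ρ), u s ≤ 1 := by
    intro s hs
    obtain ⟨hus, heq⟩ := hu s hs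
    have hle : ∀ x ∈ Icc (0:ℝ) 1, f x / (s ^ 2 + f x * u s) ≤ 1 / u s := by
      intro x hx
      rcases eq_or_lt_of_le (hf0 x hx) with h | h
      · rw [← h]
        simp only [zero_div]
        positivity
      · have h2 : f x / (s ^ 2 + f x * u s) ≤ f x / (f x * u s) := by
          gcongr <;> nlinarith [hdenpos s hs x hx, mul_pos h hus]
        have h3 : f x / (f x * u s) = 1 / u s := by field_simp
        linarith [h2, h3 ▸ h2]
    have h4 : (1:ℝ) ≤ ∫ x in Icc (0:ℝ) 1, 1 / u s := by
      have hi1 : IntegrableOn (fun x => f x / (s ^ 2 + f x * u s)) (Icc 0 1) :=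
        (hcont1 s hs).integrableOn_Icc
      have hi2 : IntegrableOn (fun _ => 1 / u s) (Icc (0:ℝ) 1) :=
        integrableOn_const measure_Icc_lt_top.ne
      have h := setIntegral_mono_on hi1 hi2 measurableSet_Icc hle
      rwa [heq] at h
    rw [setIntegral_const, Real.volume_real_Icc] at h4
    norm_num [smul_eq_mul] at h4
    have h5 : u s * (u s)⁻¹ = 1 := mul_inv_cancel₀ hus.ne'
    nlinarith
  -- key identity
  have key : ∀ s ∈ Ioo 0 (Real.sqrt ρ), ∀ t ∈ Ioo 0 (Real.sqrt ρ),
      (u t - u s) * (∫ x in Icc (0:ℝ) 1,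
          (f x) ^ 2 / ((t ^ 2 + f x * u t) * (s ^ 2 + f x * u s)))
        = (s ^ 2 - t ^ 2) * (∫ x in Icc (0:ℝ) 1,
          f x / ((t ^ 2 + f x * u t) * (s ^ 2 + f x * u s))) := by
    intro s hs t ht
    have hDc : ContinuousOn (fun x => (t ^ 2 + f x * u t) * (s ^ 2 + f x * u s)) (Icc 0 1) :=
      (hdcont t).mul (hdcont s)
    have hDpos : ∀ x ∈ Icc (0:ℝ) 1, 0 < (t ^ 2 + f x * u t) * (s ^ 2 + f x * u s) :=
      fun x hx => mul_pos (hdenpos t ht x hx) (hdenpos s hs x hx)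
    have hiA : IntegrableOn (fun x => f x / ((t ^ 2 + f x * u t) * (s ^ 2 + f x * u s)))
        (Icc 0 1) :=
      (hfc.div hDc fun x hx => (hDpos x hx).ne').integrableOn_Icc
    have hiB : IntegrableOn
        (fun x => (f x) ^ 2 / ((t ^ 2 + f x * u t) * (s ^ 2 + f x * u s))) (Icc 0 1) :=
      ((hfc.pow 2).div hDc fun x hx => (hDpos x hx).ne').integrableOn_Icc
    have h0 : (∫ x in Icc (0:ℝ) 1,
        (f x / (t ^ 2 + f x * u t) - f x / (s ^ 2 + f x * u s))) = 0 := by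
      rw [integral_sub (hcont1 t ht).integrableOn_Icc (hcont1 s hs).integrableOn_Icc,
        (hu s hs).2, (hu t ht).2]
      ring
    have hptw : EqOn (fun x => f x / (t ^ 2 + f x * u t) - f x / (s ^ 2 + f x * u s))
        (fun x => (s ^ 2 - t ^ 2) * (f x / ((t ^ 2 + f x * u t) * (s ^ 2 + f x * u s)))
          + (u s - u t) * ((f x) ^ 2 / ((t ^ 2 + f x * u t) * (s ^ 2 + f x * u s))))
        (Icc 0 1) := by
      intro x hx
      have h1 := (hdenpos t ht x hx).ne'
      have h2 := (hdenpos s hs x hx).ne'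
      field_simp
      ring
    rw [setIntegral_congr_fun measurableSet_Icc hptw] at h0
    rw [integral_add (hiA.const_mul _) (hiB.const_mul _), integral_const_mul,
      integral_const_mul] at h0
    linarith [h0]
  -- global bounds
  have hgabs : ∀ x ∈ Icc (0:ℝ) 1, |f x| ≤ M := fun x hx => by
    rw [← Real.norm_eq_abs]; exact hM x hx
  have hg2abs : ∀ x ∈ Icc (0:ℝ) 1, |(f x) ^ 2| ≤ M ^ 2 := fun x hx => by
    rw [abs_of_nonneg (sq_nonneg _)]
    exact pow_le_pow_left₀ (hf0 x hx) (hM' x hx) 2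
  have hc₀pos : 0 < ∫ x in Icc (0:ℝ) 1, (f x) ^ 2 :=
    integral_pos_aux _ (hfc.pow 2) fun x hx => pow_pos (hfpos x hx) 2
  have hρM : 0 < ρ + M := by linarith
  have hPle : ∀ s ∈ Ioo 0 (Real.sqrt ρ), ∀ x ∈ Icc (0:ℝ) 1,
      s ^ 2 + f x * u s ≤ ρ + M := by
    intro s hs x hx
    have h1 := (hs2 s hs).2
    have h2 := hM' x hx
    have h3 := hu1 s hs
    have h4 := (hu s hs).1
    have h5 := hf0 x hx
    nlinarith
  -- lower bound for the B-type integrals (mixed form)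
  have hBlb : ∀ s ∈ Ioo 0 (Real.sqrt ρ), ∀ t ∈ Ioo 0 (Real.sqrt ρ),
      (∫ x in Icc (0:ℝ) 1, (f x) ^ 2) / (ρ + M) ^ 2
        ≤ ∫ x in Icc (0:ℝ) 1,
            (f x) ^ 2 / ((t ^ 2 + f x * u t) * (s ^ 2 + f x * u s)) := by
    intro s hs t ht
    have hi1 : IntegrableOn (fun x => (f x) ^ 2 / (ρ + M) ^ 2) (Icc (0:ℝ) 1) :=
      ((hfc.pow 2).div_const _).integrableOn_Icc
    have hi2 : IntegrableOn
        (fun x => (f x) ^ 2 / ((t ^ 2 + f x * u t) * (s ^ 2 + f x * u s))) (Icc 0 1) :=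
      ((hfc.pow 2).div ((hdcont t).mul (hdcont s)) fun x hx =>
        (mul_pos (hdenpos t ht x hx) (hdenpos s hs x hx)).ne').integrableOn_Icc
    have h := setIntegral_mono_on hi1 hi2 hIcc ?_
    · rwa [integral_div] at h
    · intro x hx
      have h1 := hdenpos t ht x hx
      have h2 := hdenpos s hs x hx
      have h3 := hPle t ht x hx
      have h4 := hPle s hs x hx
      gcongr <;> nlinarith [sq_nonneg (f x)]
  -- upper bound for the A-type integrals (mixed form)
  have hAub : ∀ s ∈ Ioo 0 (Real.sqrt ρ), ∀ t ∈ Ioo 0 (Real.sqrt ρ),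
      (∫ x in Icc (0:ℝ) 1, f x / ((t ^ 2 + f x * u t) * (s ^ 2 + f x * u s)))
        ≤ ρ / (t ^ 2 * s ^ 2) := by
    intro s hs t ht
    have hspos := (hs2 s hs).1
    have htpos := (hs2 t ht).1
    have hi2 : IntegrableOn (fun x => f x / (t ^ 2 * s ^ 2)) (Icc (0:ℝ) 1) :=
      (hfc.div_const _).integrableOn_Icc
    have hi1 : IntegrableOn
        (fun x => f x / ((t ^ 2 + f x * u t) * (s ^ 2 + f x * u s))) (Icc 0 1) :=
      (hfc.div ((hdcont t).mul (hdcont s)) fun x hx =>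
        (mul_pos (hdenpos t ht x hx) (hdenpos s hs x hx)).ne').integrableOn_Icc
    have h := setIntegral_mono_on hi1 hi2 hIcc ?_
    · rwa [integral_div, ← hρ] at h
    · intro x hx
      have h1 := hdenpos t ht x hx
      have h2 := hdenpos s hs x hx
      have h3 : t ^ 2 ≤ t ^ 2 + f x * u t :=
        le_add_of_nonneg_right (mul_nonneg (hf0 x hx) (hu t ht).1.le)
      have h4 : s ^ 2 ≤ s ^ 2 + f x * u s :=
        le_add_of_nonneg_right (mul_nonneg (hf0 x hx) (hu s hs).1.le)
      gcongr <;> nlinarith [hf0 x hx]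
  have hcpos : 0 < (∫ x in Icc (0:ℝ) 1, (f x) ^ 2) / (ρ + M) ^ 2 :=
    div_pos hc₀pos (by positivity)
  -- continuity of u
  have hucont : ∀ s₀ ∈ Ioo 0 (Real.sqrt ρ), Tendsto u (𝓝 s₀) (𝓝 (u s₀)) := by
    intro s₀ hs₀
    have hs₀pos := (hs2 s₀ hs₀).1
    rw [← isOpen_Ioo.nhdsWithin_eq hs₀, tendsto_iff_dist_tendsto_zero]
    set K := (2 * ρ / s₀ ^ 4) / ((∫ x in Icc (0:ℝ) 1, (f x) ^ 2) / (ρ + M) ^ 2) with hK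
    have hev1 : ∀ᶠ s in 𝓝[Ioo 0 (Real.sqrt ρ)] s₀, s ∈ Ioo 0 (Real.sqrt ρ) :=
      eventually_mem_nhdsWithin
    have hev2 : ∀ᶠ s in 𝓝[Ioo 0 (Real.sqrt ρ)] s₀, s₀ ^ 2 / 2 < s ^ 2 :=
      (Tendsto.eventually_const_lt (by nlinarith)
        ((continuous_pow 2).tendsto s₀)).filter_mono nhdsWithin_le_nhds
    have hbound : ∀ᶠ s in 𝓝[Ioo 0 (Real.sqrt ρ)] s₀,
        dist (u s) (u s₀) ≤ |s₀ ^ 2 - s ^ 2| * K := by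
      filter_upwards [hev1, hev2] with s hs hsgt
      have hspos := (hs2 s hs).1
      have hk := key s₀ hs₀ s hs
      have hB := hBlb s₀ hs₀ s hs
      have hBpos : 0 < ∫ x in Icc (0:ℝ) 1,
          (f x) ^ 2 / ((s ^ 2 + f x * u s) * (s₀ ^ 2 + f x * u s₀)) :=
        lt_of_lt_of_le hcpos hB
      have hA0 : 0 ≤ ∫ x in Icc (0:ℝ) 1,
          f x / ((s ^ 2 + f x * u s) * (s₀ ^ 2 + f x * u s₀)) :=
        setIntegral_nonneg hIcc fun x hx => div_nonneg (hf0 x hx)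
          (mul_pos (hdenpos s hs x hx) (hdenpos s₀ hs₀ x hx)).le
      have hAub' : (∫ x in Icc (0:ℝ) 1,
          f x / ((s ^ 2 + f x * u s) * (s₀ ^ 2 + f x * u s₀))) ≤ 2 * ρ / s₀ ^ 4 := by
        refine le_trans (hAub s₀ hs₀ s hs) ?_
        rw [div_le_div_iff₀ (by positivity) (by positivity)]
        nlinarith [mul_lt_mul_of_pos_left hsgt
          (by positivity : (0:ℝ) < 2 * ρ * s₀ ^ 2)]
      have hud : u s - u s₀ = ((s₀ ^ 2 - s ^ 2) *
          (∫ x in Icc (0:ℝ) 1, f x / ((s ^ 2 + f x * u s) * (s₀ ^ 2 + f x * u s₀)))) /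
          (∫ x in Icc (0:ℝ) 1,
            (f x) ^ 2 / ((s ^ 2 + f x * u s) * (s₀ ^ 2 + f x * u s₀))) :=
        (eq_div_iff hBpos.ne').2 hk
      rw [Real.dist_eq, hud, abs_div, abs_mul, abs_of_nonneg hA0, abs_of_pos hBpos, hK,
        ← mul_div_assoc]
      exact div_le_div₀ (mul_nonneg (abs_nonneg _)
          (div_nonneg (by linarith) (by positivity)))
        (mul_le_mul_of_nonneg_left hAub' (abs_nonneg _)) hcpos hB
    have hlim0 : Tendsto (fun s => |s₀ ^ 2 - s ^ 2| * K)
        (𝓝[Ioo 0 (Real.sqrt ρ)] s₀) (𝓝 0) := by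
      have h : Tendsto (fun s : ℝ => |s₀ ^ 2 - s ^ 2| * K) (𝓝 s₀)
          (𝓝 (|s₀ ^ 2 - s₀ ^ 2| * K)) := by
        apply Tendsto.mul ?_ tendsto_const_nhds
        exact (continuous_abs.comp (continuous_const.sub (continuous_pow 2))).tendsto s₀
      simpa using h.mono_left nhdsWithin_le_nhds
    exact squeeze_zero' (Eventually.of_forall fun s => dist_nonneg) hbound hlim0
  -- dominated convergence, mixed form
  have hDCTmix : ∀ s₀ ∈ Ioo 0 (Real.sqrt ρ), ∀ g : ℝ → ℝ, ContinuousOn g (Icc 0 1) →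
      ∀ N : ℝ, (∀ x ∈ Icc (0:ℝ) 1, |g x| ≤ N) →
      Tendsto (fun s => ∫ x in Icc (0:ℝ) 1,
          g x / ((s ^ 2 + f x * u s) * (s₀ ^ 2 + f x * u s₀))) (𝓝 s₀)
        (𝓝 (∫ x in Icc (0:ℝ) 1, g x / (s₀ ^ 2 + f x * u s₀) ^ 2)) := by
    intro s₀ hs₀ g hg N hgN
    have hs₀pos := (hs2 s₀ hs₀).1
    have hevIoo : ∀ᶠ s in 𝓝 s₀, s ∈ Ioo 0 (Real.sqrt ρ) := isOpen_Ioo.eventually_mem hs₀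
    have hevsq : ∀ᶠ s in 𝓝 s₀, s₀ ^ 2 / 2 < s ^ 2 :=
      Tendsto.eventually_const_lt (by nlinarith) ((continuous_pow 2).tendsto s₀)
    apply dct_aux g hg N (fun s x => (s ^ 2 + f x * u s) * (s₀ ^ 2 + f x * u s₀)) s₀
      (fun x => (s₀ ^ 2 + f x * u s₀) ^ 2) (s₀ ^ 2 / 2 * s₀ ^ 2) (by positivity)
    · exact Eventually.of_forall fun s => (hdcont s).mul (hdcont s₀)
    · filter_upwards [hevIoo, hevsq] with s hs hsq x hx
      have h1 := hdenpos s hs x hx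
      have h2 := hdenpos s₀ hs₀ x hx
      have h3 : s ^ 2 ≤ s ^ 2 + f x * u s :=
        le_add_of_nonneg_right (mul_nonneg (hf0 x hx) (hu s hs).1.le)
      have h4 : s₀ ^ 2 ≤ s₀ ^ 2 + f x * u s₀ :=
        le_add_of_nonneg_right (mul_nonneg (hf0 x hx) (hu s₀ hs₀).1.le)
      nlinarith
    · exact hgN
    · intro x hx
      have h : Tendsto (fun s => (s ^ 2 + f x * u s) * (s₀ ^ 2 + f x * u s₀)) (𝓝 s₀)
          (𝓝 ((s₀ ^ 2 + f x * u s₀) * (s₀ ^ 2 + f x * u s₀))) :=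
        (((continuous_pow 2).tendsto s₀).add
          (Tendsto.const_mul _ (hucont s₀ hs₀))).mul tendsto_const_nhds
      simpa [pow_two] using h
    · exact fun x hx => pow_ne_zero 2 (hdenpos s₀ hs₀ x hx).ne'
  -- dominated convergence, squared form
  have hDCTsq : ∀ s₀ ∈ Ioo 0 (Real.sqrt ρ), ∀ g : ℝ → ℝ, ContinuousOn g (Icc 0 1) →
      ∀ N : ℝ, (∀ x ∈ Icc (0:ℝ) 1, |g x| ≤ N) →
      Tendsto (fun s => ∫ x in Icc (0:ℝ) 1, g x / (s ^ 2 + f x * u s) ^ 2) (𝓝 s₀)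
        (𝓝 (∫ x in Icc (0:ℝ) 1, g x / (s₀ ^ 2 + f x * u s₀) ^ 2)) := by
    intro s₀ hs₀ g hg N hgN
    have hs₀pos := (hs2 s₀ hs₀).1
    have hevIoo : ∀ᶠ s in 𝓝 s₀, s ∈ Ioo 0 (Real.sqrt ρ) := isOpen_Ioo.eventually_mem hs₀
    have hevsq : ∀ᶠ s in 𝓝 s₀, s₀ ^ 2 / 2 < s ^ 2 :=
      Tendsto.eventually_const_lt (by nlinarith) ((continuous_pow 2).tendsto s₀)
    apply dct_aux g hg N (fun s x => (s ^ 2 + f x * u s) ^ 2) s₀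
      (fun x => (s₀ ^ 2 + f x * u s₀) ^ 2) ((s₀ ^ 2 / 2) ^ 2) (by positivity)
    · exact Eventually.of_forall fun s => (hdcont s).pow 2
    · filter_upwards [hevIoo, hevsq] with s hs hsq x hx
      have h1 := hdenpos s hs x hx
      have h3 : s ^ 2 ≤ s ^ 2 + f x * u s :=
        le_add_of_nonneg_right (mul_nonneg (hf0 x hx) (hu s hs).1.le)
      nlinarith
    · exact hgN
    · intro x hx
      exact (((continuous_pow 2).tendsto s₀).add
        (Tendsto.const_mul _ (hucont s₀ hs₀))).pow 2
    · exact fun x hx => pow_ne_zero 2 (hdenpos s₀ hs₀ x hx).ne'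
  -- value of the limit denominator is positive
  have hBbarpos : ∀ s₀ ∈ Ioo 0 (Real.sqrt ρ),
      0 < ∫ x in Icc (0:ℝ) 1, (f x) ^ 2 / (s₀ ^ 2 + f x * u s₀) ^ 2 := by
    intro s₀ hs₀
    have hcongr : (∫ x in Icc (0:ℝ) 1,
        (f x) ^ 2 / ((s₀ ^ 2 + f x * u s₀) * (s₀ ^ 2 + f x * u s₀)))
          = ∫ x in Icc (0:ℝ) 1, (f x) ^ 2 / (s₀ ^ 2 + f x * u s₀) ^ 2 :=
      setIntegral_congr_fun hIcc fun x _ => by ring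
    exact lt_of_lt_of_le hcpos (hcongr ▸ hBlb s₀ hs₀ s₀ hs₀)
  -- part 1 : the derivative
  have part1 : ∀ s ∈ Ioo 0 (Real.sqrt ρ),
      HasDerivAt u
        (-2 * s * (∫ x in Icc (0:ℝ) 1, f x / (s ^ 2 + f x * u s) ^ 2) /
          (∫ x in Icc (0:ℝ) 1, (f x) ^ 2 / (s ^ 2 + f x * u s) ^ 2)) s := by
    intro s₀ hs₀
    have hA := hDCTmix s₀ hs₀ f hfc M hgabs
    have hB := hDCTmix s₀ hs₀ (fun x => (f x) ^ 2) (hfc.pow 2) (M ^ 2) hg2abs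
    have hBpos₀ := hBbarpos s₀ hs₀
    rw [hasDerivAt_iff_tendsto_slope]
    have hval : -2 * s₀ * (∫ x in Icc (0:ℝ) 1, f x / (s₀ ^ 2 + f x * u s₀) ^ 2) /
          (∫ x in Icc (0:ℝ) 1, (f x) ^ 2 / (s₀ ^ 2 + f x * u s₀) ^ 2)
        = -(s₀ + s₀) * ((∫ x in Icc (0:ℝ) 1, f x / (s₀ ^ 2 + f x * u s₀) ^ 2) /
          (∫ x in Icc (0:ℝ) 1, (f x) ^ 2 / (s₀ ^ 2 + f x * u s₀) ^ 2)) := by ring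
    rw [hval]
    have htarget : Tendsto (fun s => -(s + s₀) *
        ((∫ x in Icc (0:ℝ) 1, f x / ((s ^ 2 + f x * u s) * (s₀ ^ 2 + f x * u s₀))) /
          (∫ x in Icc (0:ℝ) 1,
            (f x) ^ 2 / ((s ^ 2 + f x * u s) * (s₀ ^ 2 + f x * u s₀))))) (𝓝 s₀)
        (𝓝 (-(s₀ + s₀) * ((∫ x in Icc (0:ℝ) 1, f x / (s₀ ^ 2 + f x * u s₀) ^ 2) /
          (∫ x in Icc (0:ℝ) 1, (f x) ^ 2 / (s₀ ^ 2 + f x * u s₀) ^ 2)))) := by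
      have hneg : Tendsto (fun s : ℝ => -(s + s₀)) (𝓝 s₀) (𝓝 (-(s₀ + s₀))) :=
        (tendsto_id.add tendsto_const_nhds).neg
      exact hneg.mul (Tendsto.div hA hB hBpos₀.ne')
    apply Tendsto.congr' ?_ (htarget.mono_left nhdsWithin_le_nhds)
    have hne : ∀ᶠ s in 𝓝[≠] s₀, s ∈ ({s₀}ᶜ : Set ℝ) := eventually_mem_nhdsWithin
    have hIoo' : ∀ᶠ s in 𝓝[≠] s₀, s ∈ Ioo 0 (Real.sqrt ρ) :=
      (isOpen_Ioo.eventually_mem hs₀).filter_mono nhdsWithin_le_nhds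
    filter_upwards [hne, hIoo'] with s hsne hs
    have hk := key s₀ hs₀ s hs
    have hBpos : 0 < ∫ x in Icc (0:ℝ) 1,
        (f x) ^ 2 / ((s ^ 2 + f x * u s) * (s₀ ^ 2 + f x * u s₀)) :=
      lt_of_lt_of_le hcpos (hBlb s₀ hs₀ s hs)
    have hud : u s - u s₀ = ((s₀ ^ 2 - s ^ 2) *
        (∫ x in Icc (0:ℝ) 1, f x / ((s ^ 2 + f x * u s) * (s₀ ^ 2 + f x * u s₀)))) /
        (∫ x in Icc (0:ℝ) 1,
          (f x) ^ 2 / ((s ^ 2 + f x * u s) * (s₀ ^ 2 + f x * u s₀))) :=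
      (eq_div_iff hBpos.ne').2 hk
    have hssub : s - s₀ ≠ 0 := sub_ne_zero.2 hsne
    rw [slope_def_field, hud]
    generalize (∫ x in Icc (0:ℝ) 1, f x / ((s ^ 2 + f x * u s) * (s₀ ^ 2 + f x * u s₀))) = I1
    generalize (∫ x in Icc (0:ℝ) 1,
        (f x) ^ 2 / ((s ^ 2 + f x * u s) * (s₀ ^ 2 + f x * u s₀))) = I2
    field_simp
    ring
  refine ⟨part1, ?_⟩
  -- part 2 : continuity of the derivative
  have hderiv_eq : EqOn (deriv u)
      (fun s => -2 * s * (∫ x in Icc (0:ℝ) 1, f x / (s ^ 2 + f x * u s) ^ 2) /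
        (∫ x in Icc (0:ℝ) 1, (f x) ^ 2 / (s ^ 2 + f x * u s) ^ 2))
      (Ioo 0 (Real.sqrt ρ)) := fun s hs => (part1 s hs).deriv
  apply ContinuousOn.congr ?_ hderiv_eq
  intro s₀ hs₀
  apply ContinuousAt.continuousWithinAt
  have hA : ContinuousAt (fun s => ∫ x in Icc (0:ℝ) 1, f x / (s ^ 2 + f x * u s) ^ 2) s₀ :=
    hDCTsq s₀ hs₀ f hfc M hgabs
  have hB : ContinuousAt
      (fun s => ∫ x in Icc (0:ℝ) 1, (f x) ^ 2 / (s ^ 2 + f x * u s) ^ 2) s₀ :=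
    hDCTsq s₀ hs₀ (fun x => (f x) ^ 2) (hfc.pow 2) (M ^ 2) hg2abs
  exact (((continuous_const.mul continuous_id).continuousAt).mul hA).div hB
    (hBbarpos s₀ hs₀).ne'

/-- For a sampled separable variance profile with continuous `d, d̃ : [0,1] → [0,∞)`
positive on `(0,1]` and `ρ_∞ = ∫₀¹ d d̃`, the solution `u_∞` of the scalar master
equation is continuously differentiable on `(0, √ρ_∞)` with derivative
`u_∞'(s) = −2s (∫₀¹ dd̃/(s²+dd̃u)² dx)/(∫₀¹ d²d̃²/(s²+dd̃u)² dx)`. -/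
theorem sampled_separable_derivative
    (d dt : ℝ → ℝ)
    (hdc : ContinuousOn d (Set.Icc 0 1)) (hdtc : ContinuousOn dt (Set.Icc 0 1))
    (hd0 : ∀ x ∈ Set.Icc (0:ℝ) 1, 0 ≤ d x ∧ 0 ≤ dt x)
    (hdpos : ∀ x ∈ Set.Ioc (0:ℝ) 1, 0 < d x ∧ 0 < dt x)
    (ρ : ℝ) (hρ : ρ = ∫ x in Set.Icc (0:ℝ) 1, d x * dt x)
    (u : ℝ → ℝ)
    (hu : ∀ s ∈ Set.Ioo 0 (Real.sqrt ρ),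
      0 < u s ∧
      (∫ x in Set.Icc (0:ℝ) 1, d x * dt x / (s ^ 2 + d x * dt x * u s)) = 1) :
    (∀ s ∈ Set.Ioo 0 (Real.sqrt ρ),
      HasDerivAt u
        (-2 * s *
          (∫ x in Set.Icc (0:ℝ) 1,
            d x * dt x / (s ^ 2 + d x * dt x * u s) ^ 2) /
          (∫ x in Set.Icc (0:ℝ) 1,
            (d x) ^ 2 * (dt x) ^ 2 / (s ^ 2 + d x * dt x * u s) ^ 2)) s) ∧
    ContinuousOn (deriv u) (Set.Ioo 0 (Real.sqrt ρ)) := by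
  have h := aux (fun x => d x * dt x) (hdc.mul hdtc)
    (fun x hx => mul_nonneg (hd0 x hx).1 (hd0 x hx).2)
    (fun x hx => mul_pos (hdpos x hx).1 (hdpos x hx).2) ρ hρ u hu
  refine ⟨fun s hs => ?_, h.2⟩
  have h1 := h.1 s hs
  simpa only [mul_pow] using h1
end
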